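/- arXiv:2411.09824 — 10 statements merged into one kernel-verified Lean document; each statement's English description precedes it below -/
import Mathlib

section
/- Every prime ideal of a commutative unital algebra A over a field κ generated by idempotents is maximal, and the quotient A/𝔭 is isomorphic to κ. -/
/-- Every prime ideal of a commutative unital algebra over a field `κ` generated by
idempotents is maximal, and the quotient is isomorphic to `κ`. -/
theorem stmt_0 {κ A : Type} [Field κ] [CommRing A] [Algebra κ A]
    (hA : Algebra.adjoin κ {e : A | IsIdempotentElem e} = ⊤)
    (𝔭 : Ideal A) (h𝔭 : 𝔭.IsPrime) :
    𝔭.IsMaximal ∧ Nonempty ((A ⧸ 𝔭) ≃ₐ[κ] κ) := by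
  let φ : A →ₐ[κ] A ⧸ 𝔭 := Ideal.Quotient.mkₐ κ 𝔭
  have hsurj : Function.Surjective φ := Ideal.Quotient.mkₐ_surjective κ 𝔭
  have htop : Algebra.adjoin κ (φ '' {e : A | IsIdempotentElem e}) = ⊤ := by
    rw [← AlgHom.map_adjoin, hA, Algebra.map_top, AlgHom.range_eq_top]
    exact hsurj
  have hsub : φ '' {e : A | IsIdempotentElem e} ⊆ {0, 1} := by
    rintro - ⟨e, he, rfl⟩
    have : IsIdempotentElem (φ e) := he.map φ
    exact IsIdempotentElem.iff_eq_zero_or_one.mp this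
  have hbot : (⊤ : Subalgebra κ (A ⧸ 𝔭)) = ⊥ := by
    rw [← htop]
    refine le_antisymm ?_ bot_le
    refine (Algebra.adjoin_le_iff).mpr ?_
    rintro x hx
    rcases hsub hx with rfl | rfl
    · exact Subalgebra.zero_mem _
    · exact Subalgebra.one_mem _
  have hAsurj : Function.Surjective (algebraMap κ (A ⧸ 𝔭)) := by
    intro x
    have : x ∈ (⊥ : Subalgebra κ (A ⧸ 𝔭)) := hbot ▸ Algebra.mem_top
    exact this
  have hbij : Function.Bijective (algebraMap κ (A ⧸ 𝔭)) :=
    ⟨(algebraMap κ (A ⧸ 𝔭)).injective, hAsurj⟩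
  let eqv : κ ≃ₐ[κ] (A ⧸ 𝔭) := AlgEquiv.ofBijective (Algebra.ofId κ (A ⧸ 𝔭)) hbij
  have hfield : IsField (A ⧸ 𝔭) :=
    eqv.symm.toMulEquiv.isField (Field.toIsField κ)
  exact ⟨Ideal.Quotient.maximal_of_isField 𝔭 hfield, ⟨eqv.symm⟩⟩
end

section
/- For a commutative unital κ-algebra A generated by idempotents, the collection of sets D(e) = {𝔭 ∈ Spec A : e ∉ 𝔭}, where e ranges over the idempotents of A, consists of exactly all compact open subsets of Spec A and forms a base for the Zariski topology of Spec A. -/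
open PrimeSpectrum

/-- `a` is associated (up to radical) to an idempotent `e` with `a * e = a` and `e = a * x`. -/
private def QIdem {A : Type} [CommRing A] (a : A) : Prop :=
  ∃ e x : A, IsIdempotentElem e ∧ a * e = a ∧ a * x = e

private lemma qIdem_orth {A : Type} [CommRing A] {a b : A}
    (ha : QIdem a) (hb : QIdem b) (hab : a * b = 0) : QIdem (a + b) := by
  obtain ⟨e, x, he, hae, hax⟩ := ha
  obtain ⟨f, y, hf, hbf, hby⟩ := hb
  have haf : a * f = 0 := by rw [← hby]; linear_combination y * hab
  have hbe : b * e = 0 := by rw [← hax]; linear_combination x * hab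
  have hef : e * f = 0 := by rw [← hax, ← hby]; linear_combination x * y * hab
  refine ⟨e + f, x * e + y * f, ?_, ?_, ?_⟩
  · show (e + f) * (e + f) = e + f
    linear_combination he.eq + hf.eq + 2 * hef
  · linear_combination hae + hbf + haf + hbe
  · have h1 : a * (x * e) = e := by
      rw [show a * (x * e) = (a * x) * e by ring, hax, he]
    have h2 : a * (y * f) = 0 := by rw [← hby]; linear_combination y * y * hab
    have h3 : b * (x * e) = 0 := by rw [← hax]; linear_combination x * x * hab
    have h4 : b * (y * f) = f := by
      rw [show b * (y * f) = (b * y) * f by ring, hby, hf]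
    linear_combination h1 + h2 + h3 + h4

private lemma qIdem_key {κ A : Type} [Field κ] [CommRing A] [Algebra κ A] :
    ∀ (n : ℕ) (c : Fin n → κ) (e : Fin n → A), (∀ i, IsIdempotentElem (e i)) →
    ∀ (d : κ) (f : A), IsIdempotentElem f →
    QIdem ((∑ i, algebraMap κ A (c i) * e i + algebraMap κ A d) * f) := by
  intro n
  induction n with
  | zero =>
    intro c e _ d f hf
    simp only [Finset.univ_eq_empty, Finset.sum_empty, zero_add]
    by_cases hd : d = 0
    · subst hd
      refine ⟨0, 0, IsIdempotentElem.zero, ?_, ?_⟩ <;> simp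
    · refine ⟨f, algebraMap κ A d⁻¹, hf, ?_, ?_⟩
      · rw [mul_assoc, hf]
      · rw [show algebraMap κ A d * f * algebraMap κ A d⁻¹
            = algebraMap κ A d * algebraMap κ A d⁻¹ * f by ring,
          ← map_mul, mul_inv_cancel₀ hd, map_one, one_mul]
  | succ n ih =>
    intro c e he d f hf
    rw [Fin.sum_univ_castSucc]
    have hg := he (Fin.last n)
    set g := e (Fin.last n) with hgdef
    have hf1 : IsIdempotentElem (g * f) := hg.mul hf
    have hf2 : IsIdempotentElem (f - g * f) := by
      rw [show f - g * f = (1 - g) * f by ring]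
      exact hg.one_sub.mul hf
    have h1 := ih (fun i => c i.castSucc) (fun i => e i.castSucc)
      (fun i => he _) (c (Fin.last n) + d) (g * f) hf1
    have h2 := ih (fun i => c i.castSucc) (fun i => e i.castSucc)
      (fun i => he _) d (f - g * f) hf2
    have horth :
        ((∑ i : Fin n, algebraMap κ A (c i.castSucc) * e i.castSucc
            + algebraMap κ A (c (Fin.last n) + d)) * (g * f)) *
        ((∑ i : Fin n, algebraMap κ A (c i.castSucc) * e i.castSucc
            + algebraMap κ A d) * (f - g * f)) = 0 := by
      have hz : (g * f) * (f - g * f) = 0 := by linear_combination (-(f * f)) * hg.eq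
      rw [show ∀ X Y : A, (X * (g * f)) * (Y * (f - g * f))
          = X * Y * ((g * f) * (f - g * f)) from fun X Y => by ring, hz, mul_zero]
    have hsum := qIdem_orth h1 h2 horth
    have key_eq :
        (∑ i : Fin n, algebraMap κ A (c i.castSucc) * e i.castSucc
            + algebraMap κ A (c (Fin.last n)) * g + algebraMap κ A d) * f
        = (∑ i : Fin n, algebraMap κ A (c i.castSucc) * e i.castSucc
            + algebraMap κ A (c (Fin.last n) + d)) * (g * f)
          + (∑ i : Fin n, algebraMap κ A (c i.castSucc) * e i.castSucc
            + algebraMap κ A d) * (f - g * f) := by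
      rw [map_add]; ring
    rw [key_eq]
    exact hsum

private lemma qIdem_all {κ A : Type} [Field κ] [CommRing A] [Algebra κ A]
    (hA : Algebra.adjoin κ {e : A | IsIdempotentElem e} = ⊤) (a : A) : QIdem a := by
  classical
  let M : Submonoid A :=
    { carrier := {e : A | IsIdempotentElem e}
      mul_mem' := fun ha hb => ha.mul hb
      one_mem' := IsIdempotentElem.one }
  have hclo : (Submonoid.closure {e : A | IsIdempotentElem e} : Set A)
      ⊆ {e : A | IsIdempotentElem e} :=
    Submonoid.closure_le (S := M).mpr le_rfl
  have hmem : a ∈ Subalgebra.toSubmodule (Algebra.adjoin κ {e : A | IsIdempotentElem e}) := by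
    rw [hA]; trivial
  rw [Algebra.adjoin_eq_span] at hmem
  have hmem' : a ∈ Submodule.span κ {e : A | IsIdempotentElem e} :=
    Submodule.span_mono hclo hmem
  obtain ⟨n, cf, gf, hsum⟩ := Submodule.mem_span_set'.mp hmem'
  have := qIdem_key n cf (fun i => (gf i : A)) (fun i => (gf i).2) 0 1 IsIdempotentElem.one
  rw [map_zero, add_zero, mul_one] at this
  have heq : (∑ i, algebraMap κ A (cf i) * (gf i : A)) = a := by
    rw [← hsum]
    exact Finset.sum_congr rfl fun i _ => (Algebra.smul_def _ _).symm
  rwa [heq] at this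

private lemma basicOpen_idem {κ A : Type} [Field κ] [CommRing A] [Algebra κ A]
    (hA : Algebra.adjoin κ {e : A | IsIdempotentElem e} = ⊤) (a : A) :
    ∃ e : A, IsIdempotentElem e ∧
      (basicOpen a : Set (PrimeSpectrum A)) = basicOpen e := by
  obtain ⟨e, x, he, hae, hax⟩ := qIdem_all hA a
  refine ⟨e, he, ?_⟩
  ext p
  simp only [SetLike.mem_coe, mem_basicOpen]
  rw [not_iff_not]
  constructor
  · intro h; rw [← hax]; exact Ideal.mul_mem_right x _ h
  · intro h; rw [← hae]; exact Ideal.mul_mem_left _ a h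

private lemma basicOpen_union_idem {A : Type} [CommRing A] {e f : A}
    (he : IsIdempotentElem e) (hf : IsIdempotentElem f) :
    (basicOpen e : Set (PrimeSpectrum A)) ∪ basicOpen f
      = basicOpen (e + f - e * f) := by
  ext p
  simp only [Set.mem_union, SetLike.mem_coe, mem_basicOpen]
  rw [← not_and_or, not_iff_not]
  constructor
  · rintro ⟨h1, h2⟩
    exact sub_mem (Ideal.add_mem _ h1 h2) (Ideal.mul_mem_right f _ h1)
  · intro h
    have h1 : e ∈ p.asIdeal := by
      have : e = (e + f - e * f) * e := by linear_combination (f - 1) * he.eq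
      rw [this]; exact Ideal.mul_mem_right e _ h
    have h2 : f ∈ p.asIdeal := by
      have : f = (e + f - e * f) * f := by linear_combination (e - 1) * hf.eq
      rw [this]; exact Ideal.mul_mem_right f _ h
    exact ⟨h1, h2⟩

private lemma zeroLocus_compl_idem {κ A : Type} [Field κ] [CommRing A] [Algebra κ A]
    (hA : Algebra.adjoin κ {e : A | IsIdempotentElem e} = ⊤) (t : Finset A) :
    ∃ e : A, IsIdempotentElem e ∧
      (zeroLocus (t : Set A))ᶜ = (basicOpen e : Set (PrimeSpectrum A)) := by
  classical
  induction t using Finset.induction_on with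
  | empty =>
    refine ⟨0, IsIdempotentElem.zero, ?_⟩
    simp [zeroLocus_empty]
  | @insert a s _ ih =>
    obtain ⟨e, he, hse⟩ := ih
    obtain ⟨e', he', hae⟩ := basicOpen_idem hA a
    refine ⟨e' + e - e' * e, he'.add_sub_mul he, ?_⟩
    rw [Finset.coe_insert, Set.insert_eq, zeroLocus_union, Set.compl_inter,
      ← basicOpen_eq_zeroLocus_compl, hse, hae, basicOpen_union_idem he' he]

/-- For a commutative unital `κ`-algebra `A` generated by idempotents, the sets `D(e)`
with `e` idempotent are exactly the compact open subsets of `Spec A` and form a basis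
of the Zariski topology. -/
theorem stmt_2 {κ A : Type} [Field κ] [CommRing A] [Algebra κ A]
    (hA : Algebra.adjoin κ {e : A | IsIdempotentElem e} = ⊤) :
    {U : Set (PrimeSpectrum A) | ∃ e : A, IsIdempotentElem e ∧
        U = (PrimeSpectrum.basicOpen e : Set (PrimeSpectrum A))}
      = {U : Set (PrimeSpectrum A) | IsCompact U ∧ IsOpen U} ∧
    TopologicalSpace.IsTopologicalBasis
      {U : Set (PrimeSpectrum A) | ∃ e : A, IsIdempotentElem e ∧
        U = (PrimeSpectrum.basicOpen e : Set (PrimeSpectrum A))} := by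
  constructor
  · ext U
    constructor
    · rintro ⟨e, he, rfl⟩
      exact ⟨isCompact_basicOpen e, (basicOpen e).isOpen⟩
    · rintro ⟨hc, ho⟩
      obtain ⟨t, ht⟩ := isCompact_isOpen_iff.mp ⟨hc, ho⟩
      obtain ⟨e, he, hte⟩ := zeroLocus_compl_idem hA t
      exact ⟨e, he, by rw [← ht, hte]⟩
  · have hBr : {U : Set (PrimeSpectrum A) | ∃ e : A, IsIdempotentElem e ∧
        U = (PrimeSpectrum.basicOpen e : Set (PrimeSpectrum A))}
        = Set.range fun r : A => (basicOpen r : Set (PrimeSpectrum A)) := by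
      ext U
      constructor
      · rintro ⟨e, _, rfl⟩; exact ⟨e, rfl⟩
      · rintro ⟨r, rfl⟩
        obtain ⟨e, he, h⟩ := basicOpen_idem hA r
        exact ⟨e, he, h⟩
    rw [hBr]
    exact isTopologicalBasis_basic_opens
end

section
/- The map sending a ∈ A to the function â : Â → κ defined by â(φ) = φ(a) is an isomorphism of κ-algebras from A onto the algebra of locally constant functions Â → κ. -/
open Finset in
/-- Every element of an algebra generated by idempotents decomposes along a finite
system of orthogonal idempotents summing to `1`. -/
private lemma decomp_aux {κ A : Type} [Field κ] [CommRing A] [Algebra κ A]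
    (hA : Algebra.adjoin κ {e : A | IsIdempotentElem e} = ⊤) (a : A) :
    ∃ (ι : Type) (_ : Fintype ι) (g : ι → A) (c : ι → κ),
      (∀ i, IsIdempotentElem (g i)) ∧ (∀ i j, i ≠ j → g i * g j = 0) ∧
        (∑ i, g i = 1) ∧ a = ∑ i, c i • g i := by
  have ha : a ∈ Algebra.adjoin κ {e : A | IsIdempotentElem e} := hA ▸ Algebra.mem_top
  induction ha using Algebra.adjoin_induction with
  | mem x hx =>
    refine ⟨Bool, inferInstance, fun b => if b then x else 1 - x,
      fun b => if b then 1 else 0, ?_, ?_, ?_, ?_⟩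
    · intro b; cases b
      · exact hx.one_sub
      · exact hx
    · intro i j hij
      have h1 : x * (1 - x) = 0 := by rw [mul_sub, mul_one, hx.eq, sub_self]
      have h2 : (1 - x) * x = 0 := by rw [sub_mul, one_mul, hx.eq, sub_self]
      cases i <;> cases j <;> simp_all
    · simp [Fintype.sum_bool]
    · simp [Fintype.sum_bool]
  | algebraMap r =>
    refine ⟨Unit, inferInstance, fun _ => 1, fun _ => r, ?_, ?_, ?_, ?_⟩
    · intro _; exact IsIdempotentElem.one
    · intro i j hij; exact absurd (Subsingleton.elim i j) hij
    · simp
    · simp [Algebra.algebraMap_eq_smul_one]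
  | add x y hx hy ihx ihy =>
    obtain ⟨ι, _, g, c, hgi, hgo, hgs, hgr⟩ := ihx
    obtain ⟨ι', _, h, d, hhi, hho, hhs, hhr⟩ := ihy
    refine ⟨ι × ι', inferInstance, fun p => g p.1 * h p.2,
      fun p => c p.1 + d p.2, ?_, ?_, ?_, ?_⟩
    · intro p; exact (hgi p.1).mul (hhi p.2)
    · intro p q hpq
      have : p.1 ≠ q.1 ∨ p.2 ≠ q.2 := by
        by_contra hc; push_neg at hc
        exact hpq (Prod.ext hc.1 hc.2)
      rcases this with h' | h'
      · have := hgo p.1 q.1 h'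
        calc g p.1 * h p.2 * (g q.1 * h q.2)
            = g p.1 * g q.1 * (h p.2 * h q.2) := by ring
          _ = 0 := by rw [this, zero_mul]
      · have := hho p.2 q.2 h'
        calc g p.1 * h p.2 * (g q.1 * h q.2)
            = g p.1 * g q.1 * (h p.2 * h q.2) := by ring
          _ = 0 := by rw [this, mul_zero]
    · rw [Fintype.sum_prod_type, ← Finset.sum_mul_sum, hgs, hhs, one_mul]
    · have expand : ∀ (u : ι → A) (v : ι' → A),
          (∑ i, u i) * (∑ j, v j) = ∑ p : ι × ι', u p.1 * v p.2 := by
        intro u v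
        rw [Finset.sum_mul_sum]
        exact (Fintype.sum_prod_type (fun p : ι × ι' => u p.1 * v p.2)).symm
      calc x + y = (∑ i, c i • g i) * (∑ j, h j) + (∑ i, g i) * (∑ j, d j • h j) := by
            rw [hgs, hhs, mul_one, one_mul, ← hgr, ← hhr]
        _ = ∑ p : ι × ι', (c p.1 • g p.1 * h p.2 + g p.1 * (d p.2 • h p.2)) := by
            rw [expand, expand, ← Finset.sum_add_distrib]
        _ = ∑ p : ι × ι', (c p.1 + d p.2) • (g p.1 * h p.2) := by
            refine Finset.sum_congr rfl fun p _ => ?_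
            rw [add_smul, smul_mul_assoc, mul_smul_comm]
  | mul x y hx hy ihx ihy =>
    obtain ⟨ι, _, g, c, hgi, hgo, hgs, hgr⟩ := ihx
    obtain ⟨ι', _, h, d, hhi, hho, hhs, hhr⟩ := ihy
    refine ⟨ι × ι', inferInstance, fun p => g p.1 * h p.2,
      fun p => c p.1 * d p.2, ?_, ?_, ?_, ?_⟩
    · intro p; exact (hgi p.1).mul (hhi p.2)
    · intro p q hpq
      have : p.1 ≠ q.1 ∨ p.2 ≠ q.2 := by
        by_contra hc; push_neg at hc
        exact hpq (Prod.ext hc.1 hc.2)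
      rcases this with h' | h'
      · have := hgo p.1 q.1 h'
        calc g p.1 * h p.2 * (g q.1 * h q.2)
            = g p.1 * g q.1 * (h p.2 * h q.2) := by ring
          _ = 0 := by rw [this, zero_mul]
      · have := hho p.2 q.2 h'
        calc g p.1 * h p.2 * (g q.1 * h q.2)
            = g p.1 * g q.1 * (h p.2 * h q.2) := by ring
          _ = 0 := by rw [this, mul_zero]
    · rw [Fintype.sum_prod_type, ← Finset.sum_mul_sum, hgs, hhs, one_mul]
    · have expand : ∀ (u : ι → A) (v : ι' → A),
          (∑ i, u i) * (∑ j, v j) = ∑ p : ι × ι', u p.1 * v p.2 := by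
        intro u v
        rw [Finset.sum_mul_sum]
        exact (Fintype.sum_prod_type (fun p : ι × ι' => u p.1 * v p.2)).symm
      calc x * y = (∑ i, c i • g i) * (∑ j, d j • h j) := by rw [hgr, hhr]
        _ = ∑ p : ι × ι', (c p.1 • g p.1) * (d p.2 • h p.2) := expand _ _
        _ = ∑ p : ι × ι', (c p.1 * d p.2) • (g p.1 * h p.2) := by
            refine Finset.sum_congr rfl fun p _ => ?_
            rw [smul_mul_assoc, mul_smul_comm, smul_smul]

/-- A character picks out exactly one atom of an orthogonal decomposition. -/
private lemma char_apply_aux {κ A : Type} [Field κ] [CommRing A] [Algebra κ A]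
    {ι : Type} [Fintype ι] {g : ι → A} {c : ι → κ} {a : A}
    (hgi : ∀ i, IsIdempotentElem (g i)) (hgo : ∀ i j, i ≠ j → g i * g j = 0)
    (hgs : ∑ i, g i = 1) (hgr : a = ∑ i, c i • g i) (φ : A →ₐ[κ] κ) :
    ∃ i, φ (g i) = 1 ∧ (∀ j, j ≠ i → φ (g j) = 0) ∧ φ a = c i := by
  have hsum : ∑ i, φ (g i) = 1 := by rw [← map_sum, hgs, map_one]
  have hne : ∃ i ∈ Finset.univ, φ (g i) ≠ 0 := by
    apply Finset.exists_ne_zero_of_sum_ne_zero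
    rw [hsum]; exact one_ne_zero
  obtain ⟨i, -, hi⟩ := hne
  have h1 : φ (g i) = 1 := by
    rcases IsIdempotentElem.iff_eq_zero_or_one.1 ((hgi i).map φ) with h | h
    · exact absurd h hi
    · exact h
  have h0 : ∀ j, j ≠ i → φ (g j) = 0 := by
    intro j hj
    have := congrArg φ (hgo j i hj)
    rw [map_mul, map_zero, h1, mul_one] at this
    exact this
  refine ⟨i, h1, h0, ?_⟩
  rw [hgr, map_sum]
  rw [Finset.sum_eq_single i (fun j _ hj => by simp [map_smul, h0 j hj]) (by simp)]
  simp [map_smul, h1]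

/-- Every nonzero idempotent is sent to `1` by some character. -/
private lemma exists_char_aux {κ A : Type} [Field κ] [CommRing A] [Algebra κ A]
    (hA : Algebra.adjoin κ {e : A | IsIdempotentElem e} = ⊤)
    {e : A} (he : IsIdempotentElem e) (hne : e ≠ 0) :
    ∃ φ : A →ₐ[κ] κ, φ e = 1 := by
  have hproper : Ideal.span {1 - e} ≠ ⊤ := by
    intro h
    rw [Ideal.eq_top_iff_one] at h
    obtain ⟨x, hx⟩ := Ideal.mem_span_singleton'.1 h
    apply hne
    have : e * (x * (1 - e)) = e * 1 := by rw [hx]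
    rw [mul_one] at this
    calc e = e * (x * (1 - e)) := this.symm
      _ = x * (e - e * e) := by ring
      _ = 0 := by rw [he.eq, sub_self, mul_zero]
  obtain ⟨m, hm, hle⟩ := Ideal.exists_le_maximal _ hproper
  haveI := hm
  letI : Field (A ⧸ m) := Ideal.Quotient.field m
  have hsurj : Function.Surjective (algebraMap κ (A ⧸ m)) := by
    have htop : Algebra.adjoin κ ((Ideal.Quotient.mkₐ κ m) '' {e : A | IsIdempotentElem e}) = ⊤ := by
      rw [← AlgHom.map_adjoin, hA, Algebra.map_top, AlgHom.range_eq_top]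
      exact Ideal.Quotient.mkₐ_surjective κ m
    have hbot : Algebra.adjoin κ ((Ideal.Quotient.mkₐ κ m) '' {e : A | IsIdempotentElem e}) ≤ ⊥ := by
      apply Algebra.adjoin_le
      rintro _ ⟨x, hx, rfl⟩
      rcases IsIdempotentElem.iff_eq_zero_or_one.1 (hx.map (Ideal.Quotient.mkₐ κ m)) with h | h
      · rw [h]; exact zero_mem ⊥
      · rw [h]; exact one_mem ⊥
    intro x
    exact Algebra.mem_bot.1 (hbot (htop ▸ Algebra.mem_top))
  have hinj : Function.Injective (algebraMap κ (A ⧸ m)) := (algebraMap κ (A ⧸ m)).injective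
  let ε := AlgEquiv.ofBijective (Algebra.ofId κ (A ⧸ m)) ⟨hinj, hsurj⟩
  refine ⟨(ε.symm : (A ⧸ m) →ₐ[κ] κ).comp (Ideal.Quotient.mkₐ κ m), ?_⟩
  have h1 : Ideal.Quotient.mk m e = 1 := by
    have h0 : Ideal.Quotient.mk m (1 - e) = 0 :=
      Ideal.Quotient.eq_zero_iff_mem.2 (hle (Ideal.subset_span rfl))
    rw [map_sub, map_one, sub_eq_zero] at h0
    exact h0.symm
  simp only [AlgHom.comp_apply, Ideal.Quotient.mkₐ_eq_mk, h1]
  exact map_one _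

/-- Characters separate elements from zero. -/
private lemma eval_injective_aux {κ A : Type} [Field κ] [CommRing A] [Algebra κ A]
    (hA : Algebra.adjoin κ {e : A | IsIdempotentElem e} = ⊤)
    (a : A) (h : ∀ φ : A →ₐ[κ] κ, φ a = 0) : a = 0 := by
  by_contra hne
  obtain ⟨ι, _, g, c, hgi, hgo, hgs, hgr⟩ := decomp_aux hA a
  have : ∃ i ∈ Finset.univ, c i • g i ≠ 0 := by
    apply Finset.exists_ne_zero_of_sum_ne_zero
    rw [← hgr]; exact hne
  obtain ⟨i, -, hi⟩ := this
  have hgne : g i ≠ 0 := fun h0 => hi (by rw [h0, smul_zero])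
  have hcne : c i ≠ 0 := fun h0 => hi (by rw [h0, zero_smul])
  obtain ⟨φ, hφ⟩ := exists_char_aux hA (hgi i) hgne
  obtain ⟨j, hj1, hj0, hja⟩ := char_apply_aux hgi hgo hgs hgr φ
  have hij : i = j := by
    by_contra hij
    exact one_ne_zero (hφ ▸ hj0 i hij)
  subst hij
  exact hcne (by rw [← hja, h φ])

/-- The Gelfand-type theorem: for a commutative unital `κ`-algebra `A` generated by
idempotents, the map `a ↦ â`, `â(φ) = φ(a)`, is a `κ`-algebra isomorphism of `A` onto
the algebra of locally constant functions `Â → κ`, where `Â` is the space of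
(automatically nonzero) `κ`-algebra homomorphisms `A → κ` with the topology induced
from the product topology on `κ^A` (`κ` discrete). -/
theorem stmt_3 {κ A : Type} [Field κ] [CommRing A] [Algebra κ A]
    (hA : Algebra.adjoin κ {e : A | IsIdempotentElem e} = ⊤) :
    letI : TopologicalSpace κ := ⊥
    letI : TopologicalSpace (A →ₐ[κ] κ) :=
      TopologicalSpace.induced (fun φ : A →ₐ[κ] κ => (φ : A → κ)) Pi.topologicalSpace
    ∃ F : A ≃ₐ[κ] LocallyConstant (A →ₐ[κ] κ) κ,
      ∀ (a : A) (φ : A →ₐ[κ] κ), F a φ = φ a := by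
  letI : TopologicalSpace κ := ⊥
  haveI : DiscreteTopology κ := ⟨rfl⟩
  letI : TopologicalSpace (A →ₐ[κ] κ) :=
    TopologicalSpace.induced (fun φ : A →ₐ[κ] κ => (φ : A → κ)) Pi.topologicalSpace
  have hind : Topology.IsInducing (fun φ : A →ₐ[κ] κ => (φ : A → κ)) := ⟨rfl⟩
  have hcont : ∀ a : A, Continuous (fun φ : A →ₐ[κ] κ => φ a) :=
    fun a => (continuous_apply a).comp hind.continuous
  have hlc : ∀ a : A, IsLocallyConstant (fun φ : A →ₐ[κ] κ => φ a) :=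
    fun a => (IsLocallyConstant.iff_continuous _).2 (hcont a)
  let G : A →ₐ[κ] LocallyConstant (A →ₐ[κ] κ) κ :=
    { toFun := fun a => ⟨fun φ => φ a, hlc a⟩
      map_one' := by ext φ; exact map_one φ
      map_mul' := fun x y => by ext φ; exact map_mul φ x y
      map_zero' := by ext φ; exact map_zero φ
      map_add' := fun x y => by ext φ; exact map_add φ x y
      commutes' := fun r => by ext φ; simp }
  -- injectivity
  have hGinj : Function.Injective G := by
    rw [injective_iff_map_eq_zero]
    intro a ha
    refine eval_injective_aux hA a fun φ => ?_
    have : (G a) φ = 0 := by rw [ha]; rfl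
    exact this
  -- compactness of the character space
  have hVfin : ∀ a : A, (Set.range fun φ : A →ₐ[κ] κ => φ a).Finite := by
    intro a
    obtain ⟨ι, _, g, c, hgi, hgo, hgs, hgr⟩ := decomp_aux hA a
    refine (Set.finite_range c).subset ?_
    rintro _ ⟨φ, rfl⟩
    obtain ⟨i, -, -, hval⟩ := char_apply_aux hgi hgo hgs hgr φ
    exact ⟨i, hval.symm⟩
  let S : Set (A → κ) := {p | (∀ x y, p (x + y) = p x + p y) ∧ (∀ x y, p (x * y) = p x * p y)
    ∧ (∀ r, p (algebraMap κ A r) = algebraMap κ κ r)}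
  have hSrange : Set.range (fun φ : A →ₐ[κ] κ => (φ : A → κ)) = S := by
    ext p
    constructor
    · rintro ⟨φ, rfl⟩
      exact ⟨fun x y => map_add φ x y, fun x y => map_mul φ x y, fun r => φ.commutes r⟩
    · rintro ⟨hadd, hmul, hcomm⟩
      refine ⟨⟨⟨⟨⟨p, ?_⟩, fun x y => hmul x y⟩, ?_, fun x y => hadd x y⟩, hcomm⟩, rfl⟩
      · have := hcomm 1; simpa using this
      · have h := hadd 0 0
        rw [add_zero] at h
        exact (left_eq_add.1 h)
  have hSclosed : IsClosed S := by
    have cont2 : ∀ (F : κ → κ → κ) (x y : A), Continuous (fun p : A → κ => F (p x) (p y)) := by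
      intro F x y
      have h1 : Continuous (fun p : A → κ => (p x, p y)) :=
        (continuous_apply x).prodMk (continuous_apply y)
      have h2 : Continuous (fun q : κ × κ => F q.1 q.2) := continuous_of_discreteTopology
      exact h2.comp h1
    have hrw : S = (⋂ x, ⋂ y, {p : A → κ | p (x + y) = p x + p y}) ∩
        ((⋂ x, ⋂ y, {p : A → κ | p (x * y) = p x * p y}) ∩
          (⋂ r, {p : A → κ | p (algebraMap κ A r) = algebraMap κ κ r})) := by
      ext p
      simp only [S, Set.mem_setOf_eq, Set.mem_inter_iff, Set.mem_iInter]
    rw [hrw]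
    refine IsClosed.inter (isClosed_iInter fun x => isClosed_iInter fun y =>
        isClosed_eq (continuous_apply _) (cont2 (fun u v => u + v) x y))
      (IsClosed.inter (isClosed_iInter fun x => isClosed_iInter fun y =>
          isClosed_eq (continuous_apply _) (cont2 (fun u v => u * v) x y))
        (isClosed_iInter fun r => isClosed_eq (continuous_apply _) continuous_const))
  have hSsub : S ⊆ Set.pi Set.univ fun a => Set.range fun φ : A →ₐ[κ] κ => φ a := by
    rw [← hSrange]
    rintro _ ⟨φ, rfl⟩ a _
    exact ⟨φ, rfl⟩
  have hScpt : IsCompact S :=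
    IsCompact.of_isClosed_subset (isCompact_univ_pi fun a => (hVfin a).isCompact) hSclosed hSsub
  haveI : CompactSpace (A →ₐ[κ] κ) := by
    have himg : IsCompact ((fun φ : A →ₐ[κ] κ => (φ : A → κ)) '' Set.univ) := by
      rw [Set.image_univ, hSrange]; exact hScpt
    exact isCompact_univ_iff.1 (hind.isCompact_iff.2 himg)
  -- separation of characters by idempotents
  have hsep : ∀ φ ψ : A →ₐ[κ] κ, φ ≠ ψ → ∃ e, IsIdempotentElem e ∧ φ e = 1 ∧ ψ e = 0 := by
    intro φ ψ hne
    have hex : ∃ a, φ a ≠ ψ a := by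
      by_contra hc; push_neg at hc; exact hne (AlgHom.ext hc)
    obtain ⟨a, ha⟩ := hex
    obtain ⟨ι, _, g, c, hgi, hgo, hgs, hgr⟩ := decomp_aux hA a
    obtain ⟨i, hi1, hi0, hia⟩ := char_apply_aux hgi hgo hgs hgr φ
    obtain ⟨j, hj1, hj0, hja⟩ := char_apply_aux hgi hgo hgs hgr ψ
    have hij : i ≠ j := by rintro rfl; exact ha (hia.trans hja.symm)
    exact ⟨g i, hgi i, hi1, hj0 i hij⟩
  have hval01 : ∀ (e : A), IsIdempotentElem e → ∀ ψ : A →ₐ[κ] κ, ψ e = 0 ∨ ψ e = 1 :=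
    fun e he ψ => IsIdempotentElem.iff_eq_zero_or_one.1 (he.map ψ)
  have hopen1 : ∀ e : A, IsOpen {φ : A →ₐ[κ] κ | φ e = 1} :=
    fun e => ((hlc e).isClopen_fiber (1 : κ)).isOpen
  have hopen0 : ∀ e : A, IsOpen {φ : A →ₐ[κ] κ | φ e = 0} :=
    fun e => ((hlc e).isClopen_fiber (0 : κ)).isOpen
  -- every clopen set is the support of an idempotent
  have hclopen : ∀ U : Set (A →ₐ[κ] κ), IsClopen U →
      ∃ e, IsIdempotentElem e ∧ ∀ φ : A →ₐ[κ] κ, (φ ∈ U → φ e = 1) ∧ (φ ∉ U → φ e = 0) := by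
    intro U hU
    have step1 : ∀ φ ∈ U, ∃ e, IsIdempotentElem e ∧ φ e = 1 ∧
        ∀ ψ : A →ₐ[κ] κ, ψ e = 1 → ψ ∈ U := by
      intro φ hφ
      have hUc : IsCompact Uᶜ := (hU.isOpen.isClosed_compl).isCompact
      have hchoice : ∀ ψ : {χ : A →ₐ[κ] κ // χ ∈ Uᶜ},
          ∃ e, IsIdempotentElem e ∧ φ e = 1 ∧ (ψ : A →ₐ[κ] κ) e = 0 := by
        intro ψ
        exact hsep φ ψ (by rintro rfl; exact ψ.2 hφ)
      choose e he h1 h0 using hchoice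
      have hcover : Uᶜ ⊆ ⋃ ψ : {χ : A →ₐ[κ] κ // χ ∈ Uᶜ}, {χ : A →ₐ[κ] κ | χ (e ψ) = 0} :=
        fun χ hχ => Set.mem_iUnion.2 ⟨⟨χ, hχ⟩, h0 ⟨χ, hχ⟩⟩
      obtain ⟨t, ht⟩ := hUc.elim_finite_subcover _ (fun ψ => hopen0 (e ψ)) hcover
      refine ⟨∏ ψ ∈ t, e ψ, ?_, ?_, ?_⟩
      · exact Finset.prod_induction _ _ (fun x y hx hy => hx.mul hy)
          IsIdempotentElem.one (fun ψ _ => he ψ)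
      · rw [map_prod]
        exact Finset.prod_eq_one fun ψ _ => h1 ψ
      · intro ψ hψ1
        by_contra hψU
        have hmem : ψ ∈ ⋃ χ ∈ t, {χ' : A →ₐ[κ] κ | χ' (e χ) = 0} := ht hψU
        obtain ⟨χ0, hχ0t, hv⟩ : ∃ χ0 ∈ t, ψ (e χ0) = 0 := by
          simpa [Set.mem_iUnion] using hmem
        rw [map_prod, Finset.prod_eq_zero hχ0t hv] at hψ1
        exact zero_ne_one hψ1
    choose! eU heU h1U hsubU using step1
    have hUcpt : IsCompact U := hU.isClosed.isCompact
    have hcover : U ⊆ ⋃ φ : {χ : A →ₐ[κ] κ // χ ∈ U}, {χ : A →ₐ[κ] κ | χ (eU ↑φ) = 1} :=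
      fun χ hχ => Set.mem_iUnion.2 ⟨⟨χ, hχ⟩, h1U χ hχ⟩
    obtain ⟨t, ht⟩ := hUcpt.elim_finite_subcover _ (fun φ => hopen1 _) hcover
    refine ⟨1 - ∏ φ ∈ t, (1 - eU ↑φ), ?_, ?_⟩
    · apply IsIdempotentElem.one_sub
      exact Finset.prod_induction _ _ (fun x y hx hy => hx.mul hy)
        IsIdempotentElem.one (fun φ _ => (heU ↑φ φ.2).one_sub)
    · intro ψ
      constructor
      · intro hψ
        have hmem : ψ ∈ ⋃ φ ∈ t, {χ : A →ₐ[κ] κ | χ (eU ↑φ) = 1} := ht hψ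
        obtain ⟨φ0, hφ0t, hv⟩ : ∃ φ0 ∈ t, ψ (eU ↑φ0) = 1 := by
          simpa [Set.mem_iUnion] using hmem
        rw [map_sub, map_one, map_prod,
          Finset.prod_eq_zero hφ0t (by rw [map_sub, map_one, hv, sub_self])]
        exact sub_zero 1
      · intro hψ
        have hall : ∀ φ0 ∈ t, ψ (eU ↑φ0) = (0 : κ) := by
          intro φ0 _
          rcases hval01 _ (heU ↑φ0 φ0.2) ψ with h | h
          · exact h
          · exact absurd (hsubU ↑φ0 φ0.2 ψ h) hψ
        rw [map_sub, map_one, map_prod,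
          Finset.prod_congr rfl (fun φ0 hφ0 => by rw [map_sub, map_one, hall φ0 hφ0, sub_zero]),
          Finset.prod_const_one]
        exact sub_self 1
  -- surjectivity
  have hGsurj : Function.Surjective G := by
    intro f
    have hfin : (Set.range f).Finite := f.range_finite
    choose e he hval using fun brc : κ =>
      hclopen {x : A →ₐ[κ] κ | f x = brc} (f.isLocallyConstant.isClopen_fiber brc)
    refine ⟨∑ brc ∈ hfin.toFinset, brc • e brc, ?_⟩
    ext φ
    have hGval : G (∑ brc ∈ hfin.toFinset, brc • e brc) φ
        = ∑ brc ∈ hfin.toFinset, brc * φ (e brc) := by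
      show φ _ = _
      rw [map_sum]
      exact Finset.sum_congr rfl fun brc _ => by rw [map_smul, smul_eq_mul]
    rw [hGval]
    have hmemt : f φ ∈ hfin.toFinset := hfin.mem_toFinset.2 ⟨φ, rfl⟩
    rw [Finset.sum_eq_single (f φ)
      (fun brc _ hne => by rw [(hval brc φ).2 (fun hx => hne (by exact hx.symm ▸ rfl)), mul_zero]
        )
      (fun hni => absurd hmemt hni)]
    rw [(hval (f φ) φ).1 rfl, mul_one]
  exact ⟨AlgEquiv.ofBijective G ⟨hGinj, hGsurj⟩, fun a φ => rfl⟩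
end

section
/- The set 𝒮^σ(G) := { k(U,g) : k ∈ κ∖{0}, U ∈ Ω_σ finite, g ∈ U } ∪ {0}, with product k(U,g) ⋆ r(V,h) := σ(g,h) χ(U ∪ gV) kr (U ∪ gV, gh), is a κ-cancellative inverse monoid; its unit is ({1},1), the inverse of k(U,g) is σ(g,g⁻¹)⁻¹ k⁻¹ (g⁻¹U, g⁻¹), and its nonzero idempotents are exactly the elements (U,1). -/
def IsPartialProjRep {κ G : Type} [Field κ] [Group G] (σ : G → G → κ)
    (R : Type) [Ring R] [Algebra κ R] (Γ : G → R) : Prop :=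
  Γ 1 = 1 ∧
  (∀ g h : G, σ g h = 0 → Γ g⁻¹ * Γ (g * h) = 0 ∧ Γ (g * h) * Γ h⁻¹ = 0) ∧
  (∀ g h : G, Γ g * Γ h = 0 → σ g h = 0) ∧
  (∀ g h : G, Γ g⁻¹ * Γ g * Γ h = σ g h • (Γ g⁻¹ * Γ (g * h))) ∧
  (∀ g h : G, Γ g * Γ h * Γ h⁻¹ = σ g h • (Γ (g * h) * Γ h⁻¹))

/-- `σ` is a factor set of some partial projective representation of `G`. -/
def IsFactorSet {κ G : Type} [Field κ] [Group G] (σ : G → G → κ) : Prop :=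
  ∃ (R : Type) (_ : Ring R) (_ : Algebra κ R) (Γ : G → R), IsPartialProjRep σ R Γ
/-- σ-prohibitions of type I: sets `{h, hg, hgs}` with `σ(g,s) = 0`. -/
def ProhibitionI {κ G : Type} [Field κ] [Group G] (σ : G → G → κ) : Set (Set G) :=
  {V | ∃ h g s : G, σ g s = 0 ∧ V = {h, h * g, h * g * s}}

/-- σ-prohibitions of type II: sets `{h, hg, hgs, hgst}` with
`σ(g,st)σ(s,t) ≠ σ(g,s)σ(gs,t)`. -/
def ProhibitionII {κ G : Type} [Field κ] [Group G] (σ : G → G → κ) : Set (Set G) :=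
  {V | ∃ h g s t : G,
    σ g (s * t) * σ s t ≠ σ g s * σ (g * s) t ∧ V = {h, h * g, h * g * s, h * g * s * t}}

/-- `Ω_σ`: subsets of `G` containing `1` and containing no σ-prohibition. -/
def Omega {κ G : Type} [Field κ] [Group G] (σ : G → G → κ) : Set (Set G) :=
  {ξ | (1 : G) ∈ ξ ∧ ∀ V ∈ ProhibitionI σ ∪ ProhibitionII σ, ¬ V ⊆ ξ}

open scoped Classical

/-- Nonzero elements `k(U,g)` of the `κ`-monoid `𝒮^σ(G)`:
`k ≠ 0`, `U ∈ Ω_σ` finite, `g ∈ U`. The zero element is adjoined via `Option`. -/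
def SElt {κ G : Type} [Field κ] [Group G] (σ : G → G → κ) : Type :=
  {x : κ × Set G × G // x.1 ≠ 0 ∧ x.2.1 ∈ Omega σ ∧ x.2.1.Finite ∧ x.2.2 ∈ x.2.1}

/-- Build the element `k(U,g)` of `𝒮^σ(G)`, or `0` (= `none`) if the data is not
admissible (in particular if `k = 0` or `U ∉ Ω_σ`, encoding the factors `χ` and `σ`). -/
noncomputable def SMk {κ G : Type} [Field κ] [Group G] (σ : G → G → κ)
    (k : κ) (U : Set G) (g : G) : Option (SElt σ) :=
  if h : k ≠ 0 ∧ U ∈ Omega σ ∧ U.Finite ∧ g ∈ U then some ⟨(k, U, g), h⟩ else none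

/-- The product `k(U,g) ⋆ r(V,h) = σ(g,h) χ(U ∪ gV) kr (U ∪ gV, gh)` on `𝒮^σ(G)`. -/
noncomputable def SMul' {κ G : Type} [Field κ] [Group G] (σ : G → G → κ)
    (x y : Option (SElt σ)) : Option (SElt σ) :=
  x.bind fun a => y.bind fun b =>
    SMk σ (σ a.1.2.2 b.1.2.2 * (a.1.1 * b.1.1))
      (a.1.2.1 ∪ (fun t => a.1.2.2 * t) '' b.1.2.1) (a.1.2.2 * b.1.2.2)

/-- The action of `κ` on `𝒮^σ(G)`. -/
noncomputable def SSmul {κ G : Type} [Field κ] [Group G] (σ : G → G → κ)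
    (r : κ) (x : Option (SElt σ)) : Option (SElt σ) :=
  x.bind fun a => SMk σ (r * a.1.1) a.1.2.1 a.1.2.2

section AuxLemmas

variable {κ G : Type} [Field κ] [Group G] (σ : G → G → κ)

lemma img_img (g h : G) (S : Set G) :
    (fun t => g * t) '' ((fun t => h * t) '' S) = (fun t => g * h * t) '' S := by
  rw [← Set.image_comp]
  apply Set.image_congr'
  intro t
  simp [Function.comp, mul_assoc]

lemma prohibition_smul (g : G) {V : Set G}
    (hV : V ∈ ProhibitionI σ ∪ ProhibitionII σ) :
    (fun t => g * t) '' V ∈ ProhibitionI σ ∪ ProhibitionII σ := by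
  rcases hV with ⟨h, g', s, h0, rfl⟩ | ⟨h, g', s, t, h0, rfl⟩
  · exact Set.mem_union_left _ ⟨g * h, g', s, h0, by
      simp [Set.image_insert_eq, Set.image_singleton, mul_assoc]⟩
  · exact Set.mem_union_right _ ⟨g * h, g', s, t, h0, by
      simp [Set.image_insert_eq, Set.image_singleton, mul_assoc]⟩

lemma omega_sub {X Y : Set G} (g : G) (hX : X ∈ Omega σ) (h1 : (1 : G) ∈ Y)
    (hsub : ∀ x ∈ Y, g * x ∈ X) : Y ∈ Omega σ := by
  refine ⟨h1, fun V hV hVY => ?_⟩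
  refine hX.2 ((fun t => g * t) '' V) (prohibition_smul σ g hV) ?_
  rintro x ⟨t, ht, rfl⟩
  exact hsub t (hVY ht)

lemma omega_of_subset {X Y : Set G} (hX : X ∈ Omega σ) (h1 : (1 : G) ∈ Y)
    (hs : Y ⊆ X) : Y ∈ Omega σ :=
  omega_sub σ 1 hX h1 (fun x hx => by rw [one_mul]; exact hs hx)

lemma omega_sigma_ne {F : Set G} (hF : F ∈ Omega σ) (h g s : G)
    (h1 : h ∈ F) (h2 : h * g ∈ F) (h3 : h * g * s ∈ F) : σ g s ≠ 0 := by
  intro h0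
  refine hF.2 {h, h * g, h * g * s} (Set.mem_union_left _ ⟨h, g, s, h0, rfl⟩) ?_
  simp only [Set.insert_subset_iff, Set.singleton_subset_iff]
  exact ⟨h1, h2, h3⟩

lemma omega_sigma_assoc {F : Set G} (hF : F ∈ Omega σ) (g h f : G)
    (h2 : g ∈ F) (h3 : g * h ∈ F) (h4 : g * h * f ∈ F) :
    σ g (h * f) * σ h f = σ g h * σ (g * h) f := by
  by_contra hc
  refine hF.2 {1, 1 * g, 1 * g * h, 1 * g * h * f}
    (Set.mem_union_right _ ⟨1, g, h, f, hc, rfl⟩) ?_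
  simp only [Set.insert_subset_iff, Set.singleton_subset_iff, one_mul]
  exact ⟨hF.1, h2, h3, h4⟩

lemma smul_cancel' {R : Type} [Ring R] [Algebra κ R] {c d : κ} {x : R}
    (hx : x ≠ 0) (h : c • x = d • x) : c = d := by
  by_contra hne
  have h1 : (c - d) • x = 0 := by rw [sub_smul, h, sub_self]
  have h2 : x = 0 := by
    have h3 := congrArg (fun y => (c - d)⁻¹ • y) h1
    simpa [smul_smul, inv_mul_cancel₀ (sub_ne_zero.mpr hne)] using h3
  exact hx h2

lemma sig_facts (hσ : IsFactorSet σ) {g : G} (hg1 : σ g 1 ≠ 0) :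
    σ 1 g = 1 ∧ σ g 1 = 1 := by
  obtain ⟨R, _, _, Γ, hΓ1, _, hns, h4, h5⟩ := hσ
  have hΓg : Γ g ≠ 0 := fun h => hg1 (hns g 1 (by rw [h, zero_mul]))
  constructor
  · have h := h4 1 g
    simp only [inv_one, hΓ1, one_mul] at h
    have h' : (1 : κ) • Γ g = σ 1 g • Γ g := by rw [one_smul]; exact h
    exact (smul_cancel' hΓg h').symm
  · have h := h5 g 1
    simp only [inv_one, hΓ1, mul_one] at h
    have h' : (1 : κ) • Γ g = σ g 1 • Γ g := by rw [one_smul]; exact h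
    exact (smul_cancel' hΓg h').symm

lemma sig_inv_comm (hσ : IsFactorSet σ) {g : G} (hg : σ g⁻¹ g ≠ 0) :
    σ g g⁻¹ = σ g⁻¹ g := by
  obtain ⟨R, _, _, Γ, hΓ1, _, hns, h4, h5⟩ := hσ
  have hΓ : Γ g⁻¹ ≠ 0 := fun h => hg (hns g⁻¹ g (by rw [h, zero_mul]))
  have e1 := h4 g g⁻¹
  have e2 := h5 g⁻¹ g
  simp only [mul_inv_cancel, inv_mul_cancel, hΓ1, mul_one, one_mul] at e1 e2
  exact smul_cancel' hΓ (e1.symm.trans e2)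

lemma elt_facts (hσ : IsFactorSet σ) {U : Set G} {g : G}
    (hU : U ∈ Omega σ) (hg : g ∈ U) :
    σ 1 g = 1 ∧ σ g 1 = 1 ∧ σ g g⁻¹ ≠ 0 ∧ σ g⁻¹ g ≠ 0 ∧ σ g g⁻¹ = σ g⁻¹ g := by
  have h1 : (1 : G) ∈ U := hU.1
  have hg1 : σ g 1 ≠ 0 :=
    omega_sigma_ne σ hU 1 g 1 h1 (by rwa [one_mul]) (by rwa [one_mul, mul_one])
  have hgg : σ g g⁻¹ ≠ 0 :=
    omega_sigma_ne σ hU 1 g g⁻¹ h1 (by rwa [one_mul])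
      (by rw [one_mul, mul_inv_cancel]; exact h1)
  have hgg' : σ g⁻¹ g ≠ 0 :=
    omega_sigma_ne σ hU g g⁻¹ g hg (by rw [mul_inv_cancel]; exact h1)
      (by rw [mul_inv_cancel, one_mul]; exact hg)
  obtain ⟨a, b⟩ := sig_facts σ hσ hg1
  exact ⟨a, b, hgg, hgg', sig_inv_comm σ hσ hgg'⟩

lemma SMk_of {k : κ} {U : Set G} {g : G}
    (h : k ≠ 0 ∧ U ∈ Omega σ ∧ U.Finite ∧ g ∈ U) :
    SMk σ k U g = some ⟨(k, U, g), h⟩ := dif_pos h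

lemma SMk_none {k : κ} {U : Set G} {g : G}
    (h : ¬(k ≠ 0 ∧ U ∈ Omega σ ∧ U.Finite ∧ g ∈ U)) :
    SMk σ k U g = none := dif_neg h

lemma SMk_some_fst {k : κ} {U : Set G} {g : G} {a : SElt σ}
    (h : SMk σ k U g = some a) : a.1 = (k, U, g) := by
  unfold SMk at h
  split at h
  · injection h with h'
    rw [← h']
  · exact absurd h (by simp)

lemma SMk_ne_none {k : κ} {U : Set G} {g : G} (h : SMk σ k U g ≠ none) :
    k ≠ 0 ∧ U ∈ Omega σ ∧ U.Finite ∧ g ∈ U := by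
  by_contra hc
  exact h (SMk_none σ hc)

lemma SMul'_none_left (y : Option (SElt σ)) : SMul' σ none y = none := rfl

lemma SMul'_none_right (x : Option (SElt σ)) : SMul' σ x none = none := by
  cases x <;> rfl

end AuxLemmas
/-- `𝒮^σ(G)` is a `κ`-cancellative inverse monoid: the product is associative, has
unit `({1},1)`, the inverse of `k(U,g)` is `σ(g,g⁻¹)⁻¹k⁻¹(g⁻¹U, g⁻¹)`, idempotents
commute, the `κ`-action is cancellative, and the nonzero idempotents are exactly the
elements `(U,1)`. -/
theorem stmt_9 {κ G : Type} [Field κ] [Group G] (σ : G → G → κ)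
    (hσ : IsFactorSet σ) :
    (∀ x y z : Option (SElt σ), SMul' σ (SMul' σ x y) z = SMul' σ x (SMul' σ y z)) ∧
    (∀ x : Option (SElt σ), SMul' σ (SMk σ 1 {1} 1) x = x ∧ SMul' σ x (SMk σ 1 {1} 1) = x) ∧
    (∀ (k : κ) (U : Set G) (g : G), SMk σ k U g ≠ none →
      SMul' σ (SMk σ k U g)
          (SMul' σ (SMk σ ((σ g g⁻¹)⁻¹ * k⁻¹) ((fun t => g⁻¹ * t) '' U) g⁻¹) (SMk σ k U g))
        = SMk σ k U g ∧
      SMul' σ (SMk σ ((σ g g⁻¹)⁻¹ * k⁻¹) ((fun t => g⁻¹ * t) '' U) g⁻¹)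
          (SMul' σ (SMk σ k U g) (SMk σ ((σ g g⁻¹)⁻¹ * k⁻¹) ((fun t => g⁻¹ * t) '' U) g⁻¹))
        = SMk σ ((σ g g⁻¹)⁻¹ * k⁻¹) ((fun t => g⁻¹ * t) '' U) g⁻¹) ∧
    (∀ x y : Option (SElt σ), SMul' σ x x = x → SMul' σ y y = y →
      SMul' σ x y = SMul' σ y x) ∧
    (∀ (r t : κ) (x : Option (SElt σ)), x ≠ none → SSmul σ r x = SSmul σ t x → r = t) ∧
    (∀ a : SElt σ, SMul' σ (some a) (some a) = some a ↔ a.1.1 = 1 ∧ a.1.2.2 = 1) := by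
  classical
  by_cases h11 : σ 1 1 = 0
  · -- degenerate case : `SElt σ` is empty, everything is `none`
    have hempty : ∀ x : Option (SElt σ), x = none := by
      intro x
      cases x with
      | none => rfl
      | some a =>
        have hU := a.2.2.1
        have h1 := hU.1
        exact absurd h11
          (omega_sigma_ne σ hU 1 1 1 h1 (by rwa [one_mul]) (by rwa [one_mul, mul_one]))
    refine ⟨?_, ?_, ?_, ?_, ?_, ?_⟩
    · intro x y z
      rw [hempty (SMul' σ (SMul' σ x y) z), hempty (SMul' σ x (SMul' σ y z))]
    · intro x
      constructor
      · rw [hempty (SMul' σ (SMk σ 1 {1} 1) x), hempty x]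
      · rw [hempty (SMul' σ x (SMk σ 1 {1} 1)), hempty x]
    · intro k U g hk
      exact absurd (hempty _) hk
    · intro x y _ _
      rw [hempty (SMul' σ x y), hempty (SMul' σ y x)]
    · intro r t x hx
      exact absurd (hempty x) hx
    · intro a
      exact absurd (hempty (some a)) (Option.some_ne_none a)
  -- main case
  have h11' : σ 1 1 = 1 := (sig_facts σ hσ h11).1
  have h1Ω : {(1 : G)} ∈ Omega σ := by
    refine ⟨Set.mem_singleton 1, fun V hV hsub => ?_⟩
    have hsub' := Set.subset_singleton_iff.mp hsub
    rcases hV with ⟨h, g, s, h0, rfl⟩ | ⟨h, g, s, t, hne, rfl⟩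
    · have hh : h = 1 := hsub' h (by simp)
      have hg : h * g = 1 := hsub' (h * g) (by simp)
      have hs : h * g * s = 1 := hsub' (h * g * s) (by simp)
      rw [hh, one_mul] at hg
      rw [hh, one_mul, hg, one_mul] at hs
      rw [hg, hs] at h0
      exact h11 h0
    · have hh : h = 1 := hsub' h (by simp)
      have hg : h * g = 1 := hsub' (h * g) (by simp)
      have hs : h * g * s = 1 := hsub' (h * g * s) (by simp)
      have ht : h * g * s * t = 1 := hsub' (h * g * s * t) (by simp)
      rw [hh, one_mul] at hg
      rw [hh, one_mul, hg, one_mul] at hs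
      rw [hh, one_mul, hg, one_mul, hs, one_mul] at ht
      rw [hg, hs, ht] at hne
      simp [h11'] at hne
    -- idempotent characterization (conjunct 6), proved first
  have hidem : ∀ a : SElt σ,
      SMul' σ (some a) (some a) = some a ↔ a.1.1 = 1 ∧ a.1.2.2 = 1 := by
    intro a
    obtain ⟨⟨ka, Ua, ga⟩, hka, hUa, hUaf, hga⟩ := a
    constructor
    · intro h
      have h' : SMk σ (σ ga ga * (ka * ka)) (Ua ∪ (fun t => ga * t) '' Ua) (ga * ga)
          = some ⟨(ka, Ua, ga), ⟨hka, hUa, hUaf, hga⟩⟩ := h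
      have hfst := SMk_some_fst σ h'
      simp only [Prod.mk.injEq] at hfst
      obtain ⟨h1, _, h3⟩ := hfst
      have hg1 : ga = 1 := left_eq_mul.mp h3
      refine ⟨?_, hg1⟩
      subst hg1
      rw [h11', one_mul] at h1
      have h2 : ka * 1 = ka * ka := by rw [mul_one]; exact h1
      exact (mul_left_cancel₀ hka h2).symm
    · rintro ⟨hk1, hg1⟩
      have hk1' : ka = 1 := hk1
      have hg1' : ga = 1 := hg1
      subst hk1' hg1'
      have h0 : SMul' σ (some ⟨((1 : κ), Ua, (1 : G)), ⟨hka, hUa, hUaf, hga⟩⟩)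
            (some ⟨((1 : κ), Ua, (1 : G)), ⟨hka, hUa, hUaf, hga⟩⟩)
          = SMk σ (σ 1 1 * (1 * 1)) (Ua ∪ (fun t => (1 : G) * t) '' Ua) ((1 : G) * 1) := rfl
      have hsetid : Ua ∪ (fun t => (1 : G) * t) '' Ua = Ua := by
        ext x
        simp [one_mul]
      rw [h0, hsetid, h11']
      simp only [one_mul, mul_one]
      exact SMk_of σ ⟨hka, hUa, hUaf, hga⟩
  refine ⟨?_, ?_, ?_, ?_, ?_, hidem⟩
  · -- associativity
    intro x y z
    cases x with
    | none => simp only [SMul'_none_left]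
    | some a =>
      cases y with
      | none => simp only [SMul'_none_left, SMul'_none_right]
      | some b =>
        cases z with
        | none => simp only [SMul'_none_right]
        | some c =>
          obtain ⟨⟨ka, Ua, ga⟩, hka, hUa, hUaf, hga⟩ := a
          obtain ⟨⟨kb, Ub, gb⟩, hkb, hUb, hUbf, hgb⟩ := b
          obtain ⟨⟨kc, Uc, gc⟩, hkc, hUc, hUcf, hgc⟩ := c
          have hsets : Ua ∪ (fun t => ga * t) '' (Ub ∪ (fun t => gb * t) '' Uc)
              = (Ua ∪ (fun t => ga * t) '' Ub) ∪ (fun t => ga * gb * t) '' Uc := by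
            rw [Set.image_union, img_img, Set.union_assoc]
          by_cases hFΩ : (Ua ∪ (fun t => ga * t) '' Ub) ∪ (fun t => ga * gb * t) '' Uc
              ∈ Omega σ
          · have m1 : (1 : G) ∈ (Ua ∪ (fun t => ga * t) '' Ub)
                ∪ (fun t => ga * gb * t) '' Uc :=
              Set.mem_union_left _ (Set.mem_union_left _ hUa.1)
            have mga : ga ∈ (Ua ∪ (fun t => ga * t) '' Ub)
                ∪ (fun t => ga * gb * t) '' Uc :=
              Set.mem_union_left _ (Set.mem_union_left _ hga)
            have mgab : ga * gb ∈ (Ua ∪ (fun t => ga * t) '' Ub)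
                ∪ (fun t => ga * gb * t) '' Uc :=
              Set.mem_union_left _ (Set.mem_union_right _ ⟨gb, hgb, rfl⟩)
            have mgabc : ga * gb * gc ∈ (Ua ∪ (fun t => ga * t) '' Ub)
                ∪ (fun t => ga * gb * t) '' Uc :=
              Set.mem_union_right _ ⟨gc, hgc, rfl⟩
            have s1 : σ ga gb ≠ 0 :=
              omega_sigma_ne σ hFΩ 1 ga gb m1 (by rwa [one_mul]) (by rwa [one_mul])
            have s2 : σ (ga * gb) gc ≠ 0 :=
              omega_sigma_ne σ hFΩ 1 (ga * gb) gc m1 (by rwa [one_mul]) (by rwa [one_mul])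
            have s3 : σ gb gc ≠ 0 := omega_sigma_ne σ hFΩ ga gb gc mga mgab mgabc
            have s4 : σ ga (gb * gc) ≠ 0 :=
              omega_sigma_ne σ hFΩ 1 ga (gb * gc) m1 (by rwa [one_mul])
                (by rw [one_mul, ← mul_assoc]; exact mgabc)
            have hUab : Ua ∪ (fun t => ga * t) '' Ub ∈ Omega σ :=
              omega_of_subset σ hFΩ (Set.mem_union_left _ hUa.1) Set.subset_union_left
            have hUbc : Ub ∪ (fun t => gb * t) '' Uc ∈ Omega σ := by
              refine omega_sub σ ga hFΩ (Set.mem_union_left _ hUb.1) ?_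
              rintro x (hx | ⟨u, hu, rfl⟩)
              · exact Set.mem_union_left _ (Set.mem_union_right _ ⟨x, hx, rfl⟩)
              · exact Set.mem_union_right _ ⟨u, hu, mul_assoc ga gb u⟩
            have hkey := omega_sigma_assoc σ hFΩ ga gb gc mga mgab mgabc
            have cd1 : σ ga gb * (ka * kb) ≠ 0 ∧ Ua ∪ (fun t => ga * t) '' Ub ∈ Omega σ
                ∧ (Ua ∪ (fun t => ga * t) '' Ub).Finite
                ∧ ga * gb ∈ Ua ∪ (fun t => ga * t) '' Ub :=
              ⟨mul_ne_zero s1 (mul_ne_zero hka hkb), hUab,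
                hUaf.union (hUbf.image _), Set.mem_union_right _ ⟨gb, hgb, rfl⟩⟩
            have e1 : SMul' σ (some ⟨(ka, Ua, ga), ⟨hka, hUa, hUaf, hga⟩⟩)
                  (some ⟨(kb, Ub, gb), ⟨hkb, hUb, hUbf, hgb⟩⟩)
                = some ⟨(σ ga gb * (ka * kb), Ua ∪ (fun t => ga * t) '' Ub, ga * gb), cd1⟩ :=
              SMk_of σ cd1
            have cd2 : σ (ga * gb) gc * (σ ga gb * (ka * kb) * kc) ≠ 0
                ∧ (Ua ∪ (fun t => ga * t) '' Ub) ∪ (fun t => ga * gb * t) '' Uc ∈ Omega σ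
                ∧ ((Ua ∪ (fun t => ga * t) '' Ub) ∪ (fun t => ga * gb * t) '' Uc).Finite
                ∧ (ga * gb) * gc ∈ (Ua ∪ (fun t => ga * t) '' Ub)
                    ∪ (fun t => ga * gb * t) '' Uc :=
              ⟨mul_ne_zero s2 (mul_ne_zero cd1.1 hkc), hFΩ,
                (hUaf.union (hUbf.image _)).union (hUcf.image _),
                Set.mem_union_right _ ⟨gc, hgc, rfl⟩⟩
            have e2 : SMul' σ
                  (some ⟨(σ ga gb * (ka * kb), Ua ∪ (fun t => ga * t) '' Ub, ga * gb), cd1⟩)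
                  (some ⟨(kc, Uc, gc), ⟨hkc, hUc, hUcf, hgc⟩⟩)
                = some ⟨(σ (ga * gb) gc * (σ ga gb * (ka * kb) * kc),
                    (Ua ∪ (fun t => ga * t) '' Ub) ∪ (fun t => ga * gb * t) '' Uc,
                    (ga * gb) * gc), cd2⟩ :=
              SMk_of σ cd2
            have cd3 : σ gb gc * (kb * kc) ≠ 0 ∧ Ub ∪ (fun t => gb * t) '' Uc ∈ Omega σ
                ∧ (Ub ∪ (fun t => gb * t) '' Uc).Finite
                ∧ gb * gc ∈ Ub ∪ (fun t => gb * t) '' Uc :=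
              ⟨mul_ne_zero s3 (mul_ne_zero hkb hkc), hUbc,
                hUbf.union (hUcf.image _), Set.mem_union_right _ ⟨gc, hgc, rfl⟩⟩
            have e3 : SMul' σ (some ⟨(kb, Ub, gb), ⟨hkb, hUb, hUbf, hgb⟩⟩)
                  (some ⟨(kc, Uc, gc), ⟨hkc, hUc, hUcf, hgc⟩⟩)
                = some ⟨(σ gb gc * (kb * kc), Ub ∪ (fun t => gb * t) '' Uc, gb * gc), cd3⟩ :=
              SMk_of σ cd3
            have cd4 : σ ga (gb * gc) * (ka * (σ gb gc * (kb * kc))) ≠ 0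
                ∧ Ua ∪ (fun t => ga * t) '' (Ub ∪ (fun t => gb * t) '' Uc) ∈ Omega σ
                ∧ (Ua ∪ (fun t => ga * t) '' (Ub ∪ (fun t => gb * t) '' Uc)).Finite
                ∧ ga * (gb * gc) ∈ Ua ∪ (fun t => ga * t) '' (Ub ∪ (fun t => gb * t) '' Uc) :=
              ⟨mul_ne_zero s4 (mul_ne_zero hka cd3.1), by rw [hsets]; exact hFΩ,
                hUaf.union ((hUbf.union (hUcf.image _)).image _),
                Set.mem_union_right _ ⟨gb * gc, Set.mem_union_right _ ⟨gc, hgc, rfl⟩, rfl⟩⟩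
            have e4 : SMul' σ (some ⟨(ka, Ua, ga), ⟨hka, hUa, hUaf, hga⟩⟩)
                  (some ⟨(σ gb gc * (kb * kc), Ub ∪ (fun t => gb * t) '' Uc, gb * gc), cd3⟩)
                = some ⟨(σ ga (gb * gc) * (ka * (σ gb gc * (kb * kc))),
                    Ua ∪ (fun t => ga * t) '' (Ub ∪ (fun t => gb * t) '' Uc),
                    ga * (gb * gc)), cd4⟩ :=
              SMk_of σ cd4
            rw [e1, e2, e3, e4]
            refine congrArg some (Subtype.ext ?_)
            simp only [Prod.mk.injEq]
            refine ⟨?_, hsets.symm, mul_assoc ga gb gc⟩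
            linear_combination (-(ka * kb * kc)) * hkey
          · have hL : SMul' σ (SMul' σ (some ⟨(ka, Ua, ga), ⟨hka, hUa, hUaf, hga⟩⟩)
                  (some ⟨(kb, Ub, gb), ⟨hkb, hUb, hUbf, hgb⟩⟩))
                  (some ⟨(kc, Uc, gc), ⟨hkc, hUc, hUcf, hgc⟩⟩) = none := by
              cases h : SMul' σ (some ⟨(ka, Ua, ga), ⟨hka, hUa, hUaf, hga⟩⟩)
                  (some ⟨(kb, Ub, gb), ⟨hkb, hUb, hUbf, hgb⟩⟩) with
              | none => rfl
              | some d =>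
                obtain ⟨⟨kd, Ud, gd⟩, hd⟩ := d
                have h' : SMk σ (σ ga gb * (ka * kb)) (Ua ∪ (fun t => ga * t) '' Ub) (ga * gb)
                    = some ⟨(kd, Ud, gd), hd⟩ := h
                have hfst := SMk_some_fst σ h'
                simp only [Prod.mk.injEq] at hfst
                obtain ⟨hkd, hUd, hgd⟩ := hfst
                subst hUd hgd
                exact SMk_none σ (fun hc => hFΩ hc.2.1)
            have hR : SMul' σ (some ⟨(ka, Ua, ga), ⟨hka, hUa, hUaf, hga⟩⟩)
                (SMul' σ (some ⟨(kb, Ub, gb), ⟨hkb, hUb, hUbf, hgb⟩⟩)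
                  (some ⟨(kc, Uc, gc), ⟨hkc, hUc, hUcf, hgc⟩⟩)) = none := by
              cases h : SMul' σ (some ⟨(kb, Ub, gb), ⟨hkb, hUb, hUbf, hgb⟩⟩)
                  (some ⟨(kc, Uc, gc), ⟨hkc, hUc, hUcf, hgc⟩⟩) with
              | none => exact SMul'_none_right σ _
              | some e =>
                obtain ⟨⟨ke, Ue, ge⟩, he⟩ := e
                have h' : SMk σ (σ gb gc * (kb * kc)) (Ub ∪ (fun t => gb * t) '' Uc) (gb * gc)
                    = some ⟨(ke, Ue, ge), he⟩ := h
                have hfst := SMk_some_fst σ h'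
                simp only [Prod.mk.injEq] at hfst
                obtain ⟨hke, hUe, hge⟩ := hfst
                subst hUe hge
                refine SMk_none σ (fun hc => hFΩ ?_)
                have hmem := hc.2.1
                rwa [hsets] at hmem
            rw [hL, hR]
  · -- unit laws
    have hunit : SMk σ (1 : κ) {(1 : G)} 1
        = some ⟨((1 : κ), {(1 : G)}, (1 : G)),
            ⟨one_ne_zero, h1Ω, Set.finite_singleton 1, Set.mem_singleton 1⟩⟩ :=
      SMk_of σ _
    intro x
    cases x with
    | none => exact ⟨SMul'_none_right σ _, rfl⟩
    | some a =>
      obtain ⟨⟨ka, Ua, ga⟩, hka, hUa, hUaf, hga⟩ := a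
      have h1Ua : (1 : G) ∈ Ua := hUa.1
      obtain ⟨h1g, hg1, _, _, _⟩ := elt_facts σ hσ hUa hga
      constructor
      · rw [hunit]
        have h0 : SMul' σ (some ⟨((1 : κ), {(1 : G)}, (1 : G)),
              ⟨one_ne_zero, h1Ω, Set.finite_singleton 1, Set.mem_singleton 1⟩⟩)
              (some ⟨(ka, Ua, ga), ⟨hka, hUa, hUaf, hga⟩⟩)
            = SMk σ (σ 1 ga * (1 * ka)) ({(1 : G)} ∪ (fun t => (1 : G) * t) '' Ua)
                ((1 : G) * ga) := rfl
        have hset : {(1 : G)} ∪ (fun t => (1 : G) * t) '' Ua = Ua := by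
          ext x
          simp only [Set.mem_union, Set.mem_singleton_iff, Set.mem_image, one_mul]
          constructor
          · rintro (rfl | ⟨t, ht, rfl⟩)
            · exact h1Ua
            · exact ht
          · intro hx
            exact Or.inr ⟨x, hx, rfl⟩
        rw [h0, hset, h1g]
        simp only [one_mul]
        exact SMk_of σ ⟨hka, hUa, hUaf, hga⟩
      · rw [hunit]
        have h0 : SMul' σ (some ⟨(ka, Ua, ga), ⟨hka, hUa, hUaf, hga⟩⟩)
              (some ⟨((1 : κ), {(1 : G)}, (1 : G)),
                ⟨one_ne_zero, h1Ω, Set.finite_singleton 1, Set.mem_singleton 1⟩⟩)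
            = SMk σ (σ ga 1 * (ka * 1)) (Ua ∪ (fun t => ga * t) '' {(1 : G)}) (ga * 1) := rfl
        have hset : Ua ∪ (fun t => ga * t) '' {(1 : G)} = Ua := by
          simp only [Set.image_singleton, mul_one]
          exact Set.union_eq_self_of_subset_right (Set.singleton_subset_iff.mpr hga)
        rw [h0, hset, hg1]
        simp only [one_mul, mul_one]
        exact SMk_of σ ⟨hka, hUa, hUaf, hga⟩
  · -- inverses
    intro k U g hne
    obtain ⟨hk, hU, hUf, hgU⟩ := SMk_ne_none σ hne
    obtain ⟨hσ1g, hσg1, hσgg, hσg'g, hσcomm⟩ := elt_facts σ hσ hU hgU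
    have h1U : (1 : G) ∈ U := hU.1
    have h1U' : (1 : G) ∈ (fun t => g⁻¹ * t) '' U := ⟨g, hgU, inv_mul_cancel g⟩
    have hgi : g⁻¹ ∈ (fun t => g⁻¹ * t) '' U := ⟨1, h1U, mul_one g⁻¹⟩
    have hU'Ω : (fun t => g⁻¹ * t) '' U ∈ Omega σ := by
      refine omega_sub σ g hU h1U' ?_
      rintro x ⟨t, ht, rfl⟩
      rw [← mul_assoc, mul_inv_cancel, one_mul]
      exact ht
    have hU'f : ((fun t => g⁻¹ * t) '' U).Finite := hUf.image _
    obtain ⟨hσ1gi, hσgi1, _, _, _⟩ := elt_facts σ hσ hU'Ω hgi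
    have hk' : (σ g g⁻¹)⁻¹ * k⁻¹ ≠ 0 := mul_ne_zero (inv_ne_zero hσgg) (inv_ne_zero hk)
    have hA : SMk σ k U g = some ⟨(k, U, g), ⟨hk, hU, hUf, hgU⟩⟩ := SMk_of σ _
    have hB : SMk σ ((σ g g⁻¹)⁻¹ * k⁻¹) ((fun t => g⁻¹ * t) '' U) g⁻¹
        = some ⟨((σ g g⁻¹)⁻¹ * k⁻¹, (fun t => g⁻¹ * t) '' U, g⁻¹),
            ⟨hk', hU'Ω, hU'f, hgi⟩⟩ := SMk_of σ _
    have himgU : (fun t => g * t) '' ((fun t => g⁻¹ * t) '' U) = U := by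
      rw [img_img]
      simp only [mul_inv_cancel, one_mul, Set.image_id']
    rw [hA, hB]
    constructor
    · -- x (x* x) = x
      have hcoefBA : σ g⁻¹ g * ((σ g g⁻¹)⁻¹ * k⁻¹ * k) = 1 := by
        rw [hσcomm, show σ g⁻¹ g * ((σ g⁻¹ g)⁻¹ * k⁻¹ * k)
            = σ g⁻¹ g * (σ g⁻¹ g)⁻¹ * (k⁻¹ * k) from by ring,
          mul_inv_cancel₀ hσg'g, inv_mul_cancel₀ hk, one_mul]
      have eBA : SMul' σ (some ⟨((σ g g⁻¹)⁻¹ * k⁻¹, (fun t => g⁻¹ * t) '' U, g⁻¹),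
              ⟨hk', hU'Ω, hU'f, hgi⟩⟩) (some ⟨(k, U, g), ⟨hk, hU, hUf, hgU⟩⟩)
          = some ⟨((1 : κ), (fun t => g⁻¹ * t) '' U, (1 : G)),
              ⟨one_ne_zero, hU'Ω, hU'f, h1U'⟩⟩ := by
        have h0 : SMul' σ (some ⟨((σ g g⁻¹)⁻¹ * k⁻¹, (fun t => g⁻¹ * t) '' U, g⁻¹),
                ⟨hk', hU'Ω, hU'f, hgi⟩⟩) (some ⟨(k, U, g), ⟨hk, hU, hUf, hgU⟩⟩)
            = SMk σ (σ g⁻¹ g * ((σ g g⁻¹)⁻¹ * k⁻¹ * k))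
                ((fun t => g⁻¹ * t) '' U ∪ (fun t => g⁻¹ * t) '' U) (g⁻¹ * g) := rfl
        rw [h0, Set.union_self, hcoefBA, inv_mul_cancel]
        exact SMk_of σ ⟨one_ne_zero, hU'Ω, hU'f, h1U'⟩
      rw [eBA]
      have h1 : SMul' σ (some ⟨(k, U, g), ⟨hk, hU, hUf, hgU⟩⟩)
            (some ⟨((1 : κ), (fun t => g⁻¹ * t) '' U, (1 : G)),
              ⟨one_ne_zero, hU'Ω, hU'f, h1U'⟩⟩)
          = SMk σ (σ g 1 * (k * 1)) (U ∪ (fun t => g * t) '' ((fun t => g⁻¹ * t) '' U))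
              (g * 1) := rfl
      rw [h1, himgU, Set.union_self, hσg1]
      simp only [one_mul, mul_one]
      exact hA
    · -- x* (x x*) = x*
      have hcoefAB : σ g g⁻¹ * (k * ((σ g g⁻¹)⁻¹ * k⁻¹)) = 1 := by
        rw [show σ g g⁻¹ * (k * ((σ g g⁻¹)⁻¹ * k⁻¹))
            = σ g g⁻¹ * (σ g g⁻¹)⁻¹ * (k * k⁻¹) from by ring,
          mul_inv_cancel₀ hσgg, mul_inv_cancel₀ hk, one_mul]
      have eAB : SMul' σ (some ⟨(k, U, g), ⟨hk, hU, hUf, hgU⟩⟩)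
            (some ⟨((σ g g⁻¹)⁻¹ * k⁻¹, (fun t => g⁻¹ * t) '' U, g⁻¹),
              ⟨hk', hU'Ω, hU'f, hgi⟩⟩)
          = some ⟨((1 : κ), U, (1 : G)), ⟨one_ne_zero, hU, hUf, h1U⟩⟩ := by
        have h0 : SMul' σ (some ⟨(k, U, g), ⟨hk, hU, hUf, hgU⟩⟩)
              (some ⟨((σ g g⁻¹)⁻¹ * k⁻¹, (fun t => g⁻¹ * t) '' U, g⁻¹),
                ⟨hk', hU'Ω, hU'f, hgi⟩⟩)
            = SMk σ (σ g g⁻¹ * (k * ((σ g g⁻¹)⁻¹ * k⁻¹)))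
                (U ∪ (fun t => g * t) '' ((fun t => g⁻¹ * t) '' U)) (g * g⁻¹) := rfl
        rw [h0, himgU, Set.union_self, hcoefAB, mul_inv_cancel]
        exact SMk_of σ ⟨one_ne_zero, hU, hUf, h1U⟩
      rw [eAB]
      have h1 : SMul' σ (some ⟨((σ g g⁻¹)⁻¹ * k⁻¹, (fun t => g⁻¹ * t) '' U, g⁻¹),
              ⟨hk', hU'Ω, hU'f, hgi⟩⟩)
            (some ⟨((1 : κ), U, (1 : G)), ⟨one_ne_zero, hU, hUf, h1U⟩⟩)
          = SMk σ (σ g⁻¹ 1 * ((σ g g⁻¹)⁻¹ * k⁻¹ * 1))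
              ((fun t => g⁻¹ * t) '' U ∪ (fun t => g⁻¹ * t) '' U) (g⁻¹ * 1) := rfl
      rw [h1, Set.union_self, hσgi1]
      simp only [one_mul, mul_one]
      exact hB
  · -- idempotents commute
    intro x y hx hy
    cases x with
    | none => rw [SMul'_none_left, SMul'_none_right]
    | some a =>
      cases y with
      | none => rw [SMul'_none_left, SMul'_none_right]
      | some b =>
        obtain ⟨ha1, ha2⟩ := (hidem a).mp hx
        obtain ⟨hb1, hb2⟩ := (hidem b).mp hy
        obtain ⟨⟨ka, Ua, ga⟩, hka, hUa, hUaf, hga⟩ := a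
        obtain ⟨⟨kb, Ub, gb⟩, hkb, hUb, hUbf, hgb⟩ := b
        have ha1' : ka = 1 := ha1
        have ha2' : ga = 1 := ha2
        have hb1' : kb = 1 := hb1
        have hb2' : gb = 1 := hb2
        subst ha1' ha2' hb1' hb2'
        have h0 : SMul' σ (some ⟨((1 : κ), Ua, (1 : G)), ⟨hka, hUa, hUaf, hga⟩⟩)
              (some ⟨((1 : κ), Ub, (1 : G)), ⟨hkb, hUb, hUbf, hgb⟩⟩)
            = SMk σ (σ 1 1 * (1 * 1)) (Ua ∪ (fun t => (1 : G) * t) '' Ub) ((1 : G) * 1) := rfl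
        have h0' : SMul' σ (some ⟨((1 : κ), Ub, (1 : G)), ⟨hkb, hUb, hUbf, hgb⟩⟩)
              (some ⟨((1 : κ), Ua, (1 : G)), ⟨hka, hUa, hUaf, hga⟩⟩)
            = SMk σ (σ 1 1 * (1 * 1)) (Ub ∪ (fun t => (1 : G) * t) '' Ua) ((1 : G) * 1) := rfl
        have him : ∀ S : Set G, (fun t => (1 : G) * t) '' S = S := by
          intro S
          simp only [one_mul, Set.image_id']
        rw [h0, h0', him Ua, him Ub, Set.union_comm]
  · -- κ-cancellativity
    intro r t x hx heq
    cases x with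
    | none => exact absurd rfl hx
    | some a =>
      obtain ⟨⟨ka, Ua, ga⟩, hka, hUa, hUaf, hga⟩ := a
      have heq' : SMk σ (r * ka) Ua ga = SMk σ (t * ka) Ua ga := heq
      by_cases hr : r = 0
      · subst hr
        have hL : SMk σ ((0 : κ) * ka) Ua ga = none :=
          SMk_none σ (fun hc => hc.1 (by rw [zero_mul]))
        rw [hL] at heq'
        by_contra ht
        have ht' : t ≠ 0 := fun h => ht h.symm
        have hR : SMk σ (t * ka) Ua ga
            = some ⟨(t * ka, Ua, ga), ⟨mul_ne_zero ht' hka, hUa, hUaf, hga⟩⟩ := SMk_of σ _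
        rw [hR] at heq'
        exact Option.some_ne_none _ heq'.symm
      · have hL : SMk σ (r * ka) Ua ga
            = some ⟨(r * ka, Ua, ga), ⟨mul_ne_zero hr hka, hUa, hUaf, hga⟩⟩ := SMk_of σ _
        rw [hL] at heq'
        have hfst := SMk_some_fst σ heq'.symm
        have h1 : r * ka = t * ka := congrArg Prod.fst hfst
        exact mul_right_cancel₀ hka h1
end

section
/- Assume κ is algebraically closed and σ is a factor set normalized so that σ(g,g⁻¹) ∈ {0,1} for all g. Define ∂(σ)(x,y,z) := σ(x,y) σ(xy,z) σ(z⁻¹y⁻¹, x⁻¹) σ(z⁻¹, y⁻¹). Then for every even permutation γ ∈ A₄, ∂(σ)(γ ▷ (x,y,z)) = ∂(σ)(x,y,z); moreover ∂(σ)(x,y,z) = 0 iff ∂(σ)((0,2) ▷ (x,y,z)) = 0, and if ∂(σ)(x,y,z) ≠ 0 then ∂(σ)((0,2) ▷ (x,y,z)) = ∂(σ)(x,y,z)⁻¹. -/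
/-- The map `γ ▷ (x,y,z)`: permute the tuple `(1, x, xy, xyz)` by `γ` (acting on
positions via `γ⁻¹`) and take consecutive quotients. -/
def permAct {G : Type} [Group G] (γ : Equiv.Perm (Fin 4)) (p : G × G × G) : G × G × G :=
  let u : Fin 4 → G := ![1, p.1, p.1 * p.2.1, p.1 * p.2.1 * p.2.2]
  let v : Fin 4 → G := fun i => u (γ⁻¹ i)
  ((v 0)⁻¹ * v 1, (v 1)⁻¹ * v 2, (v 2)⁻¹ * v 3)

/-- `∂(σ)(x,y,z) = σ(x,y) σ(xy,z) σ(z⁻¹y⁻¹, x⁻¹) σ(z⁻¹, y⁻¹)`. -/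
def dcob {κ G : Type} [Field κ] [Group G] (σ : G → G → κ) (p : G × G × G) : κ :=
  σ p.1 p.2.1 * σ (p.1 * p.2.1) p.2.2 * σ (p.2.2⁻¹ * p.2.1⁻¹) p.1⁻¹ * σ p.2.2⁻¹ p.2.1⁻¹

theorem rot0' {κ G : Type} [Field κ] [Group G] (σ : G → G → κ) {a b c d : G}
    (h1 : a = c) (h2 : b = d) : σ a b = σ c d := by rw [h1, h2]

theorem rot1' {κ G : Type} [Field κ] [Group G] (σ : G → G → κ)
    (E1 : ∀ a b : G, σ a b = σ b (b⁻¹ * a⁻¹)) {a b c d : G}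
    (h1 : a = d) (h2 : b = d⁻¹ * c⁻¹) : σ a b = σ c d := by
  rw [h1, h2, ← E1]

theorem rot2' {κ G : Type} [Field κ] [Group G] (σ : G → G → κ)
    (E1 : ∀ a b : G, σ a b = σ b (b⁻¹ * a⁻¹)) {a b c d : G}
    (h1 : a = d⁻¹ * c⁻¹) (h2 : b = c) : σ a b = σ c d := by
  rw [h1, h2, E1 c d, E1 d (d⁻¹ * c⁻¹)]
  congr 1
  group
theorem factor_props {κ G : Type} [Field κ] [Group G] (σ : G → G → κ)
    (hσ : IsFactorSet σ) (hnorm : ∀ g : G, σ g g⁻¹ = 0 ∨ σ g g⁻¹ = 1) :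
    (∀ a b : G, σ a b = σ b (b⁻¹ * a⁻¹)) ∧
    (∀ a b : G, σ a b ≠ 0 → σ a b * σ b⁻¹ a⁻¹ = 1) := by
  obtain ⟨R, _, _, Γ, h1, h2, h3, h4, h5⟩ := hσ
  -- scalar cancellation
  have hcancel : ∀ {s t : κ} {m : R}, s • m = t • m → m ≠ 0 → s = t := by
    intro s t m hst hm
    by_contra hne
    have hz : (s - t) • m = 0 := by rw [sub_smul, hst, sub_self]
    rcases smul_eq_zero.mp hz with h | h
    · exact hne (sub_eq_zero.mp h)
    · exact hm h
  have hzinv : ∀ g : G, Γ g = 0 → Γ g⁻¹ = 0 := by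
    intro g hg
    have hs : σ g⁻¹ g = 0 := h3 _ _ (by rw [hg, mul_zero])
    have := (h2 g⁻¹ g hs).2
    simpa [h1] using this
  have hone : ∀ g : G, Γ g ≠ 0 → σ g g⁻¹ = 1 := by
    intro g hg
    rcases hnorm g with h | h
    · exact absurd (by simpa [h1] using (h2 g g⁻¹ h).2) hg
    · exact h
  have hreg : ∀ g : G, Γ g * Γ g⁻¹ * Γ g = Γ g := by
    intro g
    by_cases hg : Γ g = 0
    · simp [hg]
    · have := h5 g g⁻¹
      rw [hone g hg] at this
      simpa [h1] using this
  have hreg' : ∀ g : G, Γ g⁻¹ * Γ g * Γ g⁻¹ = Γ g⁻¹ := by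
    intro g
    by_cases hg : Γ g = 0
    · simp [hg, hzinv g hg]
    · have := h4 g g⁻¹
      rw [hone g hg] at this
      simpa [h1] using this
  -- σ a b = 0 → Γ a * Γ b = 0
  have hzmul : ∀ a b : G, σ a b = 0 → Γ a * Γ b = 0 := by
    intro a b hs
    have h4' := h4 a b
    rw [hs, zero_smul] at h4'
    have key : Γ a * (Γ a⁻¹ * Γ a * Γ b) = Γ a * Γ b := by
      calc Γ a * (Γ a⁻¹ * Γ a * Γ b) = Γ a * Γ a⁻¹ * Γ a * Γ b := by noncomm_ring
        _ = Γ a * Γ b := by rw [hreg]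
    rw [← key, h4', mul_zero]
  have hnzmul : ∀ a b : G, σ a b ≠ 0 → Γ a * Γ b ≠ 0 := fun a b hs h => hs (h3 a b h)
  -- Z : σ a b = 0 → σ b (b⁻¹a⁻¹) = 0
  have hZ : ∀ a b : G, σ a b = 0 → σ b (b⁻¹ * a⁻¹) = 0 := by
    intro a b hs
    apply h3
    by_cases hw : Γ (b⁻¹ * a⁻¹) = 0
    · rw [hw, mul_zero]
    · have hinv := (h2 a b hs).1  -- Γ a⁻¹ * Γ (a*b) = 0
      have h5' := h5 b (b⁻¹ * a⁻¹)
      rw [show b * (b⁻¹ * a⁻¹) = a⁻¹ by group, show (b⁻¹ * a⁻¹)⁻¹ = a * b by group] at h5'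
      -- h5' : Γ b * Γ (b⁻¹*a⁻¹) * Γ (a*b) = σ b (b⁻¹*a⁻¹) • (Γ a⁻¹ * Γ (a*b))
      have hwr : Γ (b⁻¹ * a⁻¹) * Γ (a * b) * Γ (b⁻¹ * a⁻¹) = Γ (b⁻¹ * a⁻¹) := by
        have := hreg (b⁻¹ * a⁻¹)
        rwa [show (b⁻¹ * a⁻¹)⁻¹ = a * b by group] at this
      calc Γ b * Γ (b⁻¹ * a⁻¹)
          = Γ b * (Γ (b⁻¹ * a⁻¹) * Γ (a * b) * Γ (b⁻¹ * a⁻¹)) := by rw [hwr]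
        _ = (Γ b * Γ (b⁻¹ * a⁻¹) * Γ (a * b)) * Γ (b⁻¹ * a⁻¹) := by noncomm_ring
        _ = (σ b (b⁻¹ * a⁻¹) • (Γ a⁻¹ * Γ (a * b))) * Γ (b⁻¹ * a⁻¹) := by rw [h5']
        _ = σ b (b⁻¹ * a⁻¹) • (Γ a⁻¹ * Γ (a * b) * Γ (b⁻¹ * a⁻¹)) := by
              rw [smul_mul_assoc]
        _ = 0 := by rw [hinv, zero_mul, smul_zero]
  have hE1 : ∀ a b : G, σ a b = σ b (b⁻¹ * a⁻¹) := by
    intro a b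
    by_cases hs : σ a b = 0
    · rw [hs, (hZ a b hs)]
    · -- nonzero case
      have hab : Γ a * Γ b ≠ 0 := hnzmul a b hs
      have hΓa : Γ a ≠ 0 := fun h => hab (by rw [h, zero_mul])
      have hΓb : Γ b ≠ 0 := fun h => hab (by rw [h, mul_zero])
      have hΓab : Γ (a * b) ≠ 0 := by
        intro h
        apply hab
        have h5' := h5 a b
        calc Γ a * Γ b = Γ a * (Γ b * Γ b⁻¹ * Γ b) := by rw [hreg]
          _ = (Γ a * Γ b * Γ b⁻¹) * Γ b := by noncomm_ring
          _ = (σ a b • (Γ (a * b) * Γ b⁻¹)) * Γ b := by rw [h5']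
          _ = 0 := by rw [h, zero_mul, smul_zero, zero_mul]
      have hΓw : Γ (b⁻¹ * a⁻¹) ≠ 0 := by
        intro h
        apply hΓab
        have := hzinv (b⁻¹ * a⁻¹) h
        rwa [show (b⁻¹ * a⁻¹)⁻¹ = a * b by group] at this
      -- P2 : Γ a * Γ b = σ a b • (Γ a * Γ a⁻¹ * Γ (a*b))
      have hP2 : Γ a * Γ b = σ a b • (Γ a * Γ a⁻¹ * Γ (a * b)) := by
        have h4' := h4 a b
        calc Γ a * Γ b = (Γ a * Γ a⁻¹ * Γ a) * Γ b := by rw [hreg]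
          _ = Γ a * (Γ a⁻¹ * Γ a * Γ b) := by noncomm_ring
          _ = Γ a * (σ a b • (Γ a⁻¹ * Γ (a * b))) := by rw [h4']
          _ = σ a b • (Γ a * Γ a⁻¹ * Γ (a * b)) := by rw [mul_smul_comm]; noncomm_ring
      set w := b⁻¹ * a⁻¹ with hw
      set n := Γ a⁻¹ * Γ (a * b) * Γ w with hn
      -- n ≠ 0
      have hnne : n ≠ 0 := by
        intro h
        apply hab
        have hregab : Γ (a * b) * Γ w * Γ (a * b) = Γ (a * b) := by
          have := hreg (a * b)
          rwa [show (a * b)⁻¹ = b⁻¹ * a⁻¹ by group, ← hw] at this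
        calc Γ a * Γ b = σ a b • (Γ a * Γ a⁻¹ * Γ (a * b)) := hP2
          _ = σ a b • (Γ a * Γ a⁻¹ * (Γ (a * b) * Γ w * Γ (a * b))) := by rw [hregab]
          _ = σ a b • (Γ a * (Γ a⁻¹ * Γ (a * b) * Γ w) * Γ (a * b)) := by
                congr 1; noncomm_ring
          _ = 0 := by rw [← hn, h, mul_zero, zero_mul, smul_zero]
      -- LHS equation : Γ a⁻¹ * Γ a * Γ b * Γ w = σ a b • n
      have eqL : Γ a⁻¹ * Γ a * Γ b * Γ w = σ a b • n := by
        have h4' := h4 a b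
        calc Γ a⁻¹ * Γ a * Γ b * Γ w = (Γ a⁻¹ * Γ a * Γ b) * Γ w := by noncomm_ring
          _ = (σ a b • (Γ a⁻¹ * Γ (a * b))) * Γ w := by rw [h4']
          _ = σ a b • n := by rw [smul_mul_assoc, hn]
      -- RHS equation
      have eqR : Γ a⁻¹ * Γ a * Γ b * Γ w = σ b w • n := by
        have h5' := h5 b w
        rw [show b * w = a⁻¹ by rw [hw]; group, show w⁻¹ = a * b by rw [hw]; group] at h5'
        -- h5' : Γ b * Γ w * Γ (a*b) = σ b w • (Γ a⁻¹ * Γ (a*b))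
        have hregw : Γ w * Γ (a * b) * Γ w = Γ w := by
          have := hreg w
          rwa [show w⁻¹ = a * b by rw [hw]; group] at this
        have step : Γ b * Γ w = σ b w • (Γ a⁻¹ * Γ (a * b) * Γ w) := by
          calc Γ b * Γ w = Γ b * (Γ w * Γ (a * b) * Γ w) := by rw [hregw]
            _ = (Γ b * Γ w * Γ (a * b)) * Γ w := by noncomm_ring
            _ = (σ b w • (Γ a⁻¹ * Γ (a * b))) * Γ w := by rw [h5']
            _ = σ b w • (Γ a⁻¹ * Γ (a * b) * Γ w) := by rw [smul_mul_assoc]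
        calc Γ a⁻¹ * Γ a * Γ b * Γ w = Γ a⁻¹ * Γ a * (Γ b * Γ w) := by noncomm_ring
          _ = Γ a⁻¹ * Γ a * (σ b w • (Γ a⁻¹ * Γ (a * b) * Γ w)) := by rw [step]
          _ = σ b w • (Γ a⁻¹ * Γ a * Γ a⁻¹ * (Γ (a * b) * Γ w)) := by
                rw [mul_smul_comm]; congr 1; noncomm_ring
          _ = σ b w • (Γ a⁻¹ * (Γ (a * b) * Γ w)) := by rw [hreg']
          _ = σ b w • n := by rw [hn]; congr 1; noncomm_ring
      exact hcancel (by rw [← eqL, eqR]) hnne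
  refine ⟨hE1, ?_⟩
  intro a b hs
  have hab : Γ a * Γ b ≠ 0 := hnzmul a b hs
  have h5ab := h5 a b
  have h5' := h5 (a * b) b⁻¹
  rw [show a * b * b⁻¹ = a by group, show (b⁻¹)⁻¹ = b by group] at h5'
  have key : Γ a * Γ b = (σ a b * σ (a * b) b⁻¹) • (Γ a * Γ b) := by
    calc Γ a * Γ b = Γ a * (Γ b * Γ b⁻¹ * Γ b) := by rw [hreg]
      _ = (Γ a * Γ b * Γ b⁻¹) * Γ b := by noncomm_ring
      _ = (σ a b • (Γ (a * b) * Γ b⁻¹)) * Γ b := by rw [h5ab]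
      _ = σ a b • (Γ (a * b) * Γ b⁻¹ * Γ b) := by rw [smul_mul_assoc]
      _ = σ a b • (σ (a * b) b⁻¹ • (Γ a * Γ b)) := by rw [h5']
      _ = (σ a b * σ (a * b) b⁻¹) • (Γ a * Γ b) := by rw [smul_smul]
  have h1' : (1 : κ) • (Γ a * Γ b) = (σ a b * σ (a * b) b⁻¹) • (Γ a * Γ b) := by
    rw [one_smul]; exact key
  have hmain : σ a b * σ (a * b) b⁻¹ = 1 := (hcancel h1' hab).symm
  have hrot : σ (a * b) b⁻¹ = σ b⁻¹ a⁻¹ := by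
    have := hE1 (a * b) b⁻¹
    rwa [show (b⁻¹)⁻¹ * (a * b)⁻¹ = a⁻¹ by group] at this
  rw [← hrot]; exact hmain
theorem even_case_0 {κ G : Type} [Field κ] [Group G] (σ : G → G → κ)
    (E1 : ∀ a b : G, σ a b = σ b (b⁻¹ * a⁻¹)) (x y z : G) :
    dcob σ (permAct (1 : Equiv.Perm (Fin 4)) ((x, y, z) : G × G × G)) = dcob σ ((x, y, z) : G × G × G) := by
  have h0 : ((1 : Equiv.Perm (Fin 4)))⁻¹ 0 = (0 : Fin 4) := by decide
  have h1 : ((1 : Equiv.Perm (Fin 4)))⁻¹ 1 = (1 : Fin 4) := by decide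
  have h2 : ((1 : Equiv.Perm (Fin 4)))⁻¹ 2 = (2 : Fin 4) := by decide
  have h3 : ((1 : Equiv.Perm (Fin 4)))⁻¹ 3 = (3 : Fin 4) := by decide
  have hp : permAct (1 : Equiv.Perm (Fin 4)) ((x, y, z) : G × G × G) = (x, y, z) := by
    simp only [permAct, h0, h1, h2, h3]
    refine Prod.ext ?_ (Prod.ext ?_ ?_) <;>
      simp only [Matrix.cons_val_zero, Matrix.cons_val_one, Matrix.head_cons,
        Matrix.cons_val_two, Matrix.tail_cons, Matrix.cons_val_three] <;> group
  rw [hp]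

theorem even_case_1 {κ G : Type} [Field κ] [Group G] (σ : G → G → κ)
    (E1 : ∀ a b : G, σ a b = σ b (b⁻¹ * a⁻¹)) (x y z : G) :
    dcob σ (permAct (Equiv.swap 0 1 * Equiv.swap 2 3 : Equiv.Perm (Fin 4)) ((x, y, z) : G × G × G)) = dcob σ ((x, y, z) : G × G × G) := by
  have h0 : ((Equiv.swap 0 1 * Equiv.swap 2 3 : Equiv.Perm (Fin 4)))⁻¹ 0 = (1 : Fin 4) := by decide
  have h1 : ((Equiv.swap 0 1 * Equiv.swap 2 3 : Equiv.Perm (Fin 4)))⁻¹ 1 = (0 : Fin 4) := by decide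
  have h2 : ((Equiv.swap 0 1 * Equiv.swap 2 3 : Equiv.Perm (Fin 4)))⁻¹ 2 = (3 : Fin 4) := by decide
  have h3 : ((Equiv.swap 0 1 * Equiv.swap 2 3 : Equiv.Perm (Fin 4)))⁻¹ 3 = (2 : Fin 4) := by decide
  have hp : permAct (Equiv.swap 0 1 * Equiv.swap 2 3 : Equiv.Perm (Fin 4)) ((x, y, z) : G × G × G) = (x⁻¹, (x * y * z), z⁻¹) := by
    simp only [permAct, h0, h1, h2, h3]
    refine Prod.ext ?_ (Prod.ext ?_ ?_) <;>
      simp only [Matrix.cons_val_zero, Matrix.cons_val_one, Matrix.head_cons,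
        Matrix.cons_val_two, Matrix.tail_cons, Matrix.cons_val_three] <;> group
  rw [hp]
  have hL : dcob σ ((x⁻¹, (x * y * z), z⁻¹) : G × G × G) = σ x⁻¹ (x * y * z) * σ (x⁻¹ * (x * y * z)) z⁻¹ * σ ((z⁻¹)⁻¹ * ((x * y * z))⁻¹) (x⁻¹)⁻¹ * σ (z⁻¹)⁻¹ ((x * y * z))⁻¹ := rfl
  have hR : dcob σ ((x, y, z) : G × G × G) = σ x y * σ (x * y) z * σ (z⁻¹ * y⁻¹) x⁻¹ * σ z⁻¹ y⁻¹ := rfl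
  rw [hL, hR]
  rw [show σ x⁻¹ (x * y * z) = σ (z⁻¹ * y⁻¹) (x⁻¹) from rot1' σ E1 (by group) (by group)]
  rw [show σ (x⁻¹ * (x * y * z)) z⁻¹ = σ (z⁻¹) (y⁻¹) from rot2' σ E1 (by group) (by group)]
  rw [show σ ((z⁻¹)⁻¹ * ((x * y * z))⁻¹) (x⁻¹)⁻¹ = σ (x) (y) from rot2' σ E1 (by group) (by group)]
  rw [show σ (z⁻¹)⁻¹ ((x * y * z))⁻¹ = σ (x * y) (z) from rot1' σ E1 (by group) (by group)]
  ring

theorem even_case_2 {κ G : Type} [Field κ] [Group G] (σ : G → G → κ)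
    (E1 : ∀ a b : G, σ a b = σ b (b⁻¹ * a⁻¹)) (x y z : G) :
    dcob σ (permAct (Equiv.swap 0 2 * Equiv.swap 1 3 : Equiv.Perm (Fin 4)) ((x, y, z) : G × G × G)) = dcob σ ((x, y, z) : G × G × G) := by
  have h0 : ((Equiv.swap 0 2 * Equiv.swap 1 3 : Equiv.Perm (Fin 4)))⁻¹ 0 = (2 : Fin 4) := by decide
  have h1 : ((Equiv.swap 0 2 * Equiv.swap 1 3 : Equiv.Perm (Fin 4)))⁻¹ 1 = (3 : Fin 4) := by decide
  have h2 : ((Equiv.swap 0 2 * Equiv.swap 1 3 : Equiv.Perm (Fin 4)))⁻¹ 2 = (0 : Fin 4) := by decide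
  have h3 : ((Equiv.swap 0 2 * Equiv.swap 1 3 : Equiv.Perm (Fin 4)))⁻¹ 3 = (1 : Fin 4) := by decide
  have hp : permAct (Equiv.swap 0 2 * Equiv.swap 1 3 : Equiv.Perm (Fin 4)) ((x, y, z) : G × G × G) = (z, (z⁻¹ * y⁻¹ * x⁻¹), x) := by
    simp only [permAct, h0, h1, h2, h3]
    refine Prod.ext ?_ (Prod.ext ?_ ?_) <;>
      simp only [Matrix.cons_val_zero, Matrix.cons_val_one, Matrix.head_cons,
        Matrix.cons_val_two, Matrix.tail_cons, Matrix.cons_val_three] <;> group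
  rw [hp]
  have hL : dcob σ ((z, (z⁻¹ * y⁻¹ * x⁻¹), x) : G × G × G) = σ z (z⁻¹ * y⁻¹ * x⁻¹) * σ (z * (z⁻¹ * y⁻¹ * x⁻¹)) x * σ ((x)⁻¹ * ((z⁻¹ * y⁻¹ * x⁻¹))⁻¹) (z)⁻¹ * σ (x)⁻¹ ((z⁻¹ * y⁻¹ * x⁻¹))⁻¹ := rfl
  have hR : dcob σ ((x, y, z) : G × G × G) = σ x y * σ (x * y) z * σ (z⁻¹ * y⁻¹) x⁻¹ * σ z⁻¹ y⁻¹ := rfl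
  rw [hL, hR]
  rw [show σ z (z⁻¹ * y⁻¹ * x⁻¹) = σ (x * y) (z) from rot1' σ E1 (by group) (by group)]
  rw [show σ (z * (z⁻¹ * y⁻¹ * x⁻¹)) x = σ (x) (y) from rot2' σ E1 (by group) (by group)]
  rw [show σ ((x)⁻¹ * ((z⁻¹ * y⁻¹ * x⁻¹))⁻¹) (z)⁻¹ = σ (z⁻¹) (y⁻¹) from rot2' σ E1 (by group) (by group)]
  rw [show σ (x)⁻¹ ((z⁻¹ * y⁻¹ * x⁻¹))⁻¹ = σ (z⁻¹ * y⁻¹) (x⁻¹) from rot1' σ E1 (by group) (by group)]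
  ring

theorem even_case_3 {κ G : Type} [Field κ] [Group G] (σ : G → G → κ)
    (E1 : ∀ a b : G, σ a b = σ b (b⁻¹ * a⁻¹)) (x y z : G) :
    dcob σ (permAct (Equiv.swap 0 3 * Equiv.swap 1 2 : Equiv.Perm (Fin 4)) ((x, y, z) : G × G × G)) = dcob σ ((x, y, z) : G × G × G) := by
  have h0 : ((Equiv.swap 0 3 * Equiv.swap 1 2 : Equiv.Perm (Fin 4)))⁻¹ 0 = (3 : Fin 4) := by decide
  have h1 : ((Equiv.swap 0 3 * Equiv.swap 1 2 : Equiv.Perm (Fin 4)))⁻¹ 1 = (2 : Fin 4) := by decide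
  have h2 : ((Equiv.swap 0 3 * Equiv.swap 1 2 : Equiv.Perm (Fin 4)))⁻¹ 2 = (1 : Fin 4) := by decide
  have h3 : ((Equiv.swap 0 3 * Equiv.swap 1 2 : Equiv.Perm (Fin 4)))⁻¹ 3 = (0 : Fin 4) := by decide
  have hp : permAct (Equiv.swap 0 3 * Equiv.swap 1 2 : Equiv.Perm (Fin 4)) ((x, y, z) : G × G × G) = (z⁻¹, y⁻¹, x⁻¹) := by
    simp only [permAct, h0, h1, h2, h3]
    refine Prod.ext ?_ (Prod.ext ?_ ?_) <;>
      simp only [Matrix.cons_val_zero, Matrix.cons_val_one, Matrix.head_cons,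
        Matrix.cons_val_two, Matrix.tail_cons, Matrix.cons_val_three] <;> group
  rw [hp]
  have hL : dcob σ ((z⁻¹, y⁻¹, x⁻¹) : G × G × G) = σ z⁻¹ y⁻¹ * σ (z⁻¹ * y⁻¹) x⁻¹ * σ ((x⁻¹)⁻¹ * (y⁻¹)⁻¹) (z⁻¹)⁻¹ * σ (x⁻¹)⁻¹ (y⁻¹)⁻¹ := rfl
  have hR : dcob σ ((x, y, z) : G × G × G) = σ x y * σ (x * y) z * σ (z⁻¹ * y⁻¹) x⁻¹ * σ z⁻¹ y⁻¹ := rfl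
  rw [hL, hR]
  rw [show σ ((x⁻¹)⁻¹ * (y⁻¹)⁻¹) (z⁻¹)⁻¹ = σ (x * y) (z) from rot0' σ (by group) (by group)]
  rw [show σ (x⁻¹)⁻¹ (y⁻¹)⁻¹ = σ (x) (y) from rot0' σ (by group) (by group)]
  ring

theorem even_case_4 {κ G : Type} [Field κ] [Group G] (σ : G → G → κ)
    (E1 : ∀ a b : G, σ a b = σ b (b⁻¹ * a⁻¹)) (x y z : G) :
    dcob σ (permAct (Equiv.swap 0 2 * Equiv.swap 0 1 : Equiv.Perm (Fin 4)) ((x, y, z) : G × G × G)) = dcob σ ((x, y, z) : G × G × G) := by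
  have h0 : ((Equiv.swap 0 2 * Equiv.swap 0 1 : Equiv.Perm (Fin 4)))⁻¹ 0 = (2 : Fin 4) := by decide
  have h1 : ((Equiv.swap 0 2 * Equiv.swap 0 1 : Equiv.Perm (Fin 4)))⁻¹ 1 = (0 : Fin 4) := by decide
  have h2 : ((Equiv.swap 0 2 * Equiv.swap 0 1 : Equiv.Perm (Fin 4)))⁻¹ 2 = (1 : Fin 4) := by decide
  have h3 : ((Equiv.swap 0 2 * Equiv.swap 0 1 : Equiv.Perm (Fin 4)))⁻¹ 3 = (3 : Fin 4) := by decide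
  have hp : permAct (Equiv.swap 0 2 * Equiv.swap 0 1 : Equiv.Perm (Fin 4)) ((x, y, z) : G × G × G) = ((y⁻¹ * x⁻¹), x, (y * z)) := by
    simp only [permAct, h0, h1, h2, h3]
    refine Prod.ext ?_ (Prod.ext ?_ ?_) <;>
      simp only [Matrix.cons_val_zero, Matrix.cons_val_one, Matrix.head_cons,
        Matrix.cons_val_two, Matrix.tail_cons, Matrix.cons_val_three] <;> group
  rw [hp]
  have hL : dcob σ (((y⁻¹ * x⁻¹), x, (y * z)) : G × G × G) = σ (y⁻¹ * x⁻¹) x * σ ((y⁻¹ * x⁻¹) * x) (y * z) * σ (((y * z))⁻¹ * (x)⁻¹) ((y⁻¹ * x⁻¹))⁻¹ * σ ((y * z))⁻¹ (x)⁻¹ := rfl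
  have hR : dcob σ ((x, y, z) : G × G × G) = σ x y * σ (x * y) z * σ (z⁻¹ * y⁻¹) x⁻¹ * σ z⁻¹ y⁻¹ := rfl
  rw [hL, hR]
  rw [show σ (y⁻¹ * x⁻¹) x = σ (x) (y) from rot2' σ E1 (by group) (by group)]
  rw [show σ ((y⁻¹ * x⁻¹) * x) (y * z) = σ (z⁻¹) (y⁻¹) from rot1' σ E1 (by group) (by group)]
  rw [show σ (((y * z))⁻¹ * (x)⁻¹) ((y⁻¹ * x⁻¹))⁻¹ = σ (x * y) (z) from rot2' σ E1 (by group) (by group)]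
  rw [show σ ((y * z))⁻¹ (x)⁻¹ = σ (z⁻¹ * y⁻¹) (x⁻¹) from rot0' σ (by group) (by group)]
  ring

theorem even_case_5 {κ G : Type} [Field κ] [Group G] (σ : G → G → κ)
    (E1 : ∀ a b : G, σ a b = σ b (b⁻¹ * a⁻¹)) (x y z : G) :
    dcob σ (permAct (Equiv.swap 0 1 * Equiv.swap 0 2 : Equiv.Perm (Fin 4)) ((x, y, z) : G × G × G)) = dcob σ ((x, y, z) : G × G × G) := by
  have h0 : ((Equiv.swap 0 1 * Equiv.swap 0 2 : Equiv.Perm (Fin 4)))⁻¹ 0 = (1 : Fin 4) := by decide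
  have h1 : ((Equiv.swap 0 1 * Equiv.swap 0 2 : Equiv.Perm (Fin 4)))⁻¹ 1 = (2 : Fin 4) := by decide
  have h2 : ((Equiv.swap 0 1 * Equiv.swap 0 2 : Equiv.Perm (Fin 4)))⁻¹ 2 = (0 : Fin 4) := by decide
  have h3 : ((Equiv.swap 0 1 * Equiv.swap 0 2 : Equiv.Perm (Fin 4)))⁻¹ 3 = (3 : Fin 4) := by decide
  have hp : permAct (Equiv.swap 0 1 * Equiv.swap 0 2 : Equiv.Perm (Fin 4)) ((x, y, z) : G × G × G) = (y, (y⁻¹ * x⁻¹), (x * y * z)) := by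
    simp only [permAct, h0, h1, h2, h3]
    refine Prod.ext ?_ (Prod.ext ?_ ?_) <;>
      simp only [Matrix.cons_val_zero, Matrix.cons_val_one, Matrix.head_cons,
        Matrix.cons_val_two, Matrix.tail_cons, Matrix.cons_val_three] <;> group
  rw [hp]
  have hL : dcob σ ((y, (y⁻¹ * x⁻¹), (x * y * z)) : G × G × G) = σ y (y⁻¹ * x⁻¹) * σ (y * (y⁻¹ * x⁻¹)) (x * y * z) * σ (((x * y * z))⁻¹ * ((y⁻¹ * x⁻¹))⁻¹) (y)⁻¹ * σ ((x * y * z))⁻¹ ((y⁻¹ * x⁻¹))⁻¹ := rfl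
  have hR : dcob σ ((x, y, z) : G × G × G) = σ x y * σ (x * y) z * σ (z⁻¹ * y⁻¹) x⁻¹ * σ z⁻¹ y⁻¹ := rfl
  rw [hL, hR]
  rw [show σ y (y⁻¹ * x⁻¹) = σ (x) (y) from rot1' σ E1 (by group) (by group)]
  rw [show σ (y * (y⁻¹ * x⁻¹)) (x * y * z) = σ (z⁻¹ * y⁻¹) (x⁻¹) from rot1' σ E1 (by group) (by group)]
  rw [show σ (((x * y * z))⁻¹ * ((y⁻¹ * x⁻¹))⁻¹) (y)⁻¹ = σ (z⁻¹) (y⁻¹) from rot0' σ (by group) (by group)]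
  rw [show σ ((x * y * z))⁻¹ ((y⁻¹ * x⁻¹))⁻¹ = σ (x * y) (z) from rot2' σ E1 (by group) (by group)]
  ring

theorem even_case_6 {κ G : Type} [Field κ] [Group G] (σ : G → G → κ)
    (E1 : ∀ a b : G, σ a b = σ b (b⁻¹ * a⁻¹)) (x y z : G) :
    dcob σ (permAct (Equiv.swap 0 3 * Equiv.swap 0 1 : Equiv.Perm (Fin 4)) ((x, y, z) : G × G × G)) = dcob σ ((x, y, z) : G × G × G) := by
  have h0 : ((Equiv.swap 0 3 * Equiv.swap 0 1 : Equiv.Perm (Fin 4)))⁻¹ 0 = (3 : Fin 4) := by decide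
  have h1 : ((Equiv.swap 0 3 * Equiv.swap 0 1 : Equiv.Perm (Fin 4)))⁻¹ 1 = (0 : Fin 4) := by decide
  have h2 : ((Equiv.swap 0 3 * Equiv.swap 0 1 : Equiv.Perm (Fin 4)))⁻¹ 2 = (2 : Fin 4) := by decide
  have h3 : ((Equiv.swap 0 3 * Equiv.swap 0 1 : Equiv.Perm (Fin 4)))⁻¹ 3 = (1 : Fin 4) := by decide
  have hp : permAct (Equiv.swap 0 3 * Equiv.swap 0 1 : Equiv.Perm (Fin 4)) ((x, y, z) : G × G × G) = ((z⁻¹ * y⁻¹ * x⁻¹), (x * y), y⁻¹) := by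
    simp only [permAct, h0, h1, h2, h3]
    refine Prod.ext ?_ (Prod.ext ?_ ?_) <;>
      simp only [Matrix.cons_val_zero, Matrix.cons_val_one, Matrix.head_cons,
        Matrix.cons_val_two, Matrix.tail_cons, Matrix.cons_val_three] <;> group
  rw [hp]
  have hL : dcob σ (((z⁻¹ * y⁻¹ * x⁻¹), (x * y), y⁻¹) : G × G × G) = σ (z⁻¹ * y⁻¹ * x⁻¹) (x * y) * σ ((z⁻¹ * y⁻¹ * x⁻¹) * (x * y)) y⁻¹ * σ ((y⁻¹)⁻¹ * ((x * y))⁻¹) ((z⁻¹ * y⁻¹ * x⁻¹))⁻¹ * σ (y⁻¹)⁻¹ ((x * y))⁻¹ := rfl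
  have hR : dcob σ ((x, y, z) : G × G × G) = σ x y * σ (x * y) z * σ (z⁻¹ * y⁻¹) x⁻¹ * σ z⁻¹ y⁻¹ := rfl
  rw [hL, hR]
  rw [show σ (z⁻¹ * y⁻¹ * x⁻¹) (x * y) = σ (x * y) (z) from rot2' σ E1 (by group) (by group)]
  rw [show σ ((z⁻¹ * y⁻¹ * x⁻¹) * (x * y)) y⁻¹ = σ (z⁻¹) (y⁻¹) from rot0' σ (by group) (by group)]
  rw [show σ ((y⁻¹)⁻¹ * ((x * y))⁻¹) ((z⁻¹ * y⁻¹ * x⁻¹))⁻¹ = σ (z⁻¹ * y⁻¹) (x⁻¹) from rot1' σ E1 (by group) (by group)]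
  rw [show σ (y⁻¹)⁻¹ ((x * y))⁻¹ = σ (x) (y) from rot1' σ E1 (by group) (by group)]
  ring

theorem even_case_7 {κ G : Type} [Field κ] [Group G] (σ : G → G → κ)
    (E1 : ∀ a b : G, σ a b = σ b (b⁻¹ * a⁻¹)) (x y z : G) :
    dcob σ (permAct (Equiv.swap 0 1 * Equiv.swap 0 3 : Equiv.Perm (Fin 4)) ((x, y, z) : G × G × G)) = dcob σ ((x, y, z) : G × G × G) := by
  have h0 : ((Equiv.swap 0 1 * Equiv.swap 0 3 : Equiv.Perm (Fin 4)))⁻¹ 0 = (1 : Fin 4) := by decide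
  have h1 : ((Equiv.swap 0 1 * Equiv.swap 0 3 : Equiv.Perm (Fin 4)))⁻¹ 1 = (3 : Fin 4) := by decide
  have h2 : ((Equiv.swap 0 1 * Equiv.swap 0 3 : Equiv.Perm (Fin 4)))⁻¹ 2 = (2 : Fin 4) := by decide
  have h3 : ((Equiv.swap 0 1 * Equiv.swap 0 3 : Equiv.Perm (Fin 4)))⁻¹ 3 = (0 : Fin 4) := by decide
  have hp : permAct (Equiv.swap 0 1 * Equiv.swap 0 3 : Equiv.Perm (Fin 4)) ((x, y, z) : G × G × G) = ((y * z), z⁻¹, (y⁻¹ * x⁻¹)) := by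
    simp only [permAct, h0, h1, h2, h3]
    refine Prod.ext ?_ (Prod.ext ?_ ?_) <;>
      simp only [Matrix.cons_val_zero, Matrix.cons_val_one, Matrix.head_cons,
        Matrix.cons_val_two, Matrix.tail_cons, Matrix.cons_val_three] <;> group
  rw [hp]
  have hL : dcob σ (((y * z), z⁻¹, (y⁻¹ * x⁻¹)) : G × G × G) = σ (y * z) z⁻¹ * σ ((y * z) * z⁻¹) (y⁻¹ * x⁻¹) * σ (((y⁻¹ * x⁻¹))⁻¹ * (z⁻¹)⁻¹) ((y * z))⁻¹ * σ ((y⁻¹ * x⁻¹))⁻¹ (z⁻¹)⁻¹ := rfl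
  have hR : dcob σ ((x, y, z) : G × G × G) = σ x y * σ (x * y) z * σ (z⁻¹ * y⁻¹) x⁻¹ * σ z⁻¹ y⁻¹ := rfl
  rw [hL, hR]
  rw [show σ (y * z) z⁻¹ = σ (z⁻¹) (y⁻¹) from rot2' σ E1 (by group) (by group)]
  rw [show σ ((y * z) * z⁻¹) (y⁻¹ * x⁻¹) = σ (x) (y) from rot1' σ E1 (by group) (by group)]
  rw [show σ (((y⁻¹ * x⁻¹))⁻¹ * (z⁻¹)⁻¹) ((y * z))⁻¹ = σ (z⁻¹ * y⁻¹) (x⁻¹) from rot2' σ E1 (by group) (by group)]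
  rw [show σ ((y⁻¹ * x⁻¹))⁻¹ (z⁻¹)⁻¹ = σ (x * y) (z) from rot0' σ (by group) (by group)]
  ring

theorem even_case_8 {κ G : Type} [Field κ] [Group G] (σ : G → G → κ)
    (E1 : ∀ a b : G, σ a b = σ b (b⁻¹ * a⁻¹)) (x y z : G) :
    dcob σ (permAct (Equiv.swap 0 3 * Equiv.swap 0 2 : Equiv.Perm (Fin 4)) ((x, y, z) : G × G × G)) = dcob σ ((x, y, z) : G × G × G) := by
  have h0 : ((Equiv.swap 0 3 * Equiv.swap 0 2 : Equiv.Perm (Fin 4)))⁻¹ 0 = (3 : Fin 4) := by decide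
  have h1 : ((Equiv.swap 0 3 * Equiv.swap 0 2 : Equiv.Perm (Fin 4)))⁻¹ 1 = (1 : Fin 4) := by decide
  have h2 : ((Equiv.swap 0 3 * Equiv.swap 0 2 : Equiv.Perm (Fin 4)))⁻¹ 2 = (0 : Fin 4) := by decide
  have h3 : ((Equiv.swap 0 3 * Equiv.swap 0 2 : Equiv.Perm (Fin 4)))⁻¹ 3 = (2 : Fin 4) := by decide
  have hp : permAct (Equiv.swap 0 3 * Equiv.swap 0 2 : Equiv.Perm (Fin 4)) ((x, y, z) : G × G × G) = ((z⁻¹ * y⁻¹), x⁻¹, (x * y)) := by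
    simp only [permAct, h0, h1, h2, h3]
    refine Prod.ext ?_ (Prod.ext ?_ ?_) <;>
      simp only [Matrix.cons_val_zero, Matrix.cons_val_one, Matrix.head_cons,
        Matrix.cons_val_two, Matrix.tail_cons, Matrix.cons_val_three] <;> group
  rw [hp]
  have hL : dcob σ (((z⁻¹ * y⁻¹), x⁻¹, (x * y)) : G × G × G) = σ (z⁻¹ * y⁻¹) x⁻¹ * σ ((z⁻¹ * y⁻¹) * x⁻¹) (x * y) * σ (((x * y))⁻¹ * (x⁻¹)⁻¹) ((z⁻¹ * y⁻¹))⁻¹ * σ ((x * y))⁻¹ (x⁻¹)⁻¹ := rfl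
  have hR : dcob σ ((x, y, z) : G × G × G) = σ x y * σ (x * y) z * σ (z⁻¹ * y⁻¹) x⁻¹ * σ z⁻¹ y⁻¹ := rfl
  rw [hL, hR]
  rw [show σ ((z⁻¹ * y⁻¹) * x⁻¹) (x * y) = σ (x * y) (z) from rot2' σ E1 (by group) (by group)]
  rw [show σ (((x * y))⁻¹ * (x⁻¹)⁻¹) ((z⁻¹ * y⁻¹))⁻¹ = σ (z⁻¹) (y⁻¹) from rot1' σ E1 (by group) (by group)]
  rw [show σ ((x * y))⁻¹ (x⁻¹)⁻¹ = σ (x) (y) from rot2' σ E1 (by group) (by group)]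
  ring

theorem even_case_9 {κ G : Type} [Field κ] [Group G] (σ : G → G → κ)
    (E1 : ∀ a b : G, σ a b = σ b (b⁻¹ * a⁻¹)) (x y z : G) :
    dcob σ (permAct (Equiv.swap 0 2 * Equiv.swap 0 3 : Equiv.Perm (Fin 4)) ((x, y, z) : G × G × G)) = dcob σ ((x, y, z) : G × G × G) := by
  have h0 : ((Equiv.swap 0 2 * Equiv.swap 0 3 : Equiv.Perm (Fin 4)))⁻¹ 0 = (2 : Fin 4) := by decide
  have h1 : ((Equiv.swap 0 2 * Equiv.swap 0 3 : Equiv.Perm (Fin 4)))⁻¹ 1 = (1 : Fin 4) := by decide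
  have h2 : ((Equiv.swap 0 2 * Equiv.swap 0 3 : Equiv.Perm (Fin 4)))⁻¹ 2 = (3 : Fin 4) := by decide
  have h3 : ((Equiv.swap 0 2 * Equiv.swap 0 3 : Equiv.Perm (Fin 4)))⁻¹ 3 = (0 : Fin 4) := by decide
  have hp : permAct (Equiv.swap 0 2 * Equiv.swap 0 3 : Equiv.Perm (Fin 4)) ((x, y, z) : G × G × G) = (y⁻¹, (y * z), (z⁻¹ * y⁻¹ * x⁻¹)) := by
    simp only [permAct, h0, h1, h2, h3]
    refine Prod.ext ?_ (Prod.ext ?_ ?_) <;>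
      simp only [Matrix.cons_val_zero, Matrix.cons_val_one, Matrix.head_cons,
        Matrix.cons_val_two, Matrix.tail_cons, Matrix.cons_val_three] <;> group
  rw [hp]
  have hL : dcob σ ((y⁻¹, (y * z), (z⁻¹ * y⁻¹ * x⁻¹)) : G × G × G) = σ y⁻¹ (y * z) * σ (y⁻¹ * (y * z)) (z⁻¹ * y⁻¹ * x⁻¹) * σ (((z⁻¹ * y⁻¹ * x⁻¹))⁻¹ * ((y * z))⁻¹) (y⁻¹)⁻¹ * σ ((z⁻¹ * y⁻¹ * x⁻¹))⁻¹ ((y * z))⁻¹ := rfl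
  have hR : dcob σ ((x, y, z) : G × G × G) = σ x y * σ (x * y) z * σ (z⁻¹ * y⁻¹) x⁻¹ * σ z⁻¹ y⁻¹ := rfl
  rw [hL, hR]
  rw [show σ y⁻¹ (y * z) = σ (z⁻¹) (y⁻¹) from rot1' σ E1 (by group) (by group)]
  rw [show σ (y⁻¹ * (y * z)) (z⁻¹ * y⁻¹ * x⁻¹) = σ (x * y) (z) from rot1' σ E1 (by group) (by group)]
  rw [show σ (((z⁻¹ * y⁻¹ * x⁻¹))⁻¹ * ((y * z))⁻¹) (y⁻¹)⁻¹ = σ (x) (y) from rot0' σ (by group) (by group)]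
  rw [show σ ((z⁻¹ * y⁻¹ * x⁻¹))⁻¹ ((y * z))⁻¹ = σ (z⁻¹ * y⁻¹) (x⁻¹) from rot2' σ E1 (by group) (by group)]
  ring

theorem even_case_10 {κ G : Type} [Field κ] [Group G] (σ : G → G → κ)
    (E1 : ∀ a b : G, σ a b = σ b (b⁻¹ * a⁻¹)) (x y z : G) :
    dcob σ (permAct (Equiv.swap 1 3 * Equiv.swap 1 2 : Equiv.Perm (Fin 4)) ((x, y, z) : G × G × G)) = dcob σ ((x, y, z) : G × G × G) := by
  have h0 : ((Equiv.swap 1 3 * Equiv.swap 1 2 : Equiv.Perm (Fin 4)))⁻¹ 0 = (0 : Fin 4) := by decide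
  have h1 : ((Equiv.swap 1 3 * Equiv.swap 1 2 : Equiv.Perm (Fin 4)))⁻¹ 1 = (3 : Fin 4) := by decide
  have h2 : ((Equiv.swap 1 3 * Equiv.swap 1 2 : Equiv.Perm (Fin 4)))⁻¹ 2 = (1 : Fin 4) := by decide
  have h3 : ((Equiv.swap 1 3 * Equiv.swap 1 2 : Equiv.Perm (Fin 4)))⁻¹ 3 = (2 : Fin 4) := by decide
  have hp : permAct (Equiv.swap 1 3 * Equiv.swap 1 2 : Equiv.Perm (Fin 4)) ((x, y, z) : G × G × G) = ((x * y * z), (z⁻¹ * y⁻¹), y) := by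
    simp only [permAct, h0, h1, h2, h3]
    refine Prod.ext ?_ (Prod.ext ?_ ?_) <;>
      simp only [Matrix.cons_val_zero, Matrix.cons_val_one, Matrix.head_cons,
        Matrix.cons_val_two, Matrix.tail_cons, Matrix.cons_val_three] <;> group
  rw [hp]
  have hL : dcob σ (((x * y * z), (z⁻¹ * y⁻¹), y) : G × G × G) = σ (x * y * z) (z⁻¹ * y⁻¹) * σ ((x * y * z) * (z⁻¹ * y⁻¹)) y * σ ((y)⁻¹ * ((z⁻¹ * y⁻¹))⁻¹) ((x * y * z))⁻¹ * σ (y)⁻¹ ((z⁻¹ * y⁻¹))⁻¹ := rfl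
  have hR : dcob σ ((x, y, z) : G × G × G) = σ x y * σ (x * y) z * σ (z⁻¹ * y⁻¹) x⁻¹ * σ z⁻¹ y⁻¹ := rfl
  rw [hL, hR]
  rw [show σ (x * y * z) (z⁻¹ * y⁻¹) = σ (z⁻¹ * y⁻¹) (x⁻¹) from rot2' σ E1 (by group) (by group)]
  rw [show σ ((x * y * z) * (z⁻¹ * y⁻¹)) y = σ (x) (y) from rot0' σ (by group) (by group)]
  rw [show σ ((y)⁻¹ * ((z⁻¹ * y⁻¹))⁻¹) ((x * y * z))⁻¹ = σ (x * y) (z) from rot1' σ E1 (by group) (by group)]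
  rw [show σ (y)⁻¹ ((z⁻¹ * y⁻¹))⁻¹ = σ (z⁻¹) (y⁻¹) from rot1' σ E1 (by group) (by group)]
  ring

theorem even_case_11 {κ G : Type} [Field κ] [Group G] (σ : G → G → κ)
    (E1 : ∀ a b : G, σ a b = σ b (b⁻¹ * a⁻¹)) (x y z : G) :
    dcob σ (permAct (Equiv.swap 1 2 * Equiv.swap 1 3 : Equiv.Perm (Fin 4)) ((x, y, z) : G × G × G)) = dcob σ ((x, y, z) : G × G × G) := by
  have h0 : ((Equiv.swap 1 2 * Equiv.swap 1 3 : Equiv.Perm (Fin 4)))⁻¹ 0 = (0 : Fin 4) := by decide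
  have h1 : ((Equiv.swap 1 2 * Equiv.swap 1 3 : Equiv.Perm (Fin 4)))⁻¹ 1 = (2 : Fin 4) := by decide
  have h2 : ((Equiv.swap 1 2 * Equiv.swap 1 3 : Equiv.Perm (Fin 4)))⁻¹ 2 = (3 : Fin 4) := by decide
  have h3 : ((Equiv.swap 1 2 * Equiv.swap 1 3 : Equiv.Perm (Fin 4)))⁻¹ 3 = (1 : Fin 4) := by decide
  have hp : permAct (Equiv.swap 1 2 * Equiv.swap 1 3 : Equiv.Perm (Fin 4)) ((x, y, z) : G × G × G) = ((x * y), z, (z⁻¹ * y⁻¹)) := by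
    simp only [permAct, h0, h1, h2, h3]
    refine Prod.ext ?_ (Prod.ext ?_ ?_) <;>
      simp only [Matrix.cons_val_zero, Matrix.cons_val_one, Matrix.head_cons,
        Matrix.cons_val_two, Matrix.tail_cons, Matrix.cons_val_three] <;> group
  rw [hp]
  have hL : dcob σ (((x * y), z, (z⁻¹ * y⁻¹)) : G × G × G) = σ (x * y) z * σ ((x * y) * z) (z⁻¹ * y⁻¹) * σ (((z⁻¹ * y⁻¹))⁻¹ * (z)⁻¹) ((x * y))⁻¹ * σ ((z⁻¹ * y⁻¹))⁻¹ (z)⁻¹ := rfl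
  have hR : dcob σ ((x, y, z) : G × G × G) = σ x y * σ (x * y) z * σ (z⁻¹ * y⁻¹) x⁻¹ * σ z⁻¹ y⁻¹ := rfl
  rw [hL, hR]
  rw [show σ ((x * y) * z) (z⁻¹ * y⁻¹) = σ (z⁻¹ * y⁻¹) (x⁻¹) from rot2' σ E1 (by group) (by group)]
  rw [show σ (((z⁻¹ * y⁻¹))⁻¹ * (z)⁻¹) ((x * y))⁻¹ = σ (x) (y) from rot1' σ E1 (by group) (by group)]
  rw [show σ ((z⁻¹ * y⁻¹))⁻¹ (z)⁻¹ = σ (z⁻¹) (y⁻¹) from rot2' σ E1 (by group) (by group)]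
  ring

theorem even_enum : ∀ γ : Equiv.Perm (Fin 4), Equiv.Perm.sign γ = 1 →
    γ = (1 : Equiv.Perm (Fin 4)) ∨
      γ = (Equiv.swap 0 1 * Equiv.swap 2 3 : Equiv.Perm (Fin 4)) ∨
      γ = (Equiv.swap 0 2 * Equiv.swap 1 3 : Equiv.Perm (Fin 4)) ∨
      γ = (Equiv.swap 0 3 * Equiv.swap 1 2 : Equiv.Perm (Fin 4)) ∨
      γ = (Equiv.swap 0 2 * Equiv.swap 0 1 : Equiv.Perm (Fin 4)) ∨
      γ = (Equiv.swap 0 1 * Equiv.swap 0 2 : Equiv.Perm (Fin 4)) ∨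
      γ = (Equiv.swap 0 3 * Equiv.swap 0 1 : Equiv.Perm (Fin 4)) ∨
      γ = (Equiv.swap 0 1 * Equiv.swap 0 3 : Equiv.Perm (Fin 4)) ∨
      γ = (Equiv.swap 0 3 * Equiv.swap 0 2 : Equiv.Perm (Fin 4)) ∨
      γ = (Equiv.swap 0 2 * Equiv.swap 0 3 : Equiv.Perm (Fin 4)) ∨
      γ = (Equiv.swap 1 3 * Equiv.swap 1 2 : Equiv.Perm (Fin 4)) ∨
      γ = (Equiv.swap 1 2 * Equiv.swap 1 3 : Equiv.Perm (Fin 4)) := by decide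

-- assembly:
--  rcases even_enum γ hγ with rfl|rfl|rfl|rfl|rfl|rfl|rfl|rfl|rfl|rfl|rfl|rfl
--  exact even_case_0 σ hE1 x y z
--  exact even_case_1 σ hE1 x y z
--  exact even_case_2 σ hE1 x y z
--  exact even_case_3 σ hE1 x y z
--  exact even_case_4 σ hE1 x y z
--  exact even_case_5 σ hE1 x y z
--  exact even_case_6 σ hE1 x y z
--  exact even_case_7 σ hE1 x y z
--  exact even_case_8 σ hE1 x y z
--  exact even_case_9 σ hE1 x y z
--  exact even_case_10 σ hE1 x y z
--  exact even_case_11 σ hE1 x y z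

/-- `∂(σ)` is invariant under even permutations in the `S₄`-action, and the odd
permutation `(0,2)` kills/inverts it. -/
theorem stmt_14 {κ G : Type} [Field κ] [IsAlgClosed κ] [Group G]
    (σ : G → G → κ) (hσ : IsFactorSet σ)
    (hnorm : ∀ g : G, σ g g⁻¹ = 0 ∨ σ g g⁻¹ = 1)
    (p : G × G × G) :
    (∀ γ : Equiv.Perm (Fin 4), Equiv.Perm.sign γ = 1 → dcob σ (permAct γ p) = dcob σ p) ∧
    (dcob σ p = 0 ↔ dcob σ (permAct (Equiv.swap 0 2) p) = 0) ∧
    (dcob σ p ≠ 0 → dcob σ (permAct (Equiv.swap 0 2) p) = (dcob σ p)⁻¹) := by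
  obtain ⟨hE1, hE4⟩ := factor_props σ hσ hnorm
  obtain ⟨x, y, z⟩ := p
  have hrev0 : ∀ a b : G, σ a b = 0 ↔ σ b⁻¹ a⁻¹ = 0 := by
    intro a b
    constructor
    · intro h
      by_contra hne
      have h2 := hE4 b⁻¹ a⁻¹ hne
      rw [inv_inv, inv_inv, h, mul_zero] at h2
      exact zero_ne_one h2
    · intro h
      by_contra hne
      have h2 := hE4 a b hne
      rw [h, mul_zero] at h2
      exact zero_ne_one h2
  have hE4' : ∀ a b : G, σ a b ≠ 0 → σ b⁻¹ a⁻¹ = (σ a b)⁻¹ := by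
    intro a b h
    have h2 := hE4 a b h
    exact (inv_eq_of_mul_eq_one_right h2).symm
  -- data for the odd permutation (0 2)
  have hp : permAct (Equiv.swap 0 2) ((x, y, z) : G × G × G) = (y⁻¹, x⁻¹, (x * y * z)) := by
    have h0 : (Equiv.swap 0 2 : Equiv.Perm (Fin 4))⁻¹ 0 = (2 : Fin 4) := by decide
    have h1 : (Equiv.swap 0 2 : Equiv.Perm (Fin 4))⁻¹ 1 = (1 : Fin 4) := by decide
    have h2 : (Equiv.swap 0 2 : Equiv.Perm (Fin 4))⁻¹ 2 = (0 : Fin 4) := by decide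
    have h3 : (Equiv.swap 0 2 : Equiv.Perm (Fin 4))⁻¹ 3 = (3 : Fin 4) := by decide
    simp only [permAct, h0, h1, h2, h3]
    refine Prod.ext ?_ (Prod.ext ?_ ?_) <;>
      simp only [Matrix.cons_val_zero, Matrix.cons_val_one, Matrix.head_cons,
        Matrix.cons_val_two, Matrix.tail_cons, Matrix.cons_val_three] <;> group
  have hL : dcob σ ((y⁻¹, x⁻¹, (x * y * z)) : G × G × G) =
      σ y⁻¹ x⁻¹ * σ (y⁻¹ * x⁻¹) ((x * y * z)) * σ (((x * y * z))⁻¹ * (x⁻¹)⁻¹) (y⁻¹)⁻¹ *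
        σ ((x * y * z))⁻¹ (x⁻¹)⁻¹ := rfl
  have hR : dcob σ ((x, y, z) : G × G × G) =
      σ x y * σ (x * y) z * σ (z⁻¹ * y⁻¹) x⁻¹ * σ z⁻¹ y⁻¹ := rfl
  -- factor 1 : rev of A
  have k1_zero : σ x y = 0 ↔ σ y⁻¹ x⁻¹ = 0 := hrev0 x y
  have k1_inv : σ x y ≠ 0 → σ y⁻¹ x⁻¹ = (σ x y)⁻¹ := hE4' x y
  -- factor 2 : rev of rot2 of B, rep (a',b') = (z⁻¹ * (x*y)⁻¹, x*y)
  have k2_rep : σ (z⁻¹ * (x * y)⁻¹) (x * y) = σ (x * y) z :=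
    rot2' σ hE1 (by group) (by group)
  have k2_congr : σ (y⁻¹ * x⁻¹) ((x * y * z)) = σ ((x * y))⁻¹ ((z⁻¹ * (x * y)⁻¹))⁻¹ :=
    rot0' σ (by group) (by group)
  have k2_zero : σ (x * y) z = 0 ↔ σ (y⁻¹ * x⁻¹) ((x * y * z)) = 0 := by
    rw [k2_congr, ← k2_rep]
    exact hrev0 (z⁻¹ * (x * y)⁻¹) (x * y)
  have k2_inv : σ (x * y) z ≠ 0 → σ (y⁻¹ * x⁻¹) ((x * y * z)) = (σ (x * y) z)⁻¹ := by
    intro h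
    rw [k2_congr, ← k2_rep]
    exact hE4' _ _ (by rw [k2_rep]; exact h)
  -- factor 3 : rev of rot1 of D, rep (a',b') = (y⁻¹, y⁻¹⁻¹ * z⁻¹⁻¹)
  have k3_rep : σ y⁻¹ ((y⁻¹)⁻¹ * (z⁻¹)⁻¹) = σ z⁻¹ y⁻¹ :=
    rot1' σ hE1 (by group) (by group)
  have k3_congr : σ (((x * y * z))⁻¹ * (x⁻¹)⁻¹) (y⁻¹)⁻¹ = σ ((y⁻¹)⁻¹ * (z⁻¹)⁻¹)⁻¹ (y⁻¹)⁻¹ :=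
    rot0' σ (by group) (by group)
  have k3_zero : σ z⁻¹ y⁻¹ = 0 ↔ σ (((x * y * z))⁻¹ * (x⁻¹)⁻¹) (y⁻¹)⁻¹ = 0 := by
    rw [k3_congr, ← k3_rep]
    exact hrev0 y⁻¹ ((y⁻¹)⁻¹ * (z⁻¹)⁻¹)
  have k3_inv : σ z⁻¹ y⁻¹ ≠ 0 → σ (((x * y * z))⁻¹ * (x⁻¹)⁻¹) (y⁻¹)⁻¹ = (σ z⁻¹ y⁻¹)⁻¹ := by
    intro h
    rw [k3_congr, ← k3_rep]
    exact hE4' _ _ (by rw [k3_rep]; exact h)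
  -- factor 4 : rev of rot1 of C, rep (a',b') = (x⁻¹, (x⁻¹)⁻¹ * (z⁻¹ * y⁻¹)⁻¹)
  have k4_rep : σ x⁻¹ ((x⁻¹)⁻¹ * (z⁻¹ * y⁻¹)⁻¹) = σ (z⁻¹ * y⁻¹) x⁻¹ :=
    rot1' σ hE1 (by group) (by group)
  have k4_congr : σ ((x * y * z))⁻¹ (x⁻¹)⁻¹ = σ ((x⁻¹)⁻¹ * (z⁻¹ * y⁻¹)⁻¹)⁻¹ (x⁻¹)⁻¹ :=
    rot0' σ (by group) (by group)
  have k4_zero : σ (z⁻¹ * y⁻¹) x⁻¹ = 0 ↔ σ ((x * y * z))⁻¹ (x⁻¹)⁻¹ = 0 := by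
    rw [k4_congr, ← k4_rep]
    exact hrev0 x⁻¹ ((x⁻¹)⁻¹ * (z⁻¹ * y⁻¹)⁻¹)
  have k4_inv : σ (z⁻¹ * y⁻¹) x⁻¹ ≠ 0 → σ ((x * y * z))⁻¹ (x⁻¹)⁻¹ = (σ (z⁻¹ * y⁻¹) x⁻¹)⁻¹ := by
    intro h
    rw [k4_congr, ← k4_rep]
    exact hE4' _ _ (by rw [k4_rep]; exact h)
  refine ⟨?_, ?_, ?_⟩
  · intro γ hγ
    rcases even_enum γ hγ with rfl | rfl | rfl | rfl | rfl | rfl | rfl | rfl | rfl | rfl | rfl | rfl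
    · exact even_case_0 σ hE1 x y z
    · exact even_case_1 σ hE1 x y z
    · exact even_case_2 σ hE1 x y z
    · exact even_case_3 σ hE1 x y z
    · exact even_case_4 σ hE1 x y z
    · exact even_case_5 σ hE1 x y z
    · exact even_case_6 σ hE1 x y z
    · exact even_case_7 σ hE1 x y z
    · exact even_case_8 σ hE1 x y z
    · exact even_case_9 σ hE1 x y z
    · exact even_case_10 σ hE1 x y z
    · exact even_case_11 σ hE1 x y z
  · rw [hp, hL, hR]
    simp only [mul_eq_zero]
    rw [k1_zero, k2_zero, k3_zero, k4_zero]
    constructor <;> rintro (((h | h) | h) | h) <;>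
      first
        | exact Or.inl (Or.inl (Or.inl h))
        | exact Or.inl (Or.inl (Or.inr h))
        | exact Or.inl (Or.inr h)
        | exact Or.inr h
  · intro hne
    rw [hR] at hne
    have ht1 : σ x y ≠ 0 := fun h => hne (by rw [h]; ring)
    have ht2 : σ (x * y) z ≠ 0 := fun h => hne (by rw [h]; ring)
    have ht3 : σ (z⁻¹ * y⁻¹) x⁻¹ ≠ 0 := fun h => hne (by rw [h]; ring)
    have ht4 : σ z⁻¹ y⁻¹ ≠ 0 := fun h => hne (by rw [h]; ring)
    rw [hp, hL, hR, k1_inv ht1, k2_inv ht2, k3_inv ht4, k4_inv ht3]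
    rw [mul_inv, mul_inv, mul_inv]
    ring
end

section
/- Let σ be a factor set with total domain (σ(g,h) ≠ 0 for all g,h) over an algebraically closed field κ, normalized so σ(g,g⁻¹) = 1. Then in κ_par^σ G: [x]^σ[y]^σ[z]^σ = 0 if and only if σ(x,y)σ(xy,z) ≠ σ(x,yz)σ(y,z). -/
/-- The defining relations of the twisted partial group algebra `κ_par^σ G` for a
family of generators `Γ g = [g]^σ`. -/
def TPGARel {κ G R : Type} [Field κ] [Group G] [Ring R] [Algebra κ R]
    (σ : G → G → κ) (Γ : G → R) : Prop :=
  (∀ g h : G, σ g h = 0 → Γ g⁻¹ * Γ (g * h) = 0 ∧ Γ (g * h) * Γ h⁻¹ = 0) ∧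
  (∀ g h : G, Γ g⁻¹ * Γ g * Γ h = σ g h • (Γ g⁻¹ * Γ (g * h))) ∧
  (∀ g h : G, Γ g * Γ h * Γ h⁻¹ = σ g h • (Γ (g * h) * Γ h⁻¹)) ∧
  (∀ g : G, Γ g * Γ 1 = Γ g ∧ Γ 1 * Γ g = Γ g)

namespace Stmt15Aux


variable {κ G : Type} [Field κ] [Group G]

/-- The 2-cocycle condition of `σ` at the triple `(g,h,k)`. -/
def Dd (σ : G → G → κ) (g h k : G) : Prop :=
  σ g h * σ (g * h) k = σ g (h * k) * σ h k

theorem dd_congr {σ : G → G → κ} {a b c a' b' c' : G} (ha : a = a') (hb : b = b')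
    (hc : c = c') (h : Dd σ a' b' c') : Dd σ a b c := by subst ha hb hc; exact h

/-- Basic identities satisfied by any factor set with total domain,
normalized by `σ g g⁻¹ = 1`. -/
theorem sigma_facts {σ : G → G → κ} (hσ : IsFactorSet σ)
    (htotal : ∀ g h : G, σ g h ≠ 0) (hnorm : ∀ g : G, σ g g⁻¹ = 1) :
    (∀ g : G, σ 1 g = 1) ∧ (∀ g : G, σ g 1 = 1) ∧
      (∀ y z : G, σ y z * σ (y * z) z⁻¹ = 1) ∧
      (∀ x y : G, σ x y * σ x⁻¹ (x * y) = 1) := by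
  obtain ⟨R₀, iR, iA, Γ, h1, _h2, h3, h4, h5⟩ := hσ
  have nz : ∀ g h : G, Γ g * Γ h ≠ 0 := fun g h e => htotal g h (h3 g h e)
  have nzg : ∀ g : G, Γ g ≠ 0 := by
    intro g
    have := nz 1 g
    rwa [h1, one_mul] at this
  have key : ∀ (a : κ) (v : R₀), v ≠ 0 → v = a • v → a = 1 := by
    intro a v hv h
    by_contra hne
    have h2 : (a - 1) • v = 0 := by rw [sub_smul, one_smul, ← h, sub_self]
    have h4 := congrArg (fun w => (a - 1)⁻¹ • w) h2
    simp only [smul_smul, inv_mul_cancel₀ (sub_ne_zero.mpr hne), one_smul, smul_zero] at h4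
    exact hv h4
  have reg : ∀ g : G, Γ g * Γ g⁻¹ * Γ g = Γ g := by
    intro g
    have h := h5 g g⁻¹
    rwa [inv_inv, mul_inv_cancel, hnorm, one_smul, h1, one_mul] at h
  refine ⟨?_, ?_, ?_, ?_⟩
  · intro g
    have h := h4 1 g
    simp only [inv_one, h1, one_mul] at h
    exact key _ _ (nzg g) h
  · intro g
    have h := h5 g 1
    simp only [inv_one, h1, mul_one] at h
    exact key _ _ (nzg g) h
  · intro y z
    have e2 : Γ y * Γ z = σ y z • (Γ (y * z) * Γ z⁻¹ * Γ z) := by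
      calc Γ y * Γ z = Γ y * (Γ z * Γ z⁻¹ * Γ z) := by rw [reg z]
        _ = Γ y * Γ z * Γ z⁻¹ * Γ z := by noncomm_ring
        _ = (σ y z • (Γ (y * z) * Γ z⁻¹)) * Γ z := by rw [h5 y z]
        _ = σ y z • (Γ (y * z) * Γ z⁻¹ * Γ z) := by rw [smul_mul_assoc]
    have e3 : Γ (y * z) * Γ z⁻¹ * Γ z = σ (y * z) z⁻¹ • (Γ y * Γ z) := by
      have h := h5 (y * z) z⁻¹
      rwa [inv_inv, mul_inv_cancel_right] at h
    rw [e3, smul_smul] at e2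
    exact key _ _ (nz y z) e2
  · intro x y
    have e2 : Γ x * Γ y = σ x y • (Γ x * Γ x⁻¹ * Γ (x * y)) := by
      calc Γ x * Γ y = (Γ x * Γ x⁻¹ * Γ x) * Γ y := by rw [reg x]
        _ = Γ x * (Γ x⁻¹ * Γ x * Γ y) := by noncomm_ring
        _ = Γ x * (σ x y • (Γ x⁻¹ * Γ (x * y))) := by rw [h4 x y]
        _ = σ x y • (Γ x * (Γ x⁻¹ * Γ (x * y))) := by rw [mul_smul_comm]
        _ = σ x y • (Γ x * Γ x⁻¹ * Γ (x * y)) := by rw [mul_assoc]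
    have e3 : Γ x * Γ x⁻¹ * Γ (x * y) = σ x⁻¹ (x * y) • (Γ x * Γ y) := by
      have h := h4 x⁻¹ (x * y)
      rwa [inv_inv, inv_mul_cancel_left] at h
    rw [e3, smul_smul] at e2
    exact key _ _ (nz x y) e2



variable {κ G : Type} [Field κ] [Group G]

section DdLemmas

variable {σ : G → G → κ} (htotal : ∀ g h : G, σ g h ≠ 0) (hnorm : ∀ g : G, σ g g⁻¹ = 1)
  (hone : ∀ g : G, σ 1 g = 1) (hone' : ∀ g : G, σ g 1 = 1)
  (hI1 : ∀ y z : G, σ y z * σ (y * z) z⁻¹ = 1)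
  (hI2 : ∀ x y : G, σ x y * σ x⁻¹ (x * y) = 1)

include hone' in
theorem dd_k1 (g h : G) : Dd σ g h 1 := by
  unfold Dd; simp only [mul_one, hone']

include hone hone' in
theorem dd_h1 (g k : G) : Dd σ g 1 k := by
  unfold Dd; simp only [mul_one, one_mul, hone, hone']

include hone in
theorem dd_g1 (h k : G) : Dd σ 1 h k := by
  unfold Dd; simp only [one_mul, hone]

include hnorm hone' hI1 in
theorem dd_hinv (g h : G) : Dd σ g h h⁻¹ := by
  unfold Dd; rw [hI1 g h, mul_inv_cancel, hone', hnorm, one_mul]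

include hnorm hone hI2 in
theorem dd_ginv (g k : G) : Dd σ g g⁻¹ k := by
  unfold Dd
  rw [hnorm, mul_inv_cancel, hone, one_mul]
  have h := hI2 g⁻¹ k
  rw [inv_inv] at h
  linear_combination -h

include htotal hnorm hone hI1 hI2 in
theorem dd_prod (g h : G) : Dd σ g h (h⁻¹ * g⁻¹) := by
  unfold Dd
  have e2 : h * (h⁻¹ * g⁻¹) = g⁻¹ := by group
  rw [e2, hnorm g, one_mul]
  have e3 : σ (g * h) (h⁻¹ * g⁻¹) = σ (g * h) (g * h)⁻¹ := by rw [mul_inv_rev]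
  rw [e3, hnorm (g * h), mul_one]
  -- goal : σ g h = σ h (h⁻¹ * g⁻¹)
  have a1 := hI2 g h
  have a2 := hI1 g⁻¹ (g * h)
  rw [inv_mul_cancel_left, mul_inv_rev] at a2
  have key : σ g h * σ g⁻¹ (g * h) = σ h (h⁻¹ * g⁻¹) * σ g⁻¹ (g * h) := by
    rw [a1, mul_comm]; exact a2.symm
  exact mul_right_cancel₀ (htotal g⁻¹ (g * h)) key

include htotal hI2 in
theorem dd_s23 {g h k : G} (hd : Dd σ g h k) : Dd σ g⁻¹ (g * h) k := by
  unfold Dd at hd ⊢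
  rw [inv_mul_cancel_left]
  have a1 := hI2 g h
  have a2 := hI2 g (h * k)
  rw [show g * (h * k) = g * h * k by rw [mul_assoc]] at a2
  apply mul_left_cancel₀ (mul_ne_zero (htotal g h) (htotal g (h * k)))
  linear_combination (σ g (h * k) * σ h k) * a1 - (σ g h * σ (g * h) k) * a2 - hd

include htotal hI1 hI2 in
theorem dd_s12 {g h k : G} (hd : Dd σ g h k) : Dd σ (g * h) h⁻¹ (h * k) := by
  unfold Dd at hd ⊢
  rw [mul_inv_cancel_right, inv_mul_cancel_left]
  have a1 := hI1 g h
  have a2 := hI2 h k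
  apply mul_left_cancel₀ (mul_ne_zero (htotal g h) (htotal h k))
  linear_combination (σ h k * σ g (h * k)) * a1 - (σ g h * σ (g * h) k) * a2 - hd

end DdLemmas



variable {κ G : Type} [Field κ] [Group G]

/-- Coherence of a subset `B` of `G`: the 2-cocycle identity for `σ` holds at all
triples supported along `B`. -/
def Coh (σ : G → G → κ) (B : Set G) : Prop :=
  ∀ u v w : G, u⁻¹ ∈ B → (v * u)⁻¹ ∈ B → (w * (v * u))⁻¹ ∈ B → Dd σ w v u

theorem coh_reduce {σ : G → G → κ} {B : Set G}
    (H : ∀ b1 b2 b3 : G, b1 ∈ B → b2 ∈ B → b3 ∈ B →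
      Dd σ (b3⁻¹ * b2) (b2⁻¹ * b1) b1⁻¹) : Coh σ B := by
  intro u v w hu hv hw
  exact dd_congr (by group) (by group) (by group)
    (H u⁻¹ (v * u)⁻¹ (w * (v * u))⁻¹ hu hv hw)

section CohMain

variable {σ : G → G → κ} (htotal : ∀ g h : G, σ g h ≠ 0) (hnorm : ∀ g : G, σ g g⁻¹ = 1)
  (hone : ∀ g : G, σ 1 g = 1) (hone' : ∀ g : G, σ g 1 = 1)
  (hI1 : ∀ y z : G, σ y z * σ (y * z) z⁻¹ = 1)
  (hI2 : ∀ x y : G, σ x y * σ x⁻¹ (x * y) = 1)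

set_option maxHeartbeats 3000000 in
include htotal hnorm hone hone' hI1 hI2 in
theorem coh_of_base {x y z : G} (hbase : Dd σ x y z) :
    Coh σ ({1, z⁻¹, z⁻¹ * y⁻¹, z⁻¹ * y⁻¹ * x⁻¹} : Set G) := by
  have L1 : Dd σ x⁻¹ (x * y) z := dd_s23 htotal hI2 hbase
  have L2 : Dd σ (x * y) y⁻¹ (y * z) := dd_s12 htotal hI1 hI2 hbase
  have L3 : Dd σ (x * y)⁻¹ x (y * z) :=
    dd_congr rfl (by group) rfl (dd_s23 htotal hI2 L2)
  have L4 : Dd σ y (x * y)⁻¹ (x * (y * z)) :=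
    dd_congr (by group) rfl (by group) (dd_s12 htotal hI1 hI2 L1)
  have L5 : Dd σ y⁻¹ x⁻¹ (x * (y * z)) :=
    dd_congr rfl (by group) rfl (dd_s23 htotal hI2 L4)
  apply coh_reduce
  intro b1 b2 b3 hb1 hb2 hb3
  simp only [Set.mem_insert_iff, Set.mem_singleton_iff] at hb1 hb2 hb3
  obtain h1 | h1 | h1 | h1 := hb1 <;> subst h1 <;>
    obtain h2 | h2 | h2 | h2 := hb2 <;> subst h2 <;>
      obtain h3 | h3 | h3 | h3 := hb3 <;> subst h3 <;>
  first
  | (refine dd_congr rfl ?_ rfl (dd_h1 hone hone' _ _); group; done)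
  | (refine dd_congr ?_ rfl rfl (dd_g1 hone _ _); group; done)
  | (refine dd_congr rfl rfl ?_ (dd_k1 hone' _ _); group; done)
  | (refine dd_congr rfl rfl ?_ (dd_hinv hnorm hone' hI1 _ _); group; done)
  | (refine dd_congr rfl ?_ rfl (dd_ginv hnorm hone hI2 _ _); group; done)
  | (refine dd_congr rfl rfl ?_ (dd_prod htotal hnorm hone hI1 hI2 _ _); group; done)
  | (refine dd_congr ?_ ?_ ?_ hbase <;> (group; done))
  | (refine dd_congr ?_ ?_ ?_ L1 <;> (group; done))
  | (refine dd_congr ?_ ?_ ?_ L2 <;> (group; done))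
  | (refine dd_congr ?_ ?_ ?_ L3 <;> (group; done))
  | (refine dd_congr ?_ ?_ ?_ L4 <;> (group; done))
  | (refine dd_congr ?_ ?_ ?_ L5 <;> (group; done))

end CohMain



variable {κ G : Type} [Field κ] [Group G]

section Model

variable (σ : G → G → κ) (B : Set G)

open Classical in
/-- The weighted partial translation operators on the `κ`-vector space with basis
the states `{k : G // k⁻¹ ∈ B}`. -/
noncomputable def Gam (g : G) :
    ({k : G // k⁻¹ ∈ B} →₀ κ) →ₗ[κ] ({k : G // k⁻¹ ∈ B} →₀ κ) :=
  Finsupp.linearCombination κ (fun s : {k : G // k⁻¹ ∈ B} =>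
    if h : (g * s.1)⁻¹ ∈ B then Finsupp.single (⟨g * s.1, h⟩ : {k : G // k⁻¹ ∈ B}) (σ g s.1)
    else 0)

open Classical in
theorem Gam_single (g : G) (s : {k : G // k⁻¹ ∈ B}) (c : κ) :
    Gam σ B g (Finsupp.single s c) =
      if h : (g * s.1)⁻¹ ∈ B then
        Finsupp.single (⟨g * s.1, h⟩ : {k : G // k⁻¹ ∈ B}) (c * σ g s.1)
      else 0 := by
  rw [Gam, Finsupp.linearCombination_single]
  split_ifs with h
  · rw [Finsupp.smul_single, smul_eq_mul]
  · rw [smul_zero]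

theorem single_st_congr {a b : G} (hab : a = b) (ha : a⁻¹ ∈ B) (hb : b⁻¹ ∈ B) {c d : κ}
    (hcd : c = d) :
    Finsupp.single (⟨a, ha⟩ : {k : G // k⁻¹ ∈ B}) c = Finsupp.single ⟨b, hb⟩ d := by
  subst hab hcd; rfl

variable {σ B}

theorem Gam_one (hone : ∀ g : G, σ 1 g = 1) :
    Gam σ B (1 : G) = (1 : Module.End κ ({k : G // k⁻¹ ∈ B} →₀ κ)) := by
  apply Finsupp.lhom_ext
  intro s c
  rw [Gam_single]
  have h1 : ((1 : G) * s.1)⁻¹ ∈ B := by rw [one_mul]; exact s.2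
  rw [dif_pos h1, Module.End.one_apply]
  calc Finsupp.single (⟨(1 : G) * s.1, h1⟩ : {k : G // k⁻¹ ∈ B}) (c * σ 1 s.1)
      = Finsupp.single ⟨s.1, s.2⟩ c := single_st_congr B (one_mul s.1) h1 s.2
        (by rw [hone, mul_one])
    _ = Finsupp.single s c := rfl

theorem Gam_rel4 (hcoh : Coh σ B) (g h : G) :
    Gam σ B g⁻¹ * Gam σ B g * Gam σ B h = σ g h • (Gam σ B g⁻¹ * Gam σ B (g * h)) := by
  apply Finsupp.lhom_ext
  intro s c
  rw [Module.End.mul_apply, Module.End.mul_apply, LinearMap.smul_apply, Module.End.mul_apply,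
    Gam_single, Gam_single]
  by_cases c1 : (h * s.1)⁻¹ ∈ B
  · by_cases c2 : (g * (h * s.1))⁻¹ ∈ B
    · have c2' : ((g * h) * s.1)⁻¹ ∈ B := by rw [mul_assoc]; exact c2
      have c3 : (g⁻¹ * (g * (h * s.1)))⁻¹ ∈ B := by rw [inv_mul_cancel_left]; exact c1
      have c4 : (g⁻¹ * (g * h * s.1))⁻¹ ∈ B := by
        rw [show g⁻¹ * (g * h * s.1) = h * s.1 by group]; exact c1
      rw [dif_pos c1, Gam_single, dif_pos c2, Gam_single, dif_pos c3, dif_pos c2',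
        Gam_single, dif_pos c4, Finsupp.smul_single]
      refine single_st_congr B (by group) c3 c4 ?_
      show c * σ h s.1 * σ g (h * s.1) * σ g⁻¹ (g * (h * s.1))
        = σ g h • (c * σ (g * h) s.1 * σ g⁻¹ (g * h * s.1))
      rw [smul_eq_mul, show σ g⁻¹ (g * h * s.1) = σ g⁻¹ (g * (h * s.1)) from by rw [mul_assoc]]
      have hdd : Dd σ g h s.1 := hcoh s.1 h g s.2 c1 c2
      unfold Dd at hdd
      linear_combination (-(c * σ g⁻¹ (g * (h * s.1)))) * hdd
    · have c2' : ¬((g * h) * s.1)⁻¹ ∈ B := by rw [mul_assoc]; exact c2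
      rw [dif_pos c1, Gam_single, dif_neg c2, dif_neg c2']
      simp only [map_zero, smul_zero]
  · rw [dif_neg c1]
    by_cases c2' : ((g * h) * s.1)⁻¹ ∈ B
    · have c4 : ¬(g⁻¹ * (g * h * s.1))⁻¹ ∈ B := by
        rw [show g⁻¹ * (g * h * s.1) = h * s.1 by group]; exact c1
      rw [dif_pos c2', Gam_single, dif_neg c4]
      simp only [map_zero, smul_zero]
    · rw [dif_neg c2']
      simp only [map_zero, smul_zero]

theorem Gam_rel5 (hcoh : Coh σ B) (g h : G) :
    Gam σ B g * Gam σ B h * Gam σ B h⁻¹ = σ g h • (Gam σ B (g * h) * Gam σ B h⁻¹) := by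
  apply Finsupp.lhom_ext
  intro s c
  rw [Module.End.mul_apply, Module.End.mul_apply, LinearMap.smul_apply, Module.End.mul_apply,
    Gam_single]
  by_cases c1 : (h⁻¹ * s.1)⁻¹ ∈ B
  · have e1 : (h * (h⁻¹ * s.1))⁻¹ ∈ B := by rw [mul_inv_cancel_left]; exact s.2
    by_cases c2 : (g * (h * (h⁻¹ * s.1)))⁻¹ ∈ B
    · have c2' : ((g * h) * (h⁻¹ * s.1))⁻¹ ∈ B := by
        rw [show (g * h) * (h⁻¹ * s.1) = g * (h * (h⁻¹ * s.1)) by group]; exact c2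
      rw [dif_pos c1, Gam_single, dif_pos e1, Gam_single, dif_pos c2, Gam_single,
        dif_pos c2', Finsupp.smul_single]
      refine single_st_congr B (by group) c2 c2' ?_
      show c * σ h⁻¹ s.1 * σ h (h⁻¹ * s.1) * σ g (h * (h⁻¹ * s.1))
        = σ g h • (c * σ h⁻¹ s.1 * σ (g * h) (h⁻¹ * s.1))
      rw [smul_eq_mul]
      have hdd : Dd σ g h (h⁻¹ * s.1) :=
        hcoh (h⁻¹ * s.1) h g c1 (by rw [mul_inv_cancel_left]; exact s.2) c2
      unfold Dd at hdd
      linear_combination (-(c * σ h⁻¹ s.1)) * hdd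
    · have c2' : ¬((g * h) * (h⁻¹ * s.1))⁻¹ ∈ B := by
        rw [show (g * h) * (h⁻¹ * s.1) = g * (h * (h⁻¹ * s.1)) by group]; exact c2
      rw [dif_pos c1, Gam_single, dif_pos e1, Gam_single, dif_neg c2, Gam_single, dif_neg c2',
        smul_zero]
  · rw [dif_neg c1]
    simp only [map_zero, smul_zero]

theorem Gam_tpga (htotal : ∀ g h : G, σ g h ≠ 0) (hone : ∀ g : G, σ 1 g = 1)
    (hcoh : Coh σ B) : TPGARel σ (fun g => Gam σ B g) := by
  refine ⟨fun g h h0 => absurd h0 (htotal g h), Gam_rel4 hcoh, Gam_rel5 hcoh, fun g => ?_⟩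
  constructor
  · show Gam σ B g * Gam σ B 1 = Gam σ B g
    rw [Gam_one hone, mul_one]
  · show Gam σ B 1 * Gam σ B g = Gam σ B g
    rw [Gam_one hone, one_mul]

end Model


end Stmt15Aux

open Stmt15Aux in
/-- In `κ_par^σ G` (presented as the universal algebra generated by the `[g]^σ`'s with
the relations `TPGARel`), for a factor set `σ` with total domain over an algebraically
closed field, `[x]^σ[y]^σ[z]^σ = 0` iff `σ(x,y)σ(xy,z) ≠ σ(x,yz)σ(y,z)`. -/
theorem stmt_15 {κ G R : Type} [Field κ] [IsAlgClosed κ] [Group G] [Ring R] [Algebra κ R]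
    (σ : G → G → κ) (hσ : IsFactorSet σ)
    (htotal : ∀ g h : G, σ g h ≠ 0) (hnorm : ∀ g : G, σ g g⁻¹ = 1)
    (Γ : G → R) (hrel : TPGARel σ Γ)
    (hgen : Algebra.adjoin κ (Set.range Γ) = ⊤)
    (huniv : ∀ (R' : Type) [Ring R'] [Algebra κ R'] (Γ' : G → R'),
      TPGARel σ Γ' → ∃ f : R →ₐ[κ] R', ∀ g, f (Γ g) = Γ' g)
    (x y z : G) :
    Γ x * Γ y * Γ z = 0 ↔ σ x y * σ (x * y) z ≠ σ x (y * z) * σ y z := by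

  obtain ⟨hone, hone', hI1, hI2⟩ := sigma_facts hσ htotal hnorm
  obtain ⟨hrel0, hrel4, hrel5, hrelu⟩ := hrel
  constructor
  · -- zero product implies failure of the cocycle identity
    intro hT heq
    have hbase : Dd σ x y z := heq
    set B : Set G := {1, z⁻¹, z⁻¹ * y⁻¹, z⁻¹ * y⁻¹ * x⁻¹} with hBdef
    have hcoh : Coh σ B := coh_of_base htotal hnorm hone hone' hI1 hI2 hbase
    obtain ⟨f, hf⟩ := huniv (Module.End κ ({k : G // k⁻¹ ∈ B} →₀ κ))
      (fun g => Gam σ B g) (Gam_tpga htotal hone hcoh)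
    have h0 : Gam σ B x * Gam σ B y * Gam σ B z = 0 := by
      have := congrArg f hT
      rw [map_mul, map_mul, hf x, hf y, hf z, map_zero] at this
      exact this
    have m0 : ((1 : G))⁻¹ ∈ B := by
      rw [inv_one]; exact Set.mem_insert _ _
    have m1 : (z * (1 : G))⁻¹ ∈ B := by
      rw [mul_one]; exact Set.mem_insert_of_mem _ (Set.mem_insert _ _)
    have m2 : (y * (z * (1 : G)))⁻¹ ∈ B := by
      rw [mul_one, mul_inv_rev]
      exact Set.mem_insert_of_mem _ (Set.mem_insert_of_mem _ (Set.mem_insert _ _))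
    have m3 : (x * (y * (z * (1 : G))))⁻¹ ∈ B := by
      rw [mul_one, mul_inv_rev, mul_inv_rev]
      exact Set.mem_insert_of_mem _ (Set.mem_insert_of_mem _ (Set.mem_insert_of_mem _ rfl))
    have happ := congrArg (fun F : Module.End κ ({k : G // k⁻¹ ∈ B} →₀ κ) =>
      F (Finsupp.single (⟨(1 : G), m0⟩ : {k : G // k⁻¹ ∈ B}) (1 : κ))) h0
    simp only [Module.End.mul_apply, LinearMap.zero_apply] at happ
    rw [Gam_single, dif_pos m1, Gam_single, dif_pos m2, Gam_single, dif_pos m3] at happ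
    rw [Finsupp.single_eq_zero] at happ
    exact mul_ne_zero (mul_ne_zero (mul_ne_zero one_ne_zero (htotal z 1)) (htotal y _))
      (htotal x _) happ
  · -- failure of the cocycle identity implies zero product
    intro hne
    have reg : ∀ g : G, Γ g * Γ g⁻¹ * Γ g = Γ g := by
      intro g
      have h := hrel5 g g⁻¹
      rwa [inv_inv, mul_inv_cancel, hnorm, one_smul, (hrelu g).2] at h
    have pairR : ∀ a b : G, Γ a * Γ b = σ a b • (Γ (a * b) * Γ b⁻¹ * Γ b) := by
      intro a b
      calc Γ a * Γ b = Γ a * (Γ b * Γ b⁻¹ * Γ b) := by rw [reg b]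
        _ = Γ a * Γ b * Γ b⁻¹ * Γ b := by noncomm_ring
        _ = (σ a b • (Γ (a * b) * Γ b⁻¹)) * Γ b := by rw [hrel5 a b]
        _ = σ a b • (Γ (a * b) * Γ b⁻¹ * Γ b) := by rw [smul_mul_assoc]
    have hA : Γ x⁻¹ * (Γ x * Γ y * Γ z)
        = (σ x y * σ (x * y) z) • (Γ x⁻¹ * (Γ (x * (y * z)) * Γ z⁻¹ * Γ z)) := by
      calc Γ x⁻¹ * (Γ x * Γ y * Γ z) = (Γ x⁻¹ * Γ x * Γ y) * Γ z := by noncomm_ring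
        _ = (σ x y • (Γ x⁻¹ * Γ (x * y))) * Γ z := by rw [hrel4 x y]
        _ = σ x y • (Γ x⁻¹ * (Γ (x * y) * Γ z)) := by rw [smul_mul_assoc, mul_assoc]
        _ = σ x y • (Γ x⁻¹ * (σ (x * y) z • (Γ ((x * y) * z) * Γ z⁻¹ * Γ z))) := by
              rw [pairR (x * y) z]
        _ = (σ x y * σ (x * y) z) • (Γ x⁻¹ * (Γ (x * (y * z)) * Γ z⁻¹ * Γ z)) := by
              rw [mul_smul_comm, smul_smul, mul_assoc x y z]
    have hB : Γ x⁻¹ * (Γ x * Γ y * Γ z)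
        = (σ x (y * z) * σ y z) • (Γ x⁻¹ * (Γ (x * (y * z)) * Γ z⁻¹ * Γ z)) := by
      calc Γ x⁻¹ * (Γ x * Γ y * Γ z) = Γ x⁻¹ * (Γ x * (Γ y * Γ z)) := by noncomm_ring
        _ = Γ x⁻¹ * (Γ x * (σ y z • (Γ (y * z) * Γ z⁻¹ * Γ z))) := by rw [pairR y z]
        _ = σ y z • (Γ x⁻¹ * Γ x * Γ (y * z) * (Γ z⁻¹ * Γ z)) := by
              rw [mul_smul_comm, mul_smul_comm]
              congr 1
              noncomm_ring
        _ = σ y z • ((σ x (y * z) • (Γ x⁻¹ * Γ (x * (y * z)))) * (Γ z⁻¹ * Γ z)) := by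
              rw [hrel4 x (y * z)]
        _ = (σ x (y * z) * σ y z) • (Γ x⁻¹ * (Γ (x * (y * z)) * Γ z⁻¹ * Γ z)) := by
              rw [smul_mul_assoc, smul_smul, mul_comm (σ y z)]
              congr 1
              noncomm_ring
    have hc : σ x y * σ (x * y) z - σ x (y * z) * σ y z ≠ 0 := sub_ne_zero.mpr hne
    have hzero : (σ x y * σ (x * y) z - σ x (y * z) * σ y z) •
        (Γ x⁻¹ * (Γ (x * (y * z)) * Γ z⁻¹ * Γ z)) = 0 := by
      rw [sub_smul, ← hA, ← hB, sub_self]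
    have hW : Γ x⁻¹ * (Γ (x * (y * z)) * Γ z⁻¹ * Γ z) = 0 := by
      have h4 := congrArg (fun v => (σ x y * σ (x * y) z - σ x (y * z) * σ y z)⁻¹ • v) hzero
      simpa [smul_smul, inv_mul_cancel₀ hc] using h4
    have h5 : Γ x⁻¹ * (Γ x * Γ y * Γ z) = 0 := by rw [hA, hW, smul_zero]
    calc Γ x * Γ y * Γ z = Γ x * (Γ x⁻¹ * (Γ x * Γ y * Γ z)) := by
          rw [show Γ x * (Γ x⁻¹ * (Γ x * Γ y * Γ z)) = (Γ x * Γ x⁻¹ * Γ x) * Γ y * Γ z from by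
            noncomm_ring, reg x]
      _ = 0 := by rw [h5, mul_zero]
end

section
/- If G is a torsion-free group, then the spectral partial action of G on Ω_σ is topologically free for every factor set σ of G. -/
/-- Old Mathlib `Monoid.IsTorsionFree` (removed upstream), restored with its original meaning. -/
def Monoid.IsTorsionFree (G : Type*) [Monoid G] : Prop :=
  ∀ g : G, g ≠ 1 → ¬IsOfFinOrder g

/-- The Bernoulli (product) topology on `2^G = Set G`. -/
def bernoulliTop (G : Type) : TopologicalSpace (Set G) :=
  TopologicalSpace.induced (fun (s : Set G) (g : G) => g ∈ s)
    (@Pi.topologicalSpace G (fun _ => Prop) fun _ => ⊥)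


theorem aux_topfree {G : Type} [Group G] (hG : Monoid.IsTorsionFree G)
    (Om : Set (Set G))
    (h1Om : ∀ ξ ∈ Om, (1 : G) ∈ ξ)
    (hOm : ∀ ξ ∈ Om, ∀ ξ' ⊆ ξ, (1 : G) ∈ ξ' → ξ' ∈ Om)
    (τ : TopologicalSpace (Set G)) (hτ : τ = bernoulliTop G)
    (g : G) (hg : g ≠ 1) :
    @interior _ (@instTopologicalSpaceSubtype (Set G) (· ∈ Om) τ)
      {ξ : {ξ : Set G // ξ ∈ Om} | g⁻¹ ∈ ξ.1 ∧ (fun t => g * t) '' ξ.1 = ξ.1} = ∅ := by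
  subst hτ
  letI := bernoulliTop G
  set S := {ξ : {ξ : Set G // ξ ∈ Om} | g⁻¹ ∈ ξ.1 ∧ (fun t => g * t) '' ξ.1 = ξ.1}
  by_contra h
  rw [← Set.not_nonempty_iff_eq_empty, not_not] at h
  obtain ⟨ξ, hξ⟩ := h
  have hUopen : IsOpen (interior S) := isOpen_interior
  rw [isOpen_induced_iff] at hUopen
  obtain ⟨V, hVopen, hVpre⟩ := hUopen
  obtain ⟨W, hWopen, hWpre⟩ :=
    (@isOpen_induced_iff (Set G) (G → Prop)
      (@Pi.topologicalSpace G (fun _ => Prop) fun _ => ⊥) V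
      (fun (s : Set G) (g : G) => g ∈ s)).mp hVopen
  have hξW : (fun i => i ∈ ξ.1) ∈ W := by
    have : ξ.1 ∈ V := by
      have : ξ ∈ interior S := hξ
      rw [← hVpre] at this; exact this
    rw [← hWpre] at this; exact this
  obtain ⟨I, u, hu, hpi⟩ :=
    ((@isOpen_pi_iff G (fun _ => Prop) (fun _ => ⊥) W).mp hWopen) _ hξW
  -- the finite truncation
  set ξ' : Set G := (ξ.1 ∩ ↑I) ∪ {1} with hξ'def
  have h1ξ : (1 : G) ∈ ξ.1 := h1Om ξ.1 ξ.2
  have hsub : ξ' ⊆ ξ.1 := by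
    intro x hx
    rcases hx with hx | hx
    · exact hx.1
    · rw [Set.mem_singleton_iff] at hx; rw [hx]; exact h1ξ
  have h1ξ' : (1 : G) ∈ ξ' := Or.inr rfl
  have hξ'Om : ξ' ∈ Om := hOm ξ.1 ξ.2 ξ' hsub h1ξ'
  have hfin : ξ'.Finite := by
    apply Set.Finite.subset (Set.Finite.union (I.finite_toSet) (Set.finite_singleton 1))
    intro x hx
    rcases hx with hx | hx
    · exact Or.inl hx.2
    · exact Or.inr hx
  -- ξ' agrees with ξ on I
  have hagree : ∀ i ∈ I, (i ∈ ξ') = (i ∈ ξ.1) := by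
    intro i hi
    apply propext
    constructor
    · exact fun hx => hsub hx
    · exact fun hx => Or.inl ⟨hx, hi⟩
  have hξ'W : (fun i => i ∈ ξ') ∈ W := by
    apply hpi
    intro i hi
    simp only
    rw [hagree i hi]
    exact (hu i hi).2
  have hξ'S : (⟨ξ', hξ'Om⟩ : {ξ : Set G // ξ ∈ Om}) ∈ S := by
    apply interior_subset
    rw [← hVpre]
    show ξ' ∈ V
    rw [← hWpre]
    exact hξ'W
  obtain ⟨hginv, himg⟩ := hξ'S
  have himg' : (fun t => g * t) '' ξ' = ξ' := himg
  -- fixed point contains all powers of g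
  have hiff : ∀ x : G, x ∈ ξ' ↔ g * x ∈ ξ' := by
    intro x
    constructor
    · intro hx
      rw [← himg']; exact ⟨x, hx, rfl⟩
    · intro hx
      rw [← himg'] at hx
      obtain ⟨y, hy, hyx⟩ := hx
      have : y = x := mul_left_cancel hyx
      rwa [← this]
  have hpow : ∀ n : ℤ, g ^ n ∈ ξ' := by
    intro n
    induction n using Int.induction_on with
    | zero => simpa using h1ξ'
    | succ k ih =>
      have := (hiff (g ^ (k : ℤ))).mp ih
      rwa [← zpow_one_add, add_comm 1 (k : ℤ)] at this
    | pred k ih =>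
      apply (hiff (g ^ (-(k : ℤ) - 1))).mpr
      rwa [← zpow_one_add, show (1 + (-(k : ℤ) - 1)) = -(k:ℤ) by ring]
  have hinj : Function.Injective (fun n : ℤ => g ^ n) :=
    injective_zpow_iff_not_isOfFinOrder.mpr (hG g hg)
  have : ξ'.Infinite := Set.infinite_of_injective_forall_mem hinj hpow
  exact this hfin

/-- If `G` is torsion-free then the spectral partial action of `G` on `Ω_σ` is
topologically free for every factor set `σ`: for each `g ≠ 1` the fixed-point set of
`θ_g` has empty interior. -/
theorem stmt_16 {κ G : Type} [Field κ] [Group G]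
    (σ : G → G → κ) (hσ : IsFactorSet σ) (hG : Monoid.IsTorsionFree G) :
    letI : TopologicalSpace (Set G) := bernoulliTop G
    ∀ g : G, g ≠ 1 →
      interior {ξ : {ξ : Set G // ξ ∈ Omega σ} |
        g⁻¹ ∈ ξ.1 ∧ (fun t => g * t) '' ξ.1 = ξ.1} = ∅ := by
  intro g hg
  exact aux_topfree hG (Omega σ) (fun ξ hξ => hξ.1)
    (fun ξ hξ ξ' hsub h1 => ⟨h1, fun V hV hVs => hξ.2 V hV (hVs.trans hsub)⟩)
    (bernoulliTop G) rfl g hg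
end

section
/- An element ξ ∈ Ω_σ is an isolated point of Ω_σ (in the topology induced from 2^G) if and only if both ξ and A_σ(ξ) := { g ∈ G∖ξ : ξ ∪ {g} ∈ Ω_σ } are finite sets; in that case the singleton {ξ} equals the basic open set (ξ, A_σ(ξ))^σ = { η ∈ Ω_σ : ξ ⊆ η and η ∩ A_σ(ξ) = ∅ }. -/
/-- The set `A_σ(ξ)` of admissible elements for `ξ`. -/
def Adm {κ G : Type} [Field κ] [Group G] (σ : G → G → κ) (ξ : Set G) : Set G :=
  {g | g ∉ ξ ∧ ξ ∪ {g} ∈ Omega σ}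

lemma omega_mono {κ G : Type} [Field κ] [Group G] (σ : G → G → κ)
    {ξ η : Set G} (h1 : (1:G) ∈ η) (hsub : η ⊆ ξ) (hξ : ξ ∈ Omega σ) : η ∈ Omega σ :=
  ⟨h1, fun V hV hVη => hξ.2 V hV (hVη.trans hsub)⟩

lemma bt_eq (G : Type) :
    bernoulliTop G = @Pi.topologicalSpace G (fun _ => Prop) (fun _ => ⊥) := by
  have h : (fun (s : Set G) (g : G) => g ∈ s) = id := rfl
  rw [bernoulliTop, h]
  exact @induced_id (Set G) (@Pi.topologicalSpace G (fun _ => Prop) fun _ => ⊥)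

lemma open_basic {G : Type} {α β : Set G} (hα : α.Finite) (hβ : β.Finite) :
    @IsOpen (Set G) (@Pi.topologicalSpace G (fun _ => Prop) fun _ => ⊥)
      {η : Set G | α ⊆ η ∧ η ∩ β = ∅} := by
  letI : TopologicalSpace Prop := ⊥
  letI : TopologicalSpace (Set G) := @Pi.topologicalSpace G (fun _ => Prop) fun _ => ⊥
  haveI : DiscreteTopology Prop := ⟨rfl⟩
  have hU : {η : Set G | α ⊆ η ∧ η ∩ β = ∅}
      = (⋂ g ∈ α, {η : Set G | g ∈ η}) ∩ (⋂ g ∈ β, {η : Set G | g ∉ η}) := by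
    ext η
    simp only [Set.mem_setOf_eq, Set.mem_inter_iff, Set.mem_iInter]
    constructor
    · rintro ⟨h1, h2⟩
      refine ⟨fun g hg => h1 hg, fun g hg hgη => ?_⟩
      have : g ∈ η ∩ β := ⟨hgη, hg⟩
      rw [h2] at this; exact this
    · rintro ⟨h1, h2⟩
      refine ⟨h1, ?_⟩
      ext g
      simp only [Set.mem_inter_iff, Set.mem_empty_iff_false, iff_false]
      rintro ⟨hgη, hgb⟩
      exact h2 g hgb hgη
  rw [hU]
  have hev : ∀ g : G, ∀ S : Set Prop,
      IsOpen {η : Set G | (g ∈ η) ∈ S} := by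
    intro g S
    have hc : Continuous (fun f : G → Prop => f g) := continuous_apply g
    exact hc.isOpen_preimage S (isOpen_discrete S)
  exact (hα.isOpen_biInter fun g _ => hev g {p | p}).inter
    (hβ.isOpen_biInter fun g _ => hev g {p | ¬p})

/-- `ξ ∈ Ω_σ` is an isolated point of `Ω_σ` iff both `ξ` and `A_σ(ξ)` are finite; in
that case `{ξ}` is the basic open set `(ξ, A_σ(ξ))^σ`. -/
theorem stmt_17 {κ G : Type} [Field κ] [Group G] [Infinite G]
    (σ : G → G → κ) (hσ : IsFactorSet σ) (ξ : Set G) (hξ : ξ ∈ Omega σ) :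
    letI : TopologicalSpace (Set G) := bernoulliTop G
    (IsOpen {x : {η : Set G // η ∈ Omega σ} | x.1 = ξ} ↔ ξ.Finite ∧ (Adm σ ξ).Finite) ∧
    (ξ.Finite → (Adm σ ξ).Finite →
      {x : {η : Set G // η ∈ Omega σ} | x.1 = ξ}
        = {x : {η : Set G // η ∈ Omega σ} | ξ ⊆ x.1 ∧ x.1 ∩ Adm σ ξ = ∅}) := by
  letI : TopologicalSpace (Set G) := bernoulliTop G
  have key : ∀ η : Set G, η ∈ Omega σ → ξ ⊆ η → η ∩ Adm σ ξ = ∅ → η = ξ := by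
    intro η hη hsub hdisj
    apply Set.Subset.antisymm _ hsub
    intro g hg
    by_contra hgξ
    have hmem : ξ ∪ {g} ∈ Omega σ := by
      refine omega_mono σ (Or.inl hξ.1) ?_ hη
      intro x hx
      rcases hx with hx | hx
      · exact hsub hx
      · rcases hx with rfl; exact hg
    have : g ∈ η ∩ Adm σ ξ := ⟨hg, ⟨hgξ, hmem⟩⟩
    rw [hdisj] at this
    exact this
  have eq2 : {x : {η : Set G // η ∈ Omega σ} | x.1 = ξ}
      = {x : {η : Set G // η ∈ Omega σ} | ξ ⊆ x.1 ∧ x.1 ∩ Adm σ ξ = ∅} := by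
    ext x
    constructor
    · rintro (h : x.1 = ξ)
      refine ⟨h.ge, ?_⟩
      rw [h]
      ext g
      simp only [Set.mem_inter_iff, Set.mem_empty_iff_false, iff_false]
      rintro ⟨hg, hgA, -⟩
      exact hgA hg
    · rintro ⟨h1, h2⟩
      exact key x.1 x.2 h1 h2
  refine ⟨⟨?_, ?_⟩, fun _ _ => eq2⟩
  · -- open → finite
    intro hop
    obtain ⟨t, ht, hpre⟩ := isOpen_induced_iff.mp hop
    rw [bt_eq] at ht
    have hξt : (ξ : G → Prop) ∈ t := by
      have : (⟨ξ, hξ⟩ : {η : Set G // η ∈ Omega σ}) ∈ Subtype.val ⁻¹' t := by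
        rw [hpre]; rfl
      exact this
    obtain ⟨I, u, hu, hsub⟩ :=
      (@isOpen_pi_iff G (fun _ => Prop) (fun _ => ⊥) t).mp ht ξ hξt
    have main : ∀ η : Set G, η ∈ Omega σ → (∀ i ∈ I, (i ∈ η) = (i ∈ ξ)) → η = ξ := by
      intro η hη hagree
      have hηt : (η : G → Prop) ∈ t := by
        apply hsub
        intro i hi
        have h2 := (hu i hi).2
        have : (i ∈ η) ∈ u i := by rw [hagree i hi]; exact h2
        exact this
      have : (⟨η, hη⟩ : {η : Set G // η ∈ Omega σ}) ∈ Subtype.val ⁻¹' t := hηt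
      rw [hpre] at this
      exact this
    constructor
    · set ξ' : Set G := (↑I ∩ ξ) ∪ {1} with hξ'
      have hξ'Ω : ξ' ∈ Omega σ := by
        refine omega_mono σ (Or.inr rfl) ?_ hξ
        rintro x (⟨-, hx⟩ | hx)
        · exact hx
        · rcases hx with rfl; exact hξ.1
      have heq : ξ' = ξ := by
        apply main ξ' hξ'Ω
        intro i hi
        apply propext
        constructor
        · rintro (⟨-, h⟩ | h)
          · exact h
          · rcases h with rfl; exact hξ.1
        · intro h; exact Or.inl ⟨hi, h⟩
      rw [← heq]
      exact ((I.finite_toSet.inter_of_left ξ).union (Set.finite_singleton 1))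
    · apply (I.finite_toSet).subset
      intro g hg
      by_contra hgI
      have heq : ξ ∪ {g} = ξ := by
        apply main _ hg.2
        intro i hi
        apply propext
        constructor
        · rintro (h | h)
          · exact h
          · rcases h with rfl; exact absurd hi hgI
        · exact Or.inl
      exact hg.1 (heq ▸ (Or.inr rfl : g ∈ ξ ∪ {g}))
  · -- finite → open
    rintro ⟨hfin, hAfin⟩
    rw [eq2]
    have hUopen : @IsOpen (Set G) (bernoulliTop G)
        {η : Set G | ξ ⊆ η ∧ η ∩ Adm σ ξ = ∅} := by
      rw [bt_eq]
      exact open_basic hfin hAfin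
    exact isOpen_induced_iff.mpr ⟨_, hUopen, rfl⟩
end

section
/- For a factor set σ of a group G and g ∈ G, the fixed-point set Fix^σ_g = { ξ ∈ Ω_σ : g ∈ ξ and gξ = ξ } is nonempty if and only if the restriction of σ to ⟨g⟩ × ⟨g⟩ is a global 2-cocycle (i.e. σ(g^s, g^t) ≠ 0 for all s,t ∈ ℤ and σ(g^s, g^{t+m})σ(g^t, g^m) = σ(g^s, g^t)σ(g^{s+t}, g^m) for all s,t,m ∈ ℤ). -/
/-- `Fix^σ_g ≠ ∅` iff the restriction of `σ` to `⟨g⟩ × ⟨g⟩` is a global 2-cocycle. -/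
theorem stmt_18 {κ G : Type} [Field κ] [Group G]
    (σ : G → G → κ) (hσ : IsFactorSet σ) (g : G) :
    (∃ ξ : Set G, ξ ∈ Omega σ ∧ g ∈ ξ ∧ (fun t => g * t) '' ξ = ξ) ↔
      ((∀ s t : ℤ, σ (g ^ s) (g ^ t) ≠ 0) ∧
       (∀ s t m : ℤ, σ (g ^ s) (g ^ (t + m)) * σ (g ^ t) (g ^ m)
          = σ (g ^ s) (g ^ t) * σ (g ^ (s + t)) (g ^ m))) := by
  constructor
  · rintro ⟨ξ, ⟨h1, hpro⟩, hg, hfix⟩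
    have hfwd : ∀ x ∈ ξ, g * x ∈ ξ := by
      intro x hx; rw [← hfix]; exact ⟨x, hx, rfl⟩
    have hbwd : ∀ x ∈ ξ, g⁻¹ * x ∈ ξ := by
      intro x hx
      rw [← hfix] at hx
      obtain ⟨y, hy, rfl⟩ := hx
      simpa using hy
    have hpow : ∀ n : ℤ, g ^ n ∈ ξ := by
      intro n
      induction n using Int.induction_on with
      | zero => simpa using h1
      | succ n ih =>
        have : ((n : ℤ) + 1) = 1 + n := by ring
        rw [this, zpow_add, zpow_one]; exact hfwd _ ih
      | pred n ih =>
        have : (-(n : ℤ) - 1) = -1 + -n := by ring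
        rw [this, zpow_add]
        simpa using hbwd _ ih
    constructor
    · intro s t h0
      refine hpro {1, 1 * g ^ s, 1 * g ^ s * g ^ t}
        (Or.inl ⟨1, g ^ s, g ^ t, h0, rfl⟩) ?_
      rintro x (rfl | rfl | rfl)
      · simpa using hpow 0
      · simpa [← zpow_add] using hpow s
      · simpa [← zpow_add] using hpow (s + t)
    · intro s t m
      by_contra hne
      refine hpro {1, 1 * g ^ s, 1 * g ^ s * g ^ t, 1 * g ^ s * g ^ t * g ^ m}
        (Or.inr ⟨1, g ^ s, g ^ t, g ^ m, ?_, rfl⟩) ?_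
      · rw [← zpow_add, ← zpow_add]; exact hne
      · rintro x (rfl | rfl | rfl | rfl)
        · simpa using hpow 0
        · simpa [← zpow_add] using hpow s
        · simpa [← zpow_add, mul_assoc] using hpow (s + t)
        · simpa [← zpow_add, mul_assoc] using hpow (s + t + m)
  · rintro ⟨hnz, hcoc⟩
    refine ⟨Set.range (fun n : ℤ => g ^ n), ⟨⟨0, by simp⟩, ?_⟩, ⟨1, by simp⟩, ?_⟩
    · rintro V (⟨h, a, b, h0, rfl⟩ | ⟨h, a, b, c, hne, rfl⟩) hsub
      · obtain ⟨p, hp⟩ := hsub (show h ∈ _ by simp)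
        obtain ⟨q, hq⟩ := hsub (show h * a ∈ _ by simp)
        obtain ⟨r, hr⟩ := hsub (show h * a * b ∈ _ by simp)
        simp only at hp hq hr
        have ha : a = g ^ (-p + q) := by
          rw [zpow_add, zpow_neg, hp, hq]; group
        have hb : b = g ^ (-q + r) := by
          rw [zpow_add, zpow_neg, hq, hr]; group
        exact hnz (-p + q) (-q + r) (ha ▸ hb ▸ h0)
      · obtain ⟨p, hp⟩ := hsub (show h ∈ _ by simp)
        obtain ⟨q, hq⟩ := hsub (show h * a ∈ _ by simp)
        obtain ⟨r, hr⟩ := hsub (show h * a * b ∈ _ by simp)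
        obtain ⟨w, hw⟩ := hsub (show h * a * b * c ∈ _ by simp)
        simp only at hp hq hr hw
        have ha : a = g ^ (-p + q) := by rw [zpow_add, zpow_neg, hp, hq]; group
        have hb : b = g ^ (-q + r) := by rw [zpow_add, zpow_neg, hq, hr]; group
        have hc : c = g ^ (-r + w) := by rw [zpow_add, zpow_neg, hr, hw]; group
        apply hne
        rw [ha, hb, hc, ← zpow_add, ← zpow_add]
        have := hcoc (-p + q) (-q + r) (-r + w)
        convert this using 3 <;> ring
    · ext x
      simp only [Set.mem_image, Set.mem_range]
      constructor
      · rintro ⟨y, ⟨n, rfl⟩, rfl⟩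
        exact ⟨1 + n, by rw [zpow_add, zpow_one]⟩
      · rintro ⟨n, rfl⟩
        exact ⟨g ^ (n - 1), ⟨n - 1, rfl⟩, by rw [← zpow_one_add]; ring_nf⟩
end

section
/- Let S ⊆ G∖{1} be symmetric (g ∈ S ⟹ g⁻¹ ∈ S) and define σ_S(x,y) = 0 if {x, y, xy} ∩ S ≠ ∅ and σ_S(x,y) = 1 otherwise. Then σ_S is a factor set of G; moreover for ξ containing 1, ξ ∉ Ω_{σ_S} if and only if there exist h ∈ G and g ∈ S with {h, hg} ⊆ ξ, and for ξ ∈ Ω_{σ_S} the complement of the admissible set A_{σ_S}(ξ) equals { xg : x ∈ ξ, g ∈ S }. -/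
open scoped Classical in
/-- The diagonal factor set generated by a symmetric set `S ⊆ G \ {1}`:
`σ_S(x,y) = 0` iff `{x, y, xy} ∩ S ≠ ∅`, and `1` otherwise. -/
noncomputable def sigmaDiag {κ G : Type} [Field κ] [Group G] (S : Set G) (x y : G) : κ :=
  if ({x, y, x * y} : Set G) ∩ S = ∅ then 1 else 0

section Rep
variable {κ G : Type} [Field κ] [Group G]


lemma sigmaDiag_eq_zero_iff (S : Set G) (x y : G) :
    sigmaDiag (κ := κ) S x y = 0 ↔ (x ∈ S ∨ y ∈ S ∨ x * y ∈ S) := by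
  unfold sigmaDiag
  split_ifs with h
  · simp only [one_ne_zero, false_iff]
    rw [Set.eq_empty_iff_forall_notMem] at h
    push_neg
    refine ⟨fun hm => h x ⟨by simp, hm⟩, fun hm => h y ⟨by simp, hm⟩,
      fun hm => h (x*y) ⟨by simp, hm⟩⟩
  · simp only [true_iff]
    rw [Set.eq_empty_iff_forall_notMem] at h
    push_neg at h
    obtain ⟨a, ha, haS⟩ := h
    rcases ha with rfl | rfl | rfl
    · exact Or.inl haS
    · exact Or.inr (Or.inl haS)
    · exact Or.inr (Or.inr haS)

lemma sigmaDiag_eq_one (S : Set G) {x y : G} (hx : x ∉ S) (hy : y ∉ S) (hxy : x * y ∉ S) :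
    sigmaDiag (κ := κ) S x y = 1 := by
  unfold sigmaDiag
  rw [if_pos]
  rw [Set.eq_empty_iff_forall_notMem]
  rintro a ⟨ha, haS⟩
  rcases ha with rfl | rfl | rfl <;> tauto

def GoodSet (S : Set G) (ξ : Set G) : Prop :=
  (1:G) ∈ ξ ∧ ∀ x ∈ ξ, ∀ y ∈ ξ, x⁻¹ * y ∉ S

lemma goodSet_image {S ξ : Set G} (hξ : GoodSet S ξ) {g : G} (hg : g⁻¹ ∈ ξ) :
    GoodSet S ((g * ·) '' ξ) := by
  constructor
  · exact ⟨g⁻¹, hg, by simp⟩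
  · rintro _ ⟨x, hx, rfl⟩ _ ⟨y, hy, rfl⟩
    simpa [mul_assoc] using hξ.2 x hx y hy

lemma mem_mulImage {ξ : Set G} {h a : G} : a ∈ (h * ·) '' ξ ↔ h⁻¹ * a ∈ ξ := by
  constructor
  · rintro ⟨x, hx, rfl⟩; simpa [← mul_assoc] using hx
  · intro hx; exact ⟨h⁻¹ * a, hx, by simp [← mul_assoc]⟩

lemma mulImage_mulImage {ξ : Set G} {g h : G} :
    (g * ·) '' ((h * ·) '' ξ) = ((g * h) * ·) '' ξ := by
  rw [← Set.image_comp]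
  congr 1
  funext x
  simp [mul_assoc]

open scoped Classical in
noncomputable def Gam (κ : Type) [Field κ] (S : Set G) (g : G) :
    Module.End κ ({ξ : Set G // GoodSet S ξ} →₀ κ) :=
  Finsupp.lsum κ fun ξ =>
    if h : g⁻¹ ∈ ξ.1 then Finsupp.lsingle ⟨(g * ·) '' ξ.1, goodSet_image ξ.2 h⟩ else 0

open scoped Classical in
lemma Gam_single (S : Set G) (g : G) (ξ : {ξ : Set G // GoodSet S ξ}) (c : κ) :
    Gam κ S g (Finsupp.single ξ c) =
      if h : g⁻¹ ∈ ξ.1 then Finsupp.single ⟨(g * ·) '' ξ.1, goodSet_image ξ.2 h⟩ c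
      else 0 := by
  rw [Gam, Finsupp.lsum_single]
  split_ifs with h
  · simp
  · simp


variable {S : Set G}

lemma inv_notMem (hSsym : ∀ g ∈ S, g⁻¹ ∈ S) {a : G} (ha : a ∉ S) : a⁻¹ ∉ S :=
  fun hai => ha (by simpa using hSsym _ hai)

lemma not_good_pair1 (hSsym : ∀ g ∈ S, g⁻¹ ∈ S) {g h : G} (hσ : g ∈ S ∨ h ∈ S ∨ g * h ∈ S) {ξ : Set G} (hξ : GoodSet S ξ)
    (h1 : h⁻¹ * g⁻¹ ∈ ξ) (h2 : h⁻¹ ∈ ξ) : False := by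
  rcases hσ with hs | hs | hs
  · exact hξ.2 _ h1 _ h2 (by simpa [mul_inv_rev, mul_assoc] using hs)
  · exact hξ.2 _ hξ.1 _ h2 (by simpa using hSsym _ hs)
  · exact hξ.2 _ hξ.1 _ h1 (by simpa [mul_inv_rev] using hSsym _ hs)

lemma not_good_pair2 (hSsym : ∀ g ∈ S, g⁻¹ ∈ S) {g h : G} (hσ : g ∈ S ∨ h ∈ S ∨ g * h ∈ S) {ξ : Set G} (hξ : GoodSet S ξ)
    (hh : h ∈ ξ) (hg : g⁻¹ ∈ ξ) : False := by
  rcases hσ with hs | hs | hs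
  · exact hξ.2 _ hξ.1 _ hg (by simpa using hSsym _ hs)
  · exact hξ.2 _ hξ.1 _ hh (by simpa using hs)
  · exact hξ.2 _ hg _ hh (by simpa using hs)


open scoped Classical in
lemma Gam_mul_single {S : Set G} (g h : G) (ξ : {ξ : Set G // GoodSet S ξ}) (c : κ) :
    (Gam κ S g * Gam κ S h) (Finsupp.single ξ c) =
      if H : h⁻¹ ∈ ξ.1 ∧ h⁻¹ * g⁻¹ ∈ ξ.1 then
        Finsupp.single ⟨((g * h) * ·) '' ξ.1,
          goodSet_image ξ.2 (by rw [mul_inv_rev]; exact H.2)⟩ c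
      else 0 := by
  rw [Module.End.mul_apply, Gam_single]
  split_ifs with h1 h2 h2
  · rw [Gam_single, dif_pos (mem_mulImage.mpr h2.2)]
    congr 1
    exact Subtype.ext mulImage_mulImage
  · rw [Gam_single, dif_neg]
    rw [mem_mulImage]
    exact fun hc => h2 ⟨h1, hc⟩
  · exact absurd h2.1 h1
  · simp

open scoped Classical in
lemma Gam_mul3_single {S : Set G} (a b d : G) (ξ : {ξ : Set G // GoodSet S ξ}) (c : κ) :
    (Gam κ S a * Gam κ S b * Gam κ S d) (Finsupp.single ξ c) =
      if H : d⁻¹ ∈ ξ.1 ∧ d⁻¹ * b⁻¹ ∈ ξ.1 ∧ d⁻¹ * b⁻¹ * a⁻¹ ∈ ξ.1 then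
        Finsupp.single ⟨((a * b * d) * ·) '' ξ.1,
          goodSet_image ξ.2 (by simp only [mul_inv_rev, ← mul_assoc]; exact H.2.2)⟩ c
      else 0 := by
  rw [Module.End.mul_apply, Gam_single]
  split_ifs with h1 h2 h2
  · rw [Gam_mul_single, dif_pos]
    · congr 1
      exact Subtype.ext mulImage_mulImage
    · constructor
      · rw [mem_mulImage]; exact h2.2.1
      · rw [mem_mulImage, ← mul_assoc]; exact h2.2.2
  · rw [Gam_mul_single, dif_neg]
    rw [mem_mulImage, mem_mulImage, ← mul_assoc]
    exact fun hc => h2 ⟨h1, hc.1, hc.2⟩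
  · exact absurd h2.1 h1
  · simp
lemma Gam_one {S : Set G} : Gam κ S (1 : G) = 1 := by
  refine Finsupp.lhom_ext fun ξ c => ?_
  rw [Gam_single, dif_pos (show (1:G)⁻¹ ∈ ξ.1 by simpa using ξ.2.1), Module.End.one_apply]
  congr 1
  exact Subtype.ext (by simp)

lemma Gam_cond2a (hSsym : ∀ g ∈ S, g⁻¹ ∈ S) {g h : G} (hσ : g ∈ S ∨ h ∈ S ∨ g * h ∈ S) :
    Gam κ S g⁻¹ * Gam κ S (g * h) = 0 := by
  refine Finsupp.lhom_ext fun ξ c => ?_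
  rw [Gam_mul_single, LinearMap.zero_apply, dif_neg]
  rintro ⟨H1, H2⟩
  exact not_good_pair1 hSsym hσ ξ.2 (by simpa using H1) (by simpa using H2)

lemma Gam_cond2b (hSsym : ∀ g ∈ S, g⁻¹ ∈ S) {g h : G} (hσ : g ∈ S ∨ h ∈ S ∨ g * h ∈ S) :
    Gam κ S (g * h) * Gam κ S h⁻¹ = 0 := by
  refine Finsupp.lhom_ext fun ξ c => ?_
  rw [Gam_mul_single, LinearMap.zero_apply, dif_neg]
  rintro ⟨H1, H2⟩
  exact not_good_pair2 hSsym hσ ξ.2 (by simpa using H1) (by simpa using H2)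

lemma Gam_cond4 (hSsym : ∀ g ∈ S, g⁻¹ ∈ S) (g h : G) :
    Gam κ S g⁻¹ * Gam κ S g * Gam κ S h
      = sigmaDiag (κ := κ) S g h • (Gam κ S g⁻¹ * Gam κ S (g * h)) := by
  refine Finsupp.lhom_ext fun ξ c => ?_
  rw [Gam_mul3_single, LinearMap.smul_apply, Gam_mul_single]
  by_cases hσ : sigmaDiag (κ := κ) S g h = 0
  · have hd := (sigmaDiag_eq_zero_iff S g h).1 hσ
    rw [hσ, zero_smul, dif_neg]
    rintro ⟨H1, H2, -⟩
    exact not_good_pair1 hSsym hd ξ.2 H2 H1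
  · have hd : ¬(g ∈ S ∨ h ∈ S ∨ g * h ∈ S) :=
      fun hc => hσ ((sigmaDiag_eq_zero_iff S g h).2 hc)
    push_neg at hd
    rw [sigmaDiag_eq_one S hd.1 hd.2.1 hd.2.2, one_smul]
    by_cases c1 : h⁻¹ ∈ ξ.1 <;> by_cases c2 : h⁻¹ * g⁻¹ ∈ ξ.1
    · rw [dif_pos ⟨c1, c2, by simpa using c1⟩,
        dif_pos ⟨by simpa using c2, by simpa using c1⟩]
      congr 1
      exact Subtype.ext (by simp)
    · rw [dif_neg (fun H => c2 H.2.1), dif_neg (fun H => c2 (by simpa using H.1))]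
    · rw [dif_neg (fun H => c1 H.1), dif_neg (fun H => c1 (by simpa using H.2))]
    · rw [dif_neg (fun H => c1 H.1), dif_neg (fun H => c1 (by simpa using H.2))]

lemma Gam_cond5 (hSsym : ∀ g ∈ S, g⁻¹ ∈ S) (g h : G) :
    Gam κ S g * Gam κ S h * Gam κ S h⁻¹
      = sigmaDiag (κ := κ) S g h • (Gam κ S (g * h) * Gam κ S h⁻¹) := by
  refine Finsupp.lhom_ext fun ξ c => ?_
  rw [Gam_mul3_single, LinearMap.smul_apply, Gam_mul_single]
  by_cases hσ : sigmaDiag (κ := κ) S g h = 0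
  · have hd := (sigmaDiag_eq_zero_iff S g h).1 hσ
    rw [hσ, zero_smul, dif_neg]
    rintro ⟨H1, -, H3⟩
    exact not_good_pair2 hSsym hd ξ.2 (by simpa using H1) (by simpa using H3)
  · have hd : ¬(g ∈ S ∨ h ∈ S ∨ g * h ∈ S) :=
      fun hc => hσ ((sigmaDiag_eq_zero_iff S g h).2 hc)
    push_neg at hd
    rw [sigmaDiag_eq_one S hd.1 hd.2.1 hd.2.2, one_smul]
    by_cases c1 : h ∈ ξ.1 <;> by_cases c2 : g⁻¹ ∈ ξ.1
    · rw [dif_pos ⟨by simpa using c1, by simpa using ξ.2.1, by simpa using c2⟩,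
        dif_pos ⟨by simpa using c1, by simpa using c2⟩]
    · rw [dif_neg (fun H => c2 (by simpa using H.2.2)),
        dif_neg (fun H => c2 (by simpa using H.2))]
    · rw [dif_neg (fun H => c1 (by simpa using H.1)),
        dif_neg (fun H => c1 (by simpa using H.1))]
    · rw [dif_neg (fun H => c1 (by simpa using H.1)),
        dif_neg (fun H => c1 (by simpa using H.1))]

lemma Gam_cond3 (hS1 : (1 : G) ∉ S) (hSsym : ∀ g ∈ S, g⁻¹ ∈ S) (g h : G)
    (hzero : Gam κ S g * Gam κ S h = 0) : sigmaDiag (κ := κ) S g h = 0 := by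
  by_contra hσ
  have hd : ¬(g ∈ S ∨ h ∈ S ∨ g * h ∈ S) :=
    fun hc => hσ ((sigmaDiag_eq_zero_iff S g h).2 hc)
  push_neg at hd
  obtain ⟨hg, hh, hgh⟩ := hd
  have hgood : GoodSet S ({1, h⁻¹, h⁻¹ * g⁻¹} : Set G) := by
    have h1 : ∀ a : G, a ∉ S → a⁻¹ ∉ S := fun a => inv_notMem hSsym
    have hghi : h⁻¹ * g⁻¹ ∉ S := by
      rw [← mul_inv_rev]; exact h1 _ hgh
    refine ⟨by simp, ?_⟩
    rintro x (rfl | rfl | rfl) y (rfl | rfl | rfl) <;>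
      simp_all [mul_inv_rev, mul_assoc, h1 _ hg, h1 _ hh, h1 _ hgh]
  have := DFunLike.congr_fun hzero (Finsupp.single ⟨_, hgood⟩ (1 : κ))
  rw [Gam_mul_single, LinearMap.zero_apply, dif_pos ⟨by simp, by simp⟩] at this
  exact one_ne_zero (Finsupp.single_eq_zero.1 this)
end Rep

section StmtAux
variable {κ G : Type} [Field κ] [Group G]

lemma factorSet_sigmaDiag (S : Set G) (hS1 : (1 : G) ∉ S) (hSsym : ∀ g ∈ S, g⁻¹ ∈ S) :
    IsFactorSet (sigmaDiag (κ := κ) S) := by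
  refine ⟨Module.End κ ({ξ : Set G // GoodSet S ξ} →₀ κ), inferInstance, inferInstance,
    Gam κ S, Gam_one, fun g h hσ => ?_, fun g h => Gam_cond3 hS1 hSsym g h,
    Gam_cond4 hSsym, Gam_cond5 hSsym⟩
  have hd := (sigmaDiag_eq_zero_iff S g h).1 hσ
  exact ⟨Gam_cond2a hSsym hd, Gam_cond2b hSsym hd⟩

lemma pair_subset_of_mem {ξ : Set G} {a b : G} (ha : a ∈ ξ) (hb : b ∈ ξ) :
    ({a, b} : Set G) ⊆ ξ :=
  Set.insert_subset_iff.2 ⟨ha, Set.singleton_subset_iff.2 hb⟩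

lemma notOmega_iff (S : Set G) (hS1 : (1 : G) ∉ S) (hSsym : ∀ g ∈ S, g⁻¹ ∈ S)
    (ξ : Set G) (h1 : (1 : G) ∈ ξ) :
    ξ ∉ Omega (sigmaDiag (κ := κ) S) ↔ ∃ h : G, ∃ g ∈ S, {h, h * g} ⊆ ξ := by
  constructor
  · intro hno
    have hno' : ¬ ((1:G) ∈ ξ ∧ ∀ V ∈ ProhibitionI (sigmaDiag (κ := κ) S) ∪
        ProhibitionII (sigmaDiag (κ := κ) S), ¬ V ⊆ ξ) := hno
    push_neg at hno'
    obtain ⟨V, hV, hVs⟩ := hno' h1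
    rcases hV with hV | hV
    · obtain ⟨h, g, s, hσ, rfl⟩ := hV
      have m1 : h ∈ ξ := hVs (by simp)
      have m2 : h * g ∈ ξ := hVs (by simp)
      have m3 : h * g * s ∈ ξ := hVs (by simp)
      rcases (sigmaDiag_eq_zero_iff S g s).1 hσ with hs | hs | hs
      · exact ⟨h, g, hs, pair_subset_of_mem m1 m2⟩
      · exact ⟨h * g, s, hs, pair_subset_of_mem m2 m3⟩
      · exact ⟨h, g * s, hs, pair_subset_of_mem m1 (by rwa [← mul_assoc])⟩
    · obtain ⟨h, g, s, t, hne, rfl⟩ := hV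
      have m1 : h ∈ ξ := hVs (by simp)
      have m2 : h * g ∈ ξ := hVs (by simp)
      have m3 : h * g * s ∈ ξ := hVs (by simp)
      have m4 : h * g * s * t ∈ ξ := hVs (by simp)
      have hcase : g ∈ S ∨ s ∈ S ∨ t ∈ S ∨ s * t ∈ S ∨ g * s ∈ S ∨ g * s * t ∈ S := by
        by_contra hc
        push_neg at hc
        obtain ⟨c1, c2, c3, c4, c5, c6⟩ := hc
        exact hne (by rw [sigmaDiag_eq_one S c1 c4 (by rwa [← mul_assoc]),
          sigmaDiag_eq_one S c2 c3 c4, sigmaDiag_eq_one S c1 c2 c5,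
          sigmaDiag_eq_one S c5 c3 c6])
      rcases hcase with hs | hs | hs | hs | hs | hs
      · exact ⟨h, g, hs, pair_subset_of_mem m1 m2⟩
      · exact ⟨h * g, s, hs, pair_subset_of_mem m2 m3⟩
      · exact ⟨h * g * s, t, hs, pair_subset_of_mem m3 m4⟩
      · exact ⟨h * g, s * t, hs, pair_subset_of_mem m2 (by rwa [← mul_assoc])⟩
      · exact ⟨h, g * s, hs, pair_subset_of_mem m1 (by rwa [← mul_assoc])⟩
      · exact ⟨h, g * s * t, hs, pair_subset_of_mem m1
          (by rwa [← mul_assoc, ← mul_assoc])⟩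
  · rintro ⟨h, g, hg, hsub⟩ hmem
    refine hmem.2 {h, h * g, h * g * g⁻¹} (Or.inl ⟨h, g, g⁻¹, ?_, rfl⟩) ?_
    · exact (sigmaDiag_eq_zero_iff S g g⁻¹).2 (Or.inl hg)
    · rintro z (rfl | rfl | rfl)
      · exact hsub (by simp)
      · exact hsub (by simp)
      · simpa using hsub (show h ∈ ({h, h * g} : Set G) by simp)

end StmtAux

/-- For symmetric `S ⊆ G \ {1}`: `σ_S` is a factor set of `G`; a set `ξ ∋ 1` fails to
be in `Ω_{σ_S}` iff it contains some `{h, hg}` with `g ∈ S`; and for `ξ ∈ Ω_{σ_S}` the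
complement (inside `G \ ξ`) of the admissible set `A_{σ_S}(ξ)` equals
`{xg : x ∈ ξ, g ∈ S}`. -/
theorem stmt_19 {κ G : Type} [Field κ] [Group G]
    (S : Set G) (hS1 : (1 : G) ∉ S) (hSsym : ∀ g ∈ S, g⁻¹ ∈ S) :
    IsFactorSet (sigmaDiag (κ := κ) S) ∧
    (∀ ξ : Set G, (1 : G) ∈ ξ →
      (ξ ∉ Omega (sigmaDiag (κ := κ) S) ↔ ∃ h : G, ∃ g ∈ S, {h, h * g} ⊆ ξ)) ∧
    (∀ ξ ∈ Omega (sigmaDiag (κ := κ) S),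
      {y : G | y ∉ ξ ∧ y ∉ Adm (sigmaDiag (κ := κ) S) ξ}
        = {y : G | ∃ x ∈ ξ, ∃ g ∈ S, y = x * g}) := by
  refine ⟨factorSet_sigmaDiag S hS1 hSsym, fun ξ h1 => notOmega_iff S hS1 hSsym ξ h1,
    fun ξ hξ => ?_⟩
  have hnopair : ¬ ∃ h : G, ∃ g ∈ S, ({h, h * g} : Set G) ⊆ ξ :=
    fun hp => (notOmega_iff S hS1 hSsym ξ hξ.1).2 hp hξ
  ext y
  simp only [Set.mem_setOf_eq]
  constructor
  · rintro ⟨hy, hyA⟩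
    have hnot : ξ ∪ {y} ∉ Omega (sigmaDiag (κ := κ) S) := fun hin => hyA ⟨hy, hin⟩
    rw [notOmega_iff S hS1 hSsym _ (Set.mem_union_left _ hξ.1)] at hnot
    obtain ⟨h, g, hg, hsub⟩ := hnot
    have mh : h ∈ ξ ∪ {y} := hsub (by simp)
    have mhg : h * g ∈ ξ ∪ {y} := hsub (by simp)
    rcases mh with mh | mh <;> rcases mhg with mhg | mhg
    · exact absurd ⟨h, g, hg, pair_subset_of_mem mh mhg⟩ hnopair
    · exact ⟨h, mh, g, hg, (Set.mem_singleton_iff.1 mhg).symm⟩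
    · refine ⟨h * g, mhg, g⁻¹, hSsym g hg, ?_⟩
      rw [Set.mem_singleton_iff] at mh
      rw [← mh]
      simp
    · rw [Set.mem_singleton_iff] at mh mhg
      rw [mh] at mhg
      exact absurd ((mul_eq_left.1 mhg) ▸ hg) hS1
  · rintro ⟨x, hx, g, hg, rfl⟩
    have hxg : x * g ∉ ξ :=
      fun hc => hnopair ⟨x, g, hg, pair_subset_of_mem hx hc⟩
    refine ⟨hxg, fun hA => ?_⟩
    have hpair : ({x, x * g} : Set G) ⊆ ξ ∪ {x * g} :=
      pair_subset_of_mem (Set.mem_union_left _ hx) (Set.mem_union_right _ (Set.mem_singleton _))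
    exact (notOmega_iff S hS1 hSsym _ (Set.mem_union_left _ hξ.1)).2 ⟨x, g, hg, hpair⟩ hA.2
end
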